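/- arXiv:2107.08884 — 12 statements merged into one kernel-verified Lean document; each statement's English description precedes it below -/
import Mathlib

section
/- Lemma 2, part (i) (optimality of non-increasing transmission rates): If r* = (r*_1, …, r*_N) is an optimal rate vector for problem (P2b), then the rates are monotonically non-increasing: r*_{n+1} ≤ r*_n for every n = 1, …, N−1. -/
/-- Energy consumption of a rate vector `r` over the `N` epochs determined by the
task instants `t`, with epoch lengths `T n = t n − t (n−1)`. -/
noncomputable def energyP2b (B σ2 h : ℝ) (t : ℕ → ℝ) (N : ℕ) (r : ℕ → ℝ) : ℝ :=
  ∑ n ∈ Finset.Icc 1 N, (Real.exp (r n / B) - 1) * (σ2 / h) * (t n - t (n - 1))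

/-- A rate vector is feasible for problem (P2b): nonnegative rates satisfying the
data transmission constraints `∑_{n=1}^j r_n T_n ≥ ∑_{n=1}^j D_n` for all `j = 1, …, N`. -/
def FeasibleP2b (t D : ℕ → ℝ) (N : ℕ) (r : ℕ → ℝ) : Prop :=
  (∀ n ∈ Finset.Icc 1 N, 0 ≤ r n) ∧
  (∀ j ∈ Finset.Icc 1 N,
    ∑ n ∈ Finset.Icc 1 j, D n ≤ ∑ n ∈ Finset.Icc 1 j, r n * (t n - t (n - 1)))

private lemma aux_energy_neg (E x y c Tn Tm : ℝ) (hc : 0 < c)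
    (hkey : E * (Tn + Tm) < x * Tn + y * Tm) :
    (E - x) * c * Tn + (E - y) * c * Tm < 0 := by
  nlinarith [mul_lt_mul_of_pos_left hkey hc]

/-- Lemma 2, part (i): any optimal rate vector for problem (P2b) has monotonically
non-increasing rates: `r*_{n+1} ≤ r*_n` for every `n = 1, …, N−1`. -/
theorem optimal_rates_nonincreasing
    (N : ℕ) (t D rstar : ℕ → ℝ) (B σ2 h : ℝ)
    (hB : 0 < B) (hσ2 : 0 < σ2) (hh : 0 < h)
    (ht0 : t 0 = 0) (ht : ∀ n, n < N → t n < t (n + 1))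
    (hD : ∀ n ∈ Finset.Icc 1 N, 0 ≤ D n)
    (hfeas : FeasibleP2b t D N rstar)
    (hopt : ∀ r, FeasibleP2b t D N r →
      energyP2b B σ2 h t N rstar ≤ energyP2b B σ2 h t N r) :
    ∀ n, 1 ≤ n → n + 1 ≤ N → rstar (n + 1) ≤ rstar n := by
  intro n hn hnN
  by_contra hle
  push_neg at hle
  -- epoch lengths
  have hnN' : n < N := by omega
  have hTn : 0 < t n - t (n - 1) := by
    have h1 := ht (n - 1) (by omega)
    rw [show n - 1 + 1 = n from by omega] at h1
    linarith
  have hTm : 0 < t (n + 1) - t n := by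
    have := ht n hnN'; linarith
  set Tn : ℝ := t n - t (n - 1) with hTndef
  set Tm : ℝ := t (n + 1) - t n with hTmdef
  have hS : 0 < Tn + Tm := by linarith
  set rbar : ℝ := (rstar n * Tn + rstar (n + 1) * Tm) / (Tn + Tm) with hrbar
  set r' : ℕ → ℝ := fun k => if k = n then rbar else if k = n + 1 then rbar else rstar k
    with hr'
  have hmemn : n ∈ Finset.Icc 1 N := by simp; omega
  have hmemm : n + 1 ∈ Finset.Icc 1 N := by simp; omega
  have hrn0 : 0 ≤ rstar n := hfeas.1 n hmemn
  have hrm0 : 0 ≤ rstar (n + 1) := hfeas.1 (n + 1) hmemm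
  have hrbar0 : 0 ≤ rbar := by
    apply div_nonneg _ (le_of_lt hS)
    nlinarith
  have hr'n : r' n = rbar := by simp [hr']
  have hr'm : r' (n + 1) = rbar := by
    simp only [hr']; rw [if_neg (by omega)]; simp
  have hr'other : ∀ k, k ≠ n → k ≠ n + 1 → r' k = rstar k := by
    intro k h1 h2; simp [hr', h1, h2]
  clear_value r'
  -- the n+1 epoch length in terms of t ((n+1) - 1)
  have hidx : t (n + 1) - t (n + 1 - 1) = Tm := by
    rw [show n + 1 - 1 = n from rfl]
  have hTnidx : t n - t (n - 1) = Tn := rfl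
  clear_value Tn Tm
  -- rbar lies strictly between rstar n and rstar (n+1)
  have hrbar_gt : rstar n < rbar := by
    rw [hrbar, lt_div_iff₀ hS]; nlinarith
  have hrbar_lt : rbar < rstar (n + 1) := by
    rw [hrbar, div_lt_iff₀ hS]; nlinarith
  -- mass conservation
  have hmass : rbar * (Tn + Tm) = rstar n * Tn + rstar (n + 1) * Tm := by
    rw [hrbar]; field_simp
  clear_value rbar
  -- δ : change in per-epoch data
  set δ : ℕ → ℝ := fun k => (r' k - rstar k) * (t k - t (k - 1)) with hδ
  have hδother : ∀ k, k ≠ n → k ≠ n + 1 → δ k = 0 := by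
    intro k h1 h2; simp [hδ, hr'other k h1 h2]
  have hδsum : δ n + δ (n + 1) = 0 := by
    simp only [hδ, hr'n, hr'm, hTnidx, hidx]
    nlinarith [hmass]
  have hδn : 0 ≤ δ n := by
    simp only [hδ, hr'n, hTnidx]
    nlinarith
  clear_value δ
  -- feasibility of r'
  have hfeas' : FeasibleP2b t D N r' := by
    constructor
    · intro k hk
      by_cases h1 : k = n
      · rw [h1, hr'n]; exact hrbar0
      by_cases h2 : k = n + 1
      · rw [h2, hr'm]; exact hrbar0
      · rw [hr'other k h1 h2]; exact hfeas.1 k hk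
    · intro j hj
      have hold := hfeas.2 j hj
      have hdiff : 0 ≤ ∑ k ∈ Finset.Icc 1 j, δ k := by
        rcases lt_trichotomy j n with hc | hc | hc
        · rw [Finset.sum_eq_zero]
          intro k hk
          simp only [Finset.mem_Icc] at hk
          exact hδother k (by omega) (by omega)
        · rw [hc, Finset.sum_eq_single n
            (fun b hb hbn => hδother b hbn (by simp only [Finset.mem_Icc] at hb; omega))
            (fun hns => hδother n (by simp at hns; omega) (by omega))]
          exact hδn
        · have hm1 : n ∈ Finset.Icc 1 j := by simp; omega
          have hm2 : n + 1 ∈ (Finset.Icc 1 j).erase n := by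
            simp [Finset.mem_erase]; omega
          have hz : ∑ k ∈ ((Finset.Icc 1 j).erase n).erase (n + 1), δ k = 0 :=
            Finset.sum_eq_zero (fun k hk => by
              simp only [Finset.mem_erase, Finset.mem_Icc] at hk
              exact hδother k hk.2.1 hk.1)
          rw [← Finset.add_sum_erase _ δ hm1, ← Finset.add_sum_erase _ δ hm2, hz,
            add_zero, hδsum]
      calc ∑ k ∈ Finset.Icc 1 j, D k ≤ ∑ k ∈ Finset.Icc 1 j, rstar k * (t k - t (k - 1)) :=
            hold
        _ ≤ ∑ k ∈ Finset.Icc 1 j, r' k * (t k - t (k - 1)) := by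
            have : ∑ k ∈ Finset.Icc 1 j, r' k * (t k - t (k - 1))
                - ∑ k ∈ Finset.Icc 1 j, rstar k * (t k - t (k - 1))
                = ∑ k ∈ Finset.Icc 1 j, δ k := by
              rw [← Finset.sum_sub_distrib]
              exact Finset.sum_congr rfl (fun k _ => by simp [hδ]; ring)
            linarith
  -- strict convexity: energy strictly decreases
  have hxny : rstar n / B ≠ rstar (n + 1) / B := by
    intro hcontra
    rw [div_eq_div_iff hB.ne' hB.ne'] at hcontra
    nlinarith
  have hconv := strictConvexOn_exp.2 (Set.mem_univ (rstar n / B))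
    (Set.mem_univ (rstar (n + 1) / B)) hxny
    (div_pos hTn hS) (div_pos hTm hS) (by field_simp)
  simp only [smul_eq_mul] at hconv
  have hcomb : Tn / (Tn + Tm) * (rstar n / B) + Tm / (Tn + Tm) * (rstar (n + 1) / B)
      = rbar / B := by
    rw [hrbar]; field_simp
  rw [hcomb] at hconv
  have hkey : Real.exp (rbar / B) * (Tn + Tm)
      < Real.exp (rstar n / B) * Tn + Real.exp (rstar (n + 1) / B) * Tm := by
    have h2 := mul_lt_mul_of_pos_right hconv hS
    have : (Tn / (Tn + Tm) * Real.exp (rstar n / B)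
        + Tm / (Tn + Tm) * Real.exp (rstar (n + 1) / B)) * (Tn + Tm)
        = Real.exp (rstar n / B) * Tn + Real.exp (rstar (n + 1) / B) * Tm := by
      field_simp
    linarith
  -- energy difference
  set ε : ℕ → ℝ := fun k =>
    (Real.exp (r' k / B) - Real.exp (rstar k / B)) * (σ2 / h) * (t k - t (k - 1)) with hε
  have hεother : ∀ k, k ≠ n → k ≠ n + 1 → ε k = 0 := by
    intro k h1 h2; simp [hε, hr'other k h1 h2]
  clear_value ε
  have hc : 0 < σ2 / h := div_pos hσ2 hh
  have hεsum : ε n + ε (n + 1) < 0 := by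
    have e1 : ε n = (Real.exp (rbar / B) - Real.exp (rstar n / B)) * (σ2 / h) * Tn := by
      simp only [hε]; rw [hr'n, hTnidx]
    have e2 : ε (n + 1)
        = (Real.exp (rbar / B) - Real.exp (rstar (n + 1) / B)) * (σ2 / h) * Tm := by
      simp only [hε]; rw [hr'm, hidx]
    rw [e1, e2]
    exact aux_energy_neg _ _ _ _ _ _ hc hkey
  have hEdiff : energyP2b B σ2 h t N r' - energyP2b B σ2 h t N rstar
      = ∑ k ∈ Finset.Icc 1 N, ε k := by
    unfold energyP2b
    rw [← Finset.sum_sub_distrib]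
    exact Finset.sum_congr rfl (fun k _ => by simp [hε]; ring)
  have hm2' : n + 1 ∈ (Finset.Icc 1 N).erase n := by
    simp [Finset.mem_erase]; omega
  have hEsum : ∑ k ∈ Finset.Icc 1 N, ε k = ε n + ε (n + 1) := by
    have hz : ∑ k ∈ ((Finset.Icc 1 N).erase n).erase (n + 1), ε k = 0 :=
      Finset.sum_eq_zero (fun k hk => by
        simp only [Finset.mem_erase, Finset.mem_Icc] at hk
        exact hεother k hk.2.1 hk.1)
    rw [← Finset.add_sum_erase _ ε hmemn, ← Finset.add_sum_erase _ ε hm2', hz, add_zero]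
  have hlt : energyP2b B σ2 h t N r' < energyP2b B σ2 h t N rstar := by
    rw [← sub_neg, hEdiff, hEsum]; exact hεsum
  exact absurd (hopt r' hfeas') (not_le.mpr hlt)
end

section
/- Lemma 2, part (ii) (rate constancy under non-empty buffer): If r* = (r*_1, …, r*_N) is an optimal rate vector for problem (P2b) and at some instant t_j (1 ≤ j ≤ N−1) the data buffer is non-empty, i.e., ∑_{n=1}^j r*_n T_n > ∑_{n=1}^j D_n, then the rate does not change at t_j: r*_{j+1} = r*_j. -/
/-- Sum over a finset of a function differing from another at two points. -/
lemma sum_two_point' {s : Finset ℕ} {a b : ℕ} (ha : a ∈ s) (hb : b ∈ s) (hab : a ≠ b)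
    (f g : ℕ → ℝ) (hfg : ∀ n ∈ s, n ≠ a → n ≠ b → g n = f n) :
    ∑ n ∈ s, g n = ∑ n ∈ s, f n + (g a - f a) + (g b - f b) := by
  have hb' : b ∈ s.erase a := Finset.mem_erase.mpr ⟨hab.symm, hb⟩
  rw [← Finset.sum_erase_add s g ha, ← Finset.sum_erase_add s f ha,
      ← Finset.sum_erase_add _ g hb', ← Finset.sum_erase_add _ f hb']
  have : ∑ n ∈ (s.erase a).erase b, g n = ∑ n ∈ (s.erase a).erase b, f n := by
    apply Finset.sum_congr rfl; intro n hn
    have h1 := Finset.mem_erase.mp hn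
    have h2 := Finset.mem_erase.mp h1.2
    exact hfg n h2.2 h2.1 h1.1
  rw [this]; ring

/-- Sum over a finset of a function differing from another at one point. -/
lemma sum_one_point' {s : Finset ℕ} {a : ℕ} (ha : a ∈ s)
    (f g : ℕ → ℝ) (hfg : ∀ n ∈ s, n ≠ a → g n = f n) :
    ∑ n ∈ s, g n = ∑ n ∈ s, f n + (g a - f a) := by
  rw [← Finset.sum_erase_add s g ha, ← Finset.sum_erase_add s f ha]
  have : ∑ n ∈ s.erase a, g n = ∑ n ∈ s.erase a, f n := by
    apply Finset.sum_congr rfl; intro n hn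
    have h1 := Finset.mem_erase.mp hn
    exact hfg n h1.2 h1.1
  rw [this]; ring

/-- The key strict-convexity inequality: moving `ε` bits from a higher-rate epoch to a
lower-rate one costs strictly less energy in the low epoch than it saves in the high one. -/
lemma exp_step_lt' (B ε T1 T2 u v : ℝ) (hB : 0 < B) (hε : 0 < ε) (hT1 : 0 < T1) (hT2 : 0 < T2)
    (h : u + ε / T1 < v - ε / T2) :
    (Real.exp ((u + ε / T1) / B) - Real.exp (u / B)) * T1
      < (Real.exp (v / B) - Real.exp ((v - ε / T2) / B)) * T2 := by
  set a := u / B with ha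
  set a' := (u + ε / T1) / B with ha'
  set b' := (v - ε / T2) / B with hb'
  set b := v / B with hb
  have haa : (a' - a) * T1 = ε / B := by
    rw [ha, ha']; field_simp; ring
  have hbb : (b - b') * T2 = ε / B := by
    rw [hb, hb']; field_simp; ring
  have hab : a' < b' := by
    rw [ha', hb']
    exact div_lt_div_of_pos_right h hB
  have k1 : Real.exp a' * ((a - a') + 1) ≤ Real.exp a' * Real.exp (a - a') :=
    mul_le_mul_of_nonneg_left (Real.add_one_le_exp _) (Real.exp_pos _).le
  have k2 : Real.exp a' * Real.exp (a - a') = Real.exp a := by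
    rw [← Real.exp_add]; ring_nf
  have k3 : Real.exp b' * ((b - b') + 1) ≤ Real.exp b' * Real.exp (b - b') :=
    mul_le_mul_of_nonneg_left (Real.add_one_le_exp _) (Real.exp_pos _).le
  have k4 : Real.exp b' * Real.exp (b - b') = Real.exp b := by
    rw [← Real.exp_add]; ring_nf
  have k5 : Real.exp a' < Real.exp b' := Real.exp_lt_exp.2 hab
  have hεB : 0 < ε / B := div_pos hε hB
  have u1 : (Real.exp a' - Real.exp a) * T1 ≤ Real.exp a' * (ε / B) := by
    have : Real.exp a' - Real.exp a ≤ Real.exp a' * (a' - a) := by nlinarith [k1, k2]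
    calc (Real.exp a' - Real.exp a) * T1 ≤ Real.exp a' * (a' - a) * T1 :=
          mul_le_mul_of_nonneg_right this hT1.le
      _ = Real.exp a' * (ε / B) := by rw [mul_assoc, haa]
  have u2 : Real.exp b' * (ε / B) ≤ (Real.exp b - Real.exp b') * T2 := by
    have : Real.exp b' * (b - b') ≤ Real.exp b - Real.exp b' := by nlinarith [k3, k4]
    calc Real.exp b' * (ε / B) = Real.exp b' * (b - b') * T2 := by rw [mul_assoc, hbb]
      _ ≤ (Real.exp b - Real.exp b') * T2 := mul_le_mul_of_nonneg_right this hT2.le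
  have : Real.exp a' * (ε / B) < Real.exp b' * (ε / B) :=
    mul_lt_mul_of_pos_right k5 hεB
  linarith

/-- Feasibility of the two-epoch perturbation of a feasible rate vector. -/
lemma perturb_feasible' (t D rstar : ℕ → ℝ) (N : ℕ) (hfeas : FeasibleP2b t D N rstar)
    (j : ℕ) (hj1 : 1 ≤ j) (hjN : j + 1 ≤ N) (x y : ℝ) (hx : 0 ≤ x) (hy : 0 ≤ y)
    (hcons : ∑ n ∈ Finset.Icc 1 j, D n ≤
      (∑ n ∈ Finset.Icc 1 j, rstar n * (t n - t (n - 1))) + (x - rstar j) * (t j - t (j - 1)))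
    (htot : (x - rstar j) * (t j - t (j - 1)) + (y - rstar (j + 1)) * (t (j + 1) - t j) = 0) :
    FeasibleP2b t D N (fun n => if n = j then x else if n = j + 1 then y else rstar n) := by
  constructor
  · intro n hn
    by_cases h1 : n = j
    · simp [h1, hx]
    by_cases h2 : n = j + 1
    · simp [h1, h2, hy]
    · simpa [h1, h2] using hfeas.1 n hn
  · intro k hk
    simp only [Finset.mem_Icc] at hk
    rcases lt_trichotomy k j with hkj | hkj | hkj
    · have : ∑ n ∈ Finset.Icc 1 k,
          (fun n => if n = j then x else if n = j + 1 then y else rstar n) n * (t n - t (n - 1))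
          = ∑ n ∈ Finset.Icc 1 k, rstar n * (t n - t (n - 1)) := by
        apply Finset.sum_congr rfl
        intro n hn
        simp only [Finset.mem_Icc] at hn
        have h1 : n ≠ j := by omega
        have h2 : n ≠ j + 1 := by omega
        simp [h1, h2]
      rw [this]
      exact hfeas.2 k (Finset.mem_Icc.mpr ⟨hk.1, hk.2⟩)
    · subst hkj
      have haj : k ∈ Finset.Icc 1 k := Finset.mem_Icc.mpr ⟨hj1, le_refl k⟩
      rw [sum_one_point' haj (fun n => rstar n * (t n - t (n - 1)))
        (fun n => (if n = k then x else if n = k + 1 then y else rstar n) * (t n - t (n - 1)))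
        (by intro n hn h1
            simp only [Finset.mem_Icc] at hn
            have h2 : n ≠ k + 1 := by omega
            simp [h1, h2])]
      simp only [if_pos rfl, if_true, ite_true]
      linarith [hcons]
    · have haj : j ∈ Finset.Icc 1 k := Finset.mem_Icc.mpr ⟨hj1, hkj.le⟩
      have hbj : j + 1 ∈ Finset.Icc 1 k := Finset.mem_Icc.mpr ⟨by omega, by omega⟩
      rw [sum_two_point' haj hbj (by omega) (fun n => rstar n * (t n - t (n - 1)))
        (fun n => (if n = j then x else if n = j + 1 then y else rstar n) * (t n - t (n - 1)))
        (by intro n hn h1 h2; simp [h1, h2])]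
      have hj11 : j + 1 - 1 = j := by omega
      simp only [hj11, if_pos rfl, if_true, ite_true, if_neg (show j + 1 ≠ j by omega)]
      have hf := hfeas.2 k (Finset.mem_Icc.mpr ⟨hk.1, hk.2⟩)
      have htot' : x * (t j - t (j - 1)) - rstar j * (t j - t (j - 1)) +
          (y * (t (j + 1) - t j) - rstar (j + 1) * (t (j + 1) - t j)) = 0 := by
        linear_combination htot
      linarith

/-- Lemma 2, part (ii): if the data buffer is non-empty at instant `t_j`
(i.e. `∑_{n=1}^j r*_n T_n > ∑_{n=1}^j D_n`) under an optimal rate vector for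
problem (P2b), then the rate does not change at `t_j`: `r*_{j+1} = r*_j`. -/
theorem optimal_rate_constant_when_buffer_nonempty
    (N : ℕ) (t D rstar : ℕ → ℝ) (B σ2 h : ℝ)
    (hB : 0 < B) (hσ2 : 0 < σ2) (hh : 0 < h)
    (ht0 : t 0 = 0) (ht : ∀ n, n < N → t n < t (n + 1))
    (hD : ∀ n ∈ Finset.Icc 1 N, 0 ≤ D n)
    (hfeas : FeasibleP2b t D N rstar)
    (hopt : ∀ r, FeasibleP2b t D N r →
      energyP2b B σ2 h t N rstar ≤ energyP2b B σ2 h t N r)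
    (j : ℕ) (hj1 : 1 ≤ j) (hjN : j + 1 ≤ N)
    (hbuf : ∑ n ∈ Finset.Icc 1 j, D n
      < ∑ n ∈ Finset.Icc 1 j, rstar n * (t n - t (n - 1))) :
    rstar (j + 1) = rstar j := by
  by_contra hne
  have hT1 : 0 < t j - t (j - 1) := by
    have := ht (j - 1) (by omega)
    have hjj : j - 1 + 1 = j := by omega
    rw [hjj] at this
    linarith
  have hT2 : 0 < t (j + 1) - t j := by
    have := ht j (by omega)
    linarith
  set T1 := t j - t (j - 1) with hT1def
  set T2 := t (j + 1) - t j with hT2def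
  have hc : (0:ℝ) < σ2 / h := div_pos hσ2 hh
  have haj : j ∈ Finset.Icc 1 N := Finset.mem_Icc.mpr ⟨hj1, by omega⟩
  have hbjm : j + 1 ∈ Finset.Icc 1 N := Finset.mem_Icc.mpr ⟨by omega, hjN⟩
  have hrj : 0 ≤ rstar j := hfeas.1 j haj
  have hrj1 : 0 ≤ rstar (j + 1) := hfeas.1 (j + 1) hbjm
  -- key: any feasible perturbation has nonnegative energy increment
  have key : ∀ x y : ℝ, 0 ≤ x → 0 ≤ y →
      (∑ n ∈ Finset.Icc 1 j, D n ≤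
        (∑ n ∈ Finset.Icc 1 j, rstar n * (t n - t (n - 1))) + (x - rstar j) * T1) →
      ((x - rstar j) * T1 + (y - rstar (j + 1)) * T2 = 0) →
      0 ≤ (Real.exp (x / B) - Real.exp (rstar j / B)) * (σ2 / h) * T1
        + (Real.exp (y / B) - Real.exp (rstar (j + 1) / B)) * (σ2 / h) * T2 := by
    intro x y hx hy hcons htot
    have hfeas' := perturb_feasible' t D rstar N hfeas j hj1 hjN x y hx hy hcons htot
    have hle := hopt _ hfeas'
    have hE := sum_two_point' haj hbjm (by omega)
      (fun n => (Real.exp (rstar n / B) - 1) * (σ2 / h) * (t n - t (n - 1)))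
      (fun n => (Real.exp ((if n = j then x else if n = j + 1 then y else rstar n) / B) - 1)
        * (σ2 / h) * (t n - t (n - 1)))
      (by intro n hn h1 h2; simp [h1, h2])
    have hEg : energyP2b B σ2 h t N
        (fun n => if n = j then x else if n = j + 1 then y else rstar n)
        = ∑ n ∈ Finset.Icc 1 N,
          (Real.exp ((if n = j then x else if n = j + 1 then y else rstar n) / B) - 1)
            * (σ2 / h) * (t n - t (n - 1)) := rfl
    have hEf : energyP2b B σ2 h t N rstar
        = ∑ n ∈ Finset.Icc 1 N,
          (Real.exp (rstar n / B) - 1) * (σ2 / h) * (t n - t (n - 1)) := rfl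
    rw [hEg, hEf, hE] at hle
    have hj11 : j + 1 - 1 = j := by omega
    simp only [hj11, if_pos rfl, if_true, ite_true,
      if_neg (show j + 1 ≠ j by omega)] at hle
    rw [← hT1def, ← hT2def] at hle
    nlinarith [hle]
  rcases lt_or_gt_of_ne hne with hlt | hlt
  · -- Case B: rstar (j+1) < rstar j : move ε bits from epoch j to epoch j+1
    set d := rstar j - rstar (j + 1) with hd
    have hdpos : 0 < d := by simp [hd]; linarith
    set S := 1 / T1 + 1 / T2 with hS
    have hSpos : 0 < S := by positivity
    set s := (∑ n ∈ Finset.Icc 1 j, rstar n * (t n - t (n - 1)))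
      - ∑ n ∈ Finset.Icc 1 j, D n with hs
    have hspos : 0 < s := by simp [hs]; linarith
    set ε := min (d / (2 * S)) s with hε
    have hεpos : 0 < ε := lt_min (by positivity) hspos
    have hεS : ε * S ≤ d / 2 := by
      have h1 : ε ≤ d / (2 * S) := min_le_left _ _
      have := mul_le_mul_of_nonneg_right h1 hSpos.le
      calc ε * S ≤ d / (2 * S) * S := this
        _ = d / 2 := by field_simp
    have hring : ε / T1 + ε / T2 = ε * S := by rw [hS]; ring
    have hfrac : ε / T1 + ε / T2 ≤ d / 2 := by linarith
    have hεT1 : 0 < ε / T1 := div_pos hεpos hT1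
    have hεT2 : 0 < ε / T2 := div_pos hεpos hT2
    set x := rstar j - ε / T1 with hxdef
    set y := rstar (j + 1) + ε / T2 with hydef
    have hx : 0 ≤ x := by
      have : ε / T1 ≤ d / 2 := by linarith
      simp only [hxdef]
      have : d ≤ rstar j := by simp [hd]; linarith
      linarith
    have hy : 0 ≤ y := by simp only [hydef]; linarith
    have hμ1 : (x - rstar j) * T1 = -ε := by
      simp only [hxdef]
      field_simp
      ring
    have hμ2 : (y - rstar (j + 1)) * T2 = ε := by
      simp only [hydef]
      field_simp
      ring
    have hεs : ε ≤ s := min_le_right _ _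
    have hcons : ∑ n ∈ Finset.Icc 1 j, D n ≤
        (∑ n ∈ Finset.Icc 1 j, rstar n * (t n - t (n - 1))) + (x - rstar j) * T1 := by
      rw [hμ1]
      have : ε ≤ (∑ n ∈ Finset.Icc 1 j, rstar n * (t n - t (n - 1)))
          - ∑ n ∈ Finset.Icc 1 j, D n := by rw [← hs]; exact hεs
      linarith
    have htot : (x - rstar j) * T1 + (y - rstar (j + 1)) * T2 = 0 := by
      rw [hμ1, hμ2]; ring
    have hkey := key x y hx hy hcons htot
    have hstep : (Real.exp (y / B) - Real.exp (rstar (j + 1) / B)) * T2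
        < (Real.exp (rstar j / B) - Real.exp (x / B)) * T1 := by
      rw [hxdef, hydef]
      exact exp_step_lt' B ε T2 T1 (rstar (j + 1)) (rstar j) hB hεpos hT2 hT1
        (by simp only [hd] at hfrac; linarith)
    have hmul := mul_lt_mul_of_pos_left hstep hc
    clear_value x y ε s S d T1 T2
    linarith [hmul, hkey]
  · -- Case A: rstar j < rstar (j+1) : move ε bits from epoch j+1 to epoch j
    set d := rstar (j + 1) - rstar j with hd
    have hdpos : 0 < d := by simp [hd]; linarith
    set S := 1 / T1 + 1 / T2 with hS
    have hSpos : 0 < S := by positivity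
    set ε := d / (2 * S) with hε
    have hεpos : 0 < ε := by positivity
    have hεS : ε * S = d / 2 := by rw [hε]; field_simp
    have hring : ε / T1 + ε / T2 = ε * S := by rw [hS]; ring
    have hfrac : ε / T1 + ε / T2 ≤ d / 2 := by linarith
    have hεT1 : 0 < ε / T1 := div_pos hεpos hT1
    have hεT2 : 0 < ε / T2 := div_pos hεpos hT2
    set x := rstar j + ε / T1 with hxdef
    set y := rstar (j + 1) - ε / T2 with hydef
    have hx : 0 ≤ x := by simp only [hxdef]; linarith
    have hy : 0 ≤ y := by
      have h1 : ε / T2 ≤ d / 2 := by linarith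
      have h2 : d ≤ rstar (j + 1) := by simp [hd]; linarith
      simp only [hydef]; linarith
    have hμ1 : (x - rstar j) * T1 = ε := by simp only [hxdef]; field_simp; ring
    have hμ2 : (y - rstar (j + 1)) * T2 = -ε := by simp only [hydef]; field_simp; ring
    have hcons : ∑ n ∈ Finset.Icc 1 j, D n ≤
        (∑ n ∈ Finset.Icc 1 j, rstar n * (t n - t (n - 1))) + (x - rstar j) * T1 := by
      rw [hμ1]; linarith
    have htot : (x - rstar j) * T1 + (y - rstar (j + 1)) * T2 = 0 := by
      rw [hμ1, hμ2]; ring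
    have hkey := key x y hx hy hcons htot
    have hstep : (Real.exp (x / B) - Real.exp (rstar j / B)) * T1
        < (Real.exp (rstar (j + 1) / B) - Real.exp (y / B)) * T2 := by
      rw [hxdef, hydef]
      exact exp_step_lt' B ε T1 T2 (rstar j) (rstar (j + 1)) hB hεpos hT1 hT2
        (by simp only [hd] at hfrac; linarith)
    have hmul := mul_lt_mul_of_pos_left hstep hc
    clear_value x y ε S d T1 T2
    linarith [hmul, hkey]
end

section
/- Optimal data partition for problem (P2a) (closed form from KKT conditions): Let N ≥ 1 and, for n = 1, …, N, let a_n, b_n, d_n, β_n, c_n > 0, and let D > 0. Suppose λ* > 0 satisfies ∑_{n=1}^N [ d_n (β_n a_n b_n/(λ* d_n))^{1/(b_n+1)} − c_n d_n ] = D and that D*_n := d_n (β_n a_n b_n/(λ* d_n))^{1/(b_n+1)} − c_n d_n ≥ 0 for every n. Then (D*_1, …, D*_N) minimizes the weighted sum of classification errors ∑_{n=1}^N β_n a_n (D_n/d_n + c_n)^{−b_n} over all vectors (D_1, …, D_N) with D_n ≥ 0 for all n and ∑_{n=1}^N D_n ≤ D. -/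
set_option maxHeartbeats 1000000 in
/-- Per-coordinate tangent-line inequality: the Lagrangian `x ↦ β a (x/d+c)^{-b} + λ x`
is minimized at the closed-form point `s`. -/
lemma key_ineq (a b d β c lam s x : ℝ)
    (ha : 0 < a) (hb : 0 < b) (hd : 0 < d) (hβ : 0 < β) (hc : 0 < c) (hlam : 0 < lam)
    (hs : s = d * ((β * a * b / (lam * d)) ^ ((1 : ℝ) / (b + 1))) - c * d)
    (hx : 0 ≤ x) :
    β * a * ((s / d + c) ^ (-b)) + lam * s ≤ β * a * ((x / d + c) ^ (-b)) + lam * x := by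
  set X := β * a * b / (lam * d) with hX
  have hXpos : 0 < X := by positivity
  have hb1 : (0:ℝ) < b + 1 := by linarith
  have ht0 : s / d + c = X ^ ((1:ℝ)/(b+1)) := by
    rw [hs]; field_simp; ring
  set t0 := X ^ ((1:ℝ)/(b+1)) with ht0d
  have ht0pos : 0 < t0 := Real.rpow_pos_of_pos hXpos _
  have htpos : 0 < x / d + c := by positivity
  set t := x / d + c with htdef
  set u := t / t0 with hu
  have hupos : 0 < u := div_pos htpos ht0pos
  -- weighted AM–GM : u^{-b} + b u ≥ b + 1
  have hw : (1:ℝ)/(b+1) + b/(b+1) = 1 := by field_simp; ring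
  have hamgm := Real.geom_mean_le_arith_mean2_weighted
    (by positivity : (0:ℝ) ≤ 1/(b+1)) (by positivity : (0:ℝ) ≤ b/(b+1))
    (Real.rpow_pos_of_pos hupos (-b)).le hupos.le hw
  have hlhs : (u ^ (-b)) ^ ((1:ℝ)/(b+1)) * u ^ (b/(b+1)) = 1 := by
    rw [← Real.rpow_mul hupos.le, ← Real.rpow_add hupos,
      show -b * ((1:ℝ)/(b+1)) + b/(b+1) = 0 by ring, Real.rpow_zero]
  rw [hlhs] at hamgm
  have hAM : 1 - b * (u - 1) ≤ u ^ (-b) := by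
    have h1 : (b+1) * 1 ≤ (b+1) * ((1/(b+1)) * u ^ (-b) + (b/(b+1)) * u) :=
      mul_le_mul_of_nonneg_left hamgm hb1.le
    have h2 : (b+1) * ((1/(b+1)) * u ^ (-b) + (b/(b+1)) * u)
        = u ^ (-b) + b * u := by field_simp
    nlinarith [h1, h2]
  -- powers of t0
  have h1 : t0 ^ (b+1) = X := by
    rw [ht0d, ← Real.rpow_mul hXpos.le, one_div, inv_mul_cancel₀ hb1.ne', Real.rpow_one]
  have h2 : t0 ^ (-b) = t0 / X := by
    rw [show -b = 1 - (b+1) by ring, Real.rpow_sub ht0pos, Real.rpow_one, h1]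
  -- t^{-b} = t0^{-b} u^{-b}
  have htu : t = u * t0 := by rw [hu, div_mul_cancel₀ _ ht0pos.ne']
  have hpow : t ^ (-b) = u ^ (-b) * t0 ^ (-b) := by
    rw [htu, Real.mul_rpow hupos.le ht0pos.le]
  -- the derivative identity : β a b t0^{-b} (u-1) = lam (x - s)
  have hts : t - t0 = (x - s) / d := by
    rw [htdef, ← ht0]; ring
  have hident : β * a * t0 ^ (-b) * (b * (u - 1)) = lam * (x - s) := by
    have hXne : X ≠ 0 := hXpos.ne'
    have : β * a * t0 ^ (-b) * (b * (u - 1)) = β * a * b * (t - t0) / X := by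
      rw [h2, hu]; field_simp
    rw [this, hts, hX]
    field_simp
  have ht0bpos : 0 < t0 ^ (-b) := Real.rpow_pos_of_pos ht0pos _
  have hmain : β * a * (t0 ^ (-b)) * (1 - b * (u - 1)) ≤ β * a * (t ^ (-b)) := by
    rw [hpow]
    have := mul_le_mul_of_nonneg_left hAM (by positivity : (0:ℝ) ≤ β * a * t0 ^ (-b))
    nlinarith [this]
  rw [ht0]
  nlinarith [hmain, hident]

/-- Optimal data partition for problem (P2a) (closed form from the KKT conditions):
if `λ* > 0` is such that the closed-form partition
`D*_n = d_n (β_n a_n b_n / (λ* d_n))^{1/(b_n+1)} − c_n d_n` is nonnegative and sums to `D`,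
then it minimizes the weighted sum of classification errors
`∑ β_n a_n (D_n/d_n + c_n)^{−b_n}` over all nonnegative partitions with `∑ D_n ≤ D`. -/
theorem optimal_data_partition_closed_form
    (N : ℕ) (hN : 1 ≤ N) (a b d β c : ℕ → ℝ) (D lam : ℝ)
    (ha : ∀ n ∈ Finset.Icc 1 N, 0 < a n)
    (hb : ∀ n ∈ Finset.Icc 1 N, 0 < b n)
    (hd : ∀ n ∈ Finset.Icc 1 N, 0 < d n)
    (hβ : ∀ n ∈ Finset.Icc 1 N, 0 < β n)
    (hc : ∀ n ∈ Finset.Icc 1 N, 0 < c n)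
    (hD : 0 < D) (hlam : 0 < lam)
    (Dstar : ℕ → ℝ)
    (hDstar : ∀ n ∈ Finset.Icc 1 N,
      Dstar n = d n * ((β n * a n * b n / (lam * d n)) ^ ((1 : ℝ) / (b n + 1))) - c n * d n)
    (hDstar_nonneg : ∀ n ∈ Finset.Icc 1 N, 0 ≤ Dstar n)
    (hDstar_sum : ∑ n ∈ Finset.Icc 1 N, Dstar n = D) :
    ∀ D' : ℕ → ℝ, (∀ n ∈ Finset.Icc 1 N, 0 ≤ D' n) →
      (∑ n ∈ Finset.Icc 1 N, D' n ≤ D) →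
      ∑ n ∈ Finset.Icc 1 N, β n * a n * ((Dstar n / d n + c n) ^ (-(b n)))
        ≤ ∑ n ∈ Finset.Icc 1 N, β n * a n * ((D' n / d n + c n) ^ (-(b n))) := by
  intro D' hD'nonneg hD'sum
  have hsum : ∑ n ∈ Finset.Icc 1 N,
      (β n * a n * ((Dstar n / d n + c n) ^ (-(b n))) + lam * Dstar n)
      ≤ ∑ n ∈ Finset.Icc 1 N,
      (β n * a n * ((D' n / d n + c n) ^ (-(b n))) + lam * D' n) := by
    apply Finset.sum_le_sum
    intro n hn
    exact key_ineq (a n) (b n) (d n) (β n) (c n) lam (Dstar n) (D' n)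
      (ha n hn) (hb n hn) (hd n hn) (hβ n hn) (hc n hn) hlam
      (hDstar n hn) (hD'nonneg n hn)
  rw [Finset.sum_add_distrib, Finset.sum_add_distrib, ← Finset.mul_sum, ← Finset.mul_sum,
    hDstar_sum] at hsum
  have : lam * ∑ n ∈ Finset.Icc 1 N, D' n ≤ lam * D :=
    mul_le_mul_of_nonneg_left hD'sum hlam.le
  linarith
end

section
/- Proposition 1, sufficiency (optimality of the string-pulling policy): Define indices j_0 = 0 and, recursively while j_{i−1} < N, let j_i be the largest index j ∈ {j_{i−1}+1, …, N} maximizing (∑_{n=j_{i−1}+1}^{j} D_n)/(t_j − t_{j_{i−1}}), and set ρ_i = (∑_{n=j_{i−1}+1}^{j_i} D_n)/(t_{j_i} − t_{j_{i−1}}). Let r* be the rate vector defined by r*_n = ρ_i for j_{i−1} < n ≤ j_i. Then r* satisfies the transmission constraints and minimizes the energy E among all rate vectors satisfying the transmission constraints. -/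
/-- Convexity inequality for the exponential: the graph lies above its tangent. -/
lemma convex_exp_aux (x y : ℝ) : Real.exp y * (x - y) + Real.exp y ≤ Real.exp x := by
  have h := Real.add_one_le_exp (x - y)
  have hy := Real.exp_pos y
  calc Real.exp y * (x - y) + Real.exp y = Real.exp y * ((x - y) + 1) := by ring
    _ ≤ Real.exp y * Real.exp (x - y) := by nlinarith
    _ = Real.exp x := by rw [← Real.exp_add]; congr 1; ring

/-- Abel-summation style estimate: if the coefficients `c` are antitone on `[1, L]`
and the partial sums `s` are nonnegative there with `s 0 = 0`, then
`∑_{i=1}^m c i (s i - s (i-1)) ≥ c m * s m`. -/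
lemma abel_aux (c s : ℕ → ℝ) (L : ℕ)
    (hs0 : s 0 = 0) (hs : ∀ i, 1 ≤ i → i ≤ L → 0 ≤ s i)
    (hc : ∀ i, 1 ≤ i → i < L → c (i + 1) ≤ c i) :
    ∀ m, m ≤ L → c m * s m ≤ ∑ i ∈ Finset.Icc 1 m, c i * (s i - s (i - 1)) := by
  intro m
  induction m with
  | zero => intro _; simp [hs0]
  | succ m ih =>
    intro hmL
    rw [Finset.sum_Icc_succ_top (by omega : (1:ℕ) ≤ m + 1)]
    have h1 := ih (by omega)
    have h2 : 0 ≤ (c m - c (m + 1)) * s m := by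
      rcases Nat.eq_zero_or_pos m with hm | hm
      · subst hm; simp [hs0]
      · exact mul_nonneg (by linarith [hc m hm (by omega)]) (hs m hm (by omega))
    have hmm : (m + 1 - 1 : ℕ) = m := rfl
    rw [hmm]
    nlinarith [h2, h1]

/-- Proposition 1, sufficiency (optimality of the string-pulling policy).
Let `j 0 = 0 < j 1 < ⋯ < j L = N` be the string-pulling indices: for each segment
`i`, `j i` is the largest index in `(j (i−1), N]` maximizing the average required
rate `(∑_{n = j(i−1)+1}^{k} D_n)/(t_k − t_{j(i−1)})`, and the policy `rstar`
transmits at this maximal average rate `ρ_i` throughout the `i`-th segment.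
Then `rstar` satisfies the transmission constraints and minimizes the energy
among all rate vectors satisfying them. -/
theorem string_pulling_optimal
    (N : ℕ) (hN : 1 ≤ N) (t D rstar : ℕ → ℝ) (B σ2 h : ℝ)
    (hB : 0 < B) (hσ2 : 0 < σ2) (hh : 0 < h)
    (ht0 : t 0 = 0) (ht : ∀ n, n < N → t n < t (n + 1))
    (hD : ∀ n ∈ Finset.Icc 1 N, 0 ≤ D n)
    (L : ℕ) (hL : 1 ≤ L) (j : ℕ → ℕ)
    (hj0 : j 0 = 0) (hjL : j L = N)
    (hjmem : ∀ i ∈ Finset.Icc 1 L, j (i - 1) < j i ∧ j i ≤ N)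
    -- `j i` maximizes the average required rate over `(j (i−1), N]` …
    (hmax : ∀ i ∈ Finset.Icc 1 L, ∀ k, j (i - 1) < k → k ≤ N →
      (∑ n ∈ Finset.Icc (j (i - 1) + 1) k, D n) / (t k - t (j (i - 1)))
        ≤ (∑ n ∈ Finset.Icc (j (i - 1) + 1) (j i), D n) / (t (j i) - t (j (i - 1))))
    -- … and is the largest such maximizer.
    (hmax_largest : ∀ i ∈ Finset.Icc 1 L, ∀ k, j (i - 1) < k → k ≤ N →
      (∑ n ∈ Finset.Icc (j (i - 1) + 1) k, D n) / (t k - t (j (i - 1)))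
          = (∑ n ∈ Finset.Icc (j (i - 1) + 1) (j i), D n) / (t (j i) - t (j (i - 1))) →
      k ≤ j i)
    -- the string-pulling policy: constant rate `ρ_i` in the `i`-th segment.
    (hrstar : ∀ i ∈ Finset.Icc 1 L, ∀ n, j (i - 1) < n → n ≤ j i →
      rstar n = (∑ m ∈ Finset.Icc (j (i - 1) + 1) (j i), D m) / (t (j i) - t (j (i - 1)))) :
    FeasibleP2b t D N rstar ∧
    ∀ r, FeasibleP2b t D N r →
      energyP2b B σ2 h t N rstar ≤ energyP2b B σ2 h t N r := by
  classical
  have hσh : 0 < σ2 / h := div_pos hσ2 hh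
  -- t is strictly increasing on [0, N]
  have tlt : ∀ a b : ℕ, a < b → b ≤ N → t a < t b := by
    intro a b hab hbN
    induction b with
    | zero => omega
    | succ b ih =>
      have hb : t b < t (b + 1) := ht b (by omega)
      rcases Nat.lt_succ_iff_lt_or_eq.mp hab with h | h
      · exact (ih h (by omega)).trans hb
      · subst h; exact hb
  have Tpos : ∀ n, 1 ≤ n → n ≤ N → 0 < t n - t (n - 1) := by
    intro n h1 hn
    have := tlt (n - 1) n (by omega) hn
    linarith
  -- j is strictly increasing on [0, L]
  have jlt : ∀ i, i < L → j i < j (i + 1) := by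
    intro i hi
    have := (hjmem (i + 1) (Finset.mem_Icc.mpr ⟨by omega, by omega⟩)).1
    simpa using this
  have jle : ∀ a b, a ≤ b → b ≤ L → j a ≤ j b := by
    intro a b hab hbL
    induction b with
    | zero => have : a = 0 := by omega
              rw [this]
    | succ b ih =>
      rcases Nat.eq_or_lt_of_le hab with hh' | hh'
      · rw [hh']
      · exact (ih (by omega) (by omega)).trans (le_of_lt (jlt b (by omega)))
  have jN : ∀ i, i ≤ L → j i ≤ N := by
    intro i hi
    have := jle i L hi le_rfl
    omega
  -- telescoping sums of epoch lengths
  have tele : ∀ a k, a ≤ k → ∑ n ∈ Finset.Icc (a + 1) k, (t n - t (n - 1)) = t k - t a := by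
    intro a k hak
    induction k, hak using Nat.le_induction with
    | base => rw [Finset.Icc_eq_empty (by omega)]; simp
    | succ k hk ih =>
      rw [Finset.sum_Icc_succ_top (by omega : a + 1 ≤ k + 1), ih]
      simp only [Nat.add_sub_cancel]
      ring
  -- splitting sums at an intermediate index
  have hsplit : ∀ (f : ℕ → ℝ) (a b c : ℕ), a ≤ b → b ≤ c →
      ∑ n ∈ Finset.Icc (a + 1) c, f n
        = ∑ n ∈ Finset.Icc (a + 1) b, f n + ∑ n ∈ Finset.Icc (b + 1) c, f n := by
    intro f a b c hab hbc
    rw [Finset.Icc_add_one_left_eq_Ioc, Finset.Icc_add_one_left_eq_Ioc, Finset.Icc_add_one_left_eq_Ioc]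
    exact (Finset.sum_Ioc_consecutive _ hab hbc).symm
  have hsplit0 : ∀ (f : ℕ → ℝ) (b c : ℕ), b ≤ c →
      ∑ n ∈ Finset.Icc 1 c, f n
        = ∑ n ∈ Finset.Icc 1 b, f n + ∑ n ∈ Finset.Icc (b + 1) c, f n := by
    intro f b c hbc
    simpa using hsplit f 0 b c (Nat.zero_le b) hbc
  -- sum of rstar over a part of a segment
  have segR : ∀ i, 1 ≤ i → i ≤ L → ∀ k, j (i - 1) ≤ k → k ≤ j i →
      ∑ n ∈ Finset.Icc (j (i - 1) + 1) k, rstar n * (t n - t (n - 1))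
        = ((∑ m ∈ Finset.Icc (j (i - 1) + 1) (j i), D m) / (t (j i) - t (j (i - 1))))
            * (t k - t (j (i - 1))) := by
    intro i hi1 hiL k hk1 hk2
    have h1 : ∀ n ∈ Finset.Icc (j (i - 1) + 1) k, rstar n * (t n - t (n - 1))
        = ((∑ m ∈ Finset.Icc (j (i - 1) + 1) (j i), D m) / (t (j i) - t (j (i - 1))))
            * (t n - t (n - 1)) := by
      intro n hn
      obtain ⟨ha, hb⟩ := Finset.mem_Icc.mp hn
      rw [hrstar i (Finset.mem_Icc.mpr ⟨hi1, hiL⟩) n (by omega) (le_trans hb hk2)]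
    rw [Finset.sum_congr rfl h1, ← Finset.mul_sum, tele _ _ hk1]
  -- boundary equality: rstar delivers exactly the required data at each j i
  have hRD : ∀ i, i ≤ L →
      ∑ n ∈ Finset.Icc 1 (j i), rstar n * (t n - t (n - 1))
        = ∑ n ∈ Finset.Icc 1 (j i), D n := by
    intro i
    induction i with
    | zero => intro _; rw [hj0]; simp
    | succ i ih =>
      intro hiL
      have hji : j i ≤ j (i + 1) := le_of_lt (jlt i (by omega))
      rw [hsplit0 _ (j i) (j (i + 1)) hji, hsplit0 _ (j i) (j (i + 1)) hji, ih (by omega)]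
      congr 1
      have hseg := segR (i + 1) (by omega) hiL (j (i + 1))
        (by simpa using hji) le_rfl
      simp only [Nat.add_sub_cancel] at hseg
      rw [hseg, div_mul_cancel₀]
      have := tlt (j i) (j (i + 1)) (jlt i (by omega)) (jN (i + 1) hiL)
      exact ne_of_gt (by linarith)
  -- every epoch index belongs to some segment
  have seg : ∀ n, 1 ≤ n → n ≤ N → ∃ i, 1 ≤ i ∧ i ≤ L ∧ j (i - 1) < n ∧ n ≤ j i := by
    intro n h1 hn
    have hex : ∃ i, n ≤ j i := ⟨L, by rw [hjL]; exact hn⟩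
    have hni0 : n ≤ j (Nat.find hex) := Nat.find_spec hex
    have hi0L : Nat.find hex ≤ L := Nat.find_min' hex (by rw [hjL]; exact hn)
    have hi01 : 1 ≤ Nat.find hex := by
      rcases Nat.eq_zero_or_pos (Nat.find hex) with h' | h'
      · exfalso; rw [h', hj0] at hni0; omega
      · exact h'
    have hlt : j (Nat.find hex - 1) < n := by
      by_contra hcon
      push_neg at hcon
      exact Nat.find_min hex (show Nat.find hex - 1 < Nat.find hex by omega) hcon
    exact ⟨Nat.find hex, hi01, hi0L, hlt, hni0⟩
  -- positivity of segment time lengths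
  have tdiffpos : ∀ i, 1 ≤ i → i ≤ L → 0 < t (j i) - t (j (i - 1)) := by
    intro i hi1 hiL
    have := tlt (j (i - 1)) (j i) (hjmem i (Finset.mem_Icc.mpr ⟨hi1, hiL⟩)).1 (jN i hiL)
    linarith
  -- nonnegativity of segment rates
  have ρnonneg : ∀ i, 1 ≤ i → i ≤ L →
      0 ≤ (∑ m ∈ Finset.Icc (j (i - 1) + 1) (j i), D m) / (t (j i) - t (j (i - 1))) := by
    intro i hi1 hiL
    apply div_nonneg
    · apply Finset.sum_nonneg
      intro m hm
      obtain ⟨hm1, hm2⟩ := Finset.mem_Icc.mp hm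
      exact hD m (Finset.mem_Icc.mpr ⟨by omega, le_trans hm2 (jN i hiL)⟩)
    · linarith [tdiffpos i hi1 hiL]
  -- feasibility of rstar
  have hfeas : FeasibleP2b t D N rstar := by
    constructor
    · intro n hn
      obtain ⟨n1, nN⟩ := Finset.mem_Icc.mp hn
      obtain ⟨i, hi1, hiL, hlt, hle⟩ := seg n n1 nN
      rw [hrstar i (Finset.mem_Icc.mpr ⟨hi1, hiL⟩) n hlt hle]
      exact ρnonneg i hi1 hiL
    · intro k hk
      obtain ⟨k1, kN⟩ := Finset.mem_Icc.mp hk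
      obtain ⟨i, hi1, hiL, hlt, hle⟩ := seg k k1 kN
      have hjik : j (i - 1) ≤ k := le_of_lt hlt
      have htpos : 0 < t k - t (j (i - 1)) := by
        have := tlt (j (i - 1)) k hlt kN; linarith
      rw [hsplit0 (fun n => D n) (j (i - 1)) k hjik,
          hsplit0 (fun n => rstar n * (t n - t (n - 1))) (j (i - 1)) k hjik,
          hRD (i - 1) (by omega), segR i hi1 hiL k hjik hle]
      have hm := hmax i (Finset.mem_Icc.mpr ⟨hi1, hiL⟩) k hlt kN
      have := (div_le_iff₀ htpos).mp hm
      linarith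
  refine ⟨hfeas, ?_⟩
  -- segment rates are nonincreasing
  have ρanti : ∀ i, 1 ≤ i → i < L →
      (∑ m ∈ Finset.Icc (j i + 1) (j (i + 1)), D m) / (t (j (i + 1)) - t (j i))
        ≤ (∑ m ∈ Finset.Icc (j (i - 1) + 1) (j i), D m) / (t (j i) - t (j (i - 1))) := by
    intro i hi1 hiL
    have hab : j (i - 1) < j i := (hjmem i (Finset.mem_Icc.mpr ⟨hi1, by omega⟩)).1
    have hbc : j i < j (i + 1) := jlt i hiL
    have hcN : j (i + 1) ≤ N := jN (i + 1) (by omega)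
    have hu : 0 < t (j i) - t (j (i - 1)) := tdiffpos i hi1 (by omega)
    have hv : 0 < t (j (i + 1)) - t (j i) := by
      have := tlt (j i) (j (i + 1)) hbc hcN; linarith
    have hw : 0 < t (j (i + 1)) - t (j (i - 1)) := by linarith
    have hmax' := hmax i (Finset.mem_Icc.mpr ⟨hi1, by omega⟩) (j (i + 1)) (by omega) hcN
    rw [hsplit (fun n => D n) (j (i - 1)) (j i) (j (i + 1))
        (le_of_lt hab) (le_of_lt hbc)] at hmax'
    rw [div_le_div_iff₀ hw hu] at hmax'
    rw [div_le_div_iff₀ hv hu]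
    nlinarith [hmax']
  intro r hr
  obtain ⟨hr0, hrc⟩ := hr
  -- partial sums of the difference
  set S : ℕ → ℝ := fun k => ∑ n ∈ Finset.Icc 1 k, (r n - rstar n) * (t n - t (n - 1)) with hSdef
  have hS0 : S 0 = 0 := by simp [hSdef]
  have hSnn : ∀ i, 1 ≤ i → i ≤ L → 0 ≤ S (j i) := by
    intro i hi1 hiL
    have hji1 : 1 ≤ j i := by
      have := (hjmem i (Finset.mem_Icc.mpr ⟨hi1, hiL⟩)).1; omega
    have h1 := hrc (j i) (Finset.mem_Icc.mpr ⟨hji1, jN i hiL⟩)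
    have h2 := hRD i hiL
    have h3 : S (j i) = (∑ n ∈ Finset.Icc 1 (j i), r n * (t n - t (n - 1)))
        - ∑ n ∈ Finset.Icc 1 (j i), rstar n * (t n - t (n - 1)) := by
      rw [hSdef]
      simp only
      rw [← Finset.sum_sub_distrib]
      exact Finset.sum_congr rfl fun n _ => by ring
    rw [h3, h2]
    linarith
  -- segment sums of the linearized energy difference
  have hSseg : ∀ i, 1 ≤ i → i ≤ L →
      ∑ n ∈ Finset.Icc (j (i - 1) + 1) (j i),
          Real.exp (rstar n / B) * ((r n - rstar n) * (t n - t (n - 1)))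
        = Real.exp ((∑ m ∈ Finset.Icc (j (i - 1) + 1) (j i), D m)
              / (t (j i) - t (j (i - 1))) / B) * (S (j i) - S (j (i - 1))) := by
    intro i hi1 hiL
    have hab : j (i - 1) ≤ j i := le_of_lt (hjmem i (Finset.mem_Icc.mpr ⟨hi1, hiL⟩)).1
    have hSdiff : S (j i) - S (j (i - 1))
        = ∑ n ∈ Finset.Icc (j (i - 1) + 1) (j i), (r n - rstar n) * (t n - t (n - 1)) := by
      rw [hSdef]
      simp only
      rw [hsplit0 (fun n => (r n - rstar n) * (t n - t (n - 1))) (j (i - 1)) (j i) hab]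
      ring
    rw [hSdiff, Finset.mul_sum]
    apply Finset.sum_congr rfl
    intro n hn
    obtain ⟨h1, h2⟩ := Finset.mem_Icc.mp hn
    rw [hrstar i (Finset.mem_Icc.mpr ⟨hi1, hiL⟩) n (by omega) h2]
  -- decomposition of prefix sums into segment sums
  have hdecomp : ∀ (f : ℕ → ℝ) (m : ℕ), m ≤ L → ∑ n ∈ Finset.Icc 1 (j m), f n
      = ∑ i ∈ Finset.Icc 1 m, ∑ n ∈ Finset.Icc (j (i - 1) + 1) (j i), f n := by
    intro f m
    induction m with
    | zero => intro _; rw [hj0]; simp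
    | succ m ih =>
      intro hmL
      rw [hsplit0 f (j m) (j (m + 1)) (le_of_lt (jlt m (by omega))), ih (by omega),
          Finset.sum_Icc_succ_top (by omega : (1:ℕ) ≤ m + 1)]
      simp only [Nat.add_sub_cancel]
  -- the key Abel-summation nonnegativity
  have key : 0 ≤ ∑ n ∈ Finset.Icc 1 N,
      Real.exp (rstar n / B) * ((r n - rstar n) * (t n - t (n - 1))) := by
    have h1 : ∑ n ∈ Finset.Icc 1 N,
        Real.exp (rstar n / B) * ((r n - rstar n) * (t n - t (n - 1)))
        = ∑ i ∈ Finset.Icc 1 L,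
            Real.exp ((∑ m ∈ Finset.Icc (j (i - 1) + 1) (j i), D m)
              / (t (j i) - t (j (i - 1))) / B) * (S (j i) - S (j (i - 1))) := by
      rw [← hjL, hdecomp _ L le_rfl]
      exact Finset.sum_congr rfl fun i hi =>
        hSseg i (Finset.mem_Icc.mp hi).1 (Finset.mem_Icc.mp hi).2
    rw [h1]
    have habel := abel_aux
      (fun i => Real.exp ((∑ m ∈ Finset.Icc (j (i - 1) + 1) (j i), D m)
        / (t (j i) - t (j (i - 1))) / B))
      (fun i => S (j i)) L
      (by simp only [hj0]; exact hS0)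
      (fun i hi1 hiL => hSnn i hi1 hiL)
      (fun i hi1 hiL => by
        simp only [Nat.add_sub_cancel]
        apply Real.exp_le_exp.mpr
        have := ρanti i hi1 hiL
        gcongr)
      L le_rfl
    have hfin : 0 ≤ Real.exp ((∑ m ∈ Finset.Icc (j (L - 1) + 1) (j L), D m)
        / (t (j L) - t (j (L - 1))) / B) * S (j L) :=
      mul_nonneg (le_of_lt (Real.exp_pos _)) (hSnn L hL le_rfl)
    linarith
  -- conclude by convexity
  have hterm : ∀ n ∈ Finset.Icc 1 N,
      (Real.exp (rstar n / B) - 1) * (σ2 / h) * (t n - t (n - 1))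
        + (σ2 / (h * B)) * (Real.exp (rstar n / B) * ((r n - rstar n) * (t n - t (n - 1))))
      ≤ (Real.exp (r n / B) - 1) * (σ2 / h) * (t n - t (n - 1)) := by
    intro n hn
    obtain ⟨h1, h2⟩ := Finset.mem_Icc.mp hn
    have hT := Tpos n h1 h2
    have hconv := convex_exp_aux (r n / B) (rstar n / B)
    have hxy : r n / B - rstar n / B = (r n - rstar n) / B := by ring
    rw [hxy] at hconv
    have hc : (0:ℝ) ≤ σ2 / h * (t n - t (n - 1)) := le_of_lt (mul_pos hσh hT)
    have hmul := mul_le_mul_of_nonneg_right hconv hc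
    have heq : (σ2 / (h * B)) * (Real.exp (rstar n / B) * ((r n - rstar n) * (t n - t (n - 1))))
        = (Real.exp (rstar n / B) * ((r n - rstar n) / B)) * (σ2 / h * (t n - t (n - 1))) := by
      field_simp
    nlinarith [hmul, heq]
  have hsum := Finset.sum_le_sum hterm
  rw [Finset.sum_add_distrib, ← Finset.mul_sum] at hsum
  have hcnn : 0 ≤ σ2 / (h * B) * ∑ n ∈ Finset.Icc 1 N,
      Real.exp (rstar n / B) * ((r n - rstar n) * (t n - t (n - 1))) :=
    mul_nonneg (le_of_lt (div_pos hσ2 (mul_pos hh hB))) key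
  unfold energyP2b
  linarith
end

section
/- Proposition 1, necessity (first segment of any optimal policy): Let j₁ be the largest index j ∈ {1, …, N} maximizing (∑_{n=1}^j D_n)/t_j, and let ρ₁ = max_{1 ≤ j ≤ N} (∑_{n=1}^j D_n)/t_j. If r* = (r*_1, …, r*_N) is an optimal rate vector for problem (P2b), then r*_n = ρ₁ for every n = 1, …, j₁; in particular r*_1 equals the maximal cumulative average rate ρ₁. -/
/- ### Auxiliary lemmas -/

lemma my_telescope (t : ℕ → ℝ) (ht0 : t 0 = 0) :
    ∀ k, ∑ n ∈ Finset.Icc 1 k, (t n - t (n-1)) = t k := by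
  intro k
  induction k with
  | zero => simp [ht0]
  | succ k ih =>
    rw [Finset.sum_Icc_succ_top (Nat.le_add_left 1 k), ih]
    simp

lemma my_split (f : ℕ → ℝ) {a b : ℕ} (h : a ≤ b) :
    ∑ n ∈ Finset.Icc 1 b, f n
      = ∑ n ∈ Finset.Icc 1 a, f n + ∑ n ∈ Finset.Icc (a+1) b, f n := by
  have e : ∀ m, Finset.Icc 1 m = Finset.Ioc 0 m := fun m => Finset.Icc_add_one_left_eq_Ioc 0 m
  rw [e, e, Finset.Icc_add_one_left_eq_Ioc]
  exact (Finset.sum_Ioc_consecutive f (Nat.zero_le a) h).symm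

lemma my_jensen (B : ℝ) (hB : 0 < B) (s : Finset ℕ) (w r : ℕ → ℝ)
    (hw : ∀ n ∈ s, 0 < w n) (W : ℝ) (hW : W = ∑ n ∈ s, w n) (hWpos : 0 < W)
    (hnc : ∃ a ∈ s, ∃ b ∈ s, r a ≠ r b) :
    W * Real.exp ((∑ n ∈ s, r n * w n) / W / B) < ∑ n ∈ s, Real.exp (r n / B) * w n := by
  have h₀ : ∀ n ∈ s, 0 < w n / W := fun n hn => div_pos (hw n hn) hWpos
  have h₁ : ∑ n ∈ s, w n / W = 1 := by
    rw [← Finset.sum_div, ← hW, div_self hWpos.ne']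
  have hp : ∃ a ∈ s, ∃ b ∈ s, r a / B ≠ r b / B := by
    obtain ⟨a, ha, b, hb, hab⟩ := hnc
    exact ⟨a, ha, b, hb, fun h => hab (by field_simp at h; exact h)⟩
  have := strictConvexOn_exp.map_sum_lt h₀ h₁ (fun n _ => Set.mem_univ _) hp
  simp only [smul_eq_mul] at this
  have h2 : ∑ n ∈ s, w n / W * (r n / B) = (∑ n ∈ s, r n * w n) / W / B := by
    rw [Finset.sum_div, Finset.sum_div]
    exact Finset.sum_congr rfl fun n _ => by ring
  rw [h2] at this
  calc W * Real.exp ((∑ n ∈ s, r n * w n) / W / B)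
      < W * ∑ n ∈ s, w n / W * Real.exp (r n / B) := (mul_lt_mul_iff_right₀ hWpos).mpr this
    _ = ∑ n ∈ s, Real.exp (r n / B) * w n := by
        rw [Finset.mul_sum]
        exact Finset.sum_congr rfl fun n _ => by field_simp

lemma sum_head (t : ℕ → ℝ) (ht0 : t 0 = 0) (g : ℕ → ℝ) (x : ℝ) (k : ℕ)
    (hx : ∀ n, 1 ≤ n → n ≤ k → g n = x) :
    ∑ n ∈ Finset.Icc 1 k, g n * (t n - t (n-1)) = x * t k := by
  calc ∑ n ∈ Finset.Icc 1 k, g n * (t n - t (n-1))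
      = ∑ n ∈ Finset.Icc 1 k, x * (t n - t (n-1)) :=
        Finset.sum_congr rfl fun n hn => by
          rw [hx n (Finset.mem_Icc.mp hn).1 (Finset.mem_Icc.mp hn).2]
    _ = x * t k := by rw [← Finset.mul_sum, my_telescope t ht0]

lemma exp_sub_one_le (x : ℝ) (hx : 0 ≤ x) : Real.exp x - 1 ≤ x * Real.exp x := by
  have h := Real.add_one_le_exp (-x)
  have h2 : (-x + 1) * Real.exp x ≤ Real.exp (-x) * Real.exp x :=
    mul_le_mul_of_nonneg_right h (Real.exp_pos x).le
  rw [← Real.exp_add] at h2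
  simp only [neg_add_cancel, Real.exp_zero] at h2
  nlinarith [Real.exp_pos x]

lemma exp_gap_lt (x y : ℝ) (hy : 0 < y) :
    Real.exp x * y < Real.exp (x + y) - Real.exp x := by
  have h := Real.add_one_lt_exp (ne_of_gt hy)
  have hx := Real.exp_pos x
  rw [Real.exp_add]
  nlinarith

noncomputable def Gaux (B : ℝ) (t : ℕ → ℝ) (N : ℕ) (r : ℕ → ℝ) : ℝ :=
  ∑ n ∈ Finset.Icc 1 N, Real.exp (r n / B) * (t n - t (n-1))

lemma G_lt_of_head (B : ℝ) (t : ℕ → ℝ) (N k : ℕ) (hk : k ≤ N) (r r' : ℕ → ℝ)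
    (htail : ∀ n, k+1 ≤ n → n ≤ N → r' n = r n)
    (hhead : ∑ n ∈ Finset.Icc 1 k, Real.exp (r' n / B) * (t n - t (n-1))
      < ∑ n ∈ Finset.Icc 1 k, Real.exp (r n / B) * (t n - t (n-1))) :
    Gaux B t N r' < Gaux B t N r := by
  unfold Gaux
  rw [my_split (fun n => Real.exp (r' n / B) * (t n - t (n-1))) hk,
      my_split (fun n => Real.exp (r n / B) * (t n - t (n-1))) hk]
  have htl : ∑ n ∈ Finset.Icc (k+1) N, Real.exp (r' n / B) * (t n - t (n-1))
      = ∑ n ∈ Finset.Icc (k+1) N, Real.exp (r n / B) * (t n - t (n-1)) :=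
    Finset.sum_congr rfl fun n hn => by
      rw [htail n (Finset.mem_Icc.mp hn).1 (Finset.mem_Icc.mp hn).2]
  rw [htl]
  exact add_lt_add_left hhead _

lemma feas_tail (t D : ℕ → ℝ) (N : ℕ) (rstar : ℕ → ℝ)
    (hfc : ∀ j ∈ Finset.Icc 1 N,
      ∑ n ∈ Finset.Icc 1 j, D n ≤ ∑ n ∈ Finset.Icc 1 j, rstar n * (t n - t (n-1)))
    (k : ℕ) (r' : ℕ → ℝ)
    (hnn : ∀ n ∈ Finset.Icc 1 N, 0 ≤ r' n)
    (hhead : ∀ j, 1 ≤ j → j ≤ k → j ≤ N →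
      ∑ n ∈ Finset.Icc 1 j, D n ≤ ∑ n ∈ Finset.Icc 1 j, r' n * (t n - t (n-1)))
    (heqk : k < N → ∑ n ∈ Finset.Icc 1 k, r' n * (t n - t (n-1))
      = ∑ n ∈ Finset.Icc 1 k, rstar n * (t n - t (n-1)))
    (htail : ∀ n, k+1 ≤ n → n ≤ N → r' n = rstar n) :
    FeasibleP2b t D N r' := by
  refine ⟨hnn, fun j hj => ?_⟩
  obtain ⟨hj1, hjN⟩ := Finset.mem_Icc.mp hj
  rcases le_or_gt j k with h | h
  · exact hhead j hj1 h hjN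
  · have hkj : k ≤ j := h.le
    have heq : ∑ n ∈ Finset.Icc 1 j, r' n * (t n - t (n-1))
        = ∑ n ∈ Finset.Icc 1 j, rstar n * (t n - t (n-1)) := by
      rw [my_split (fun n => r' n * (t n - t (n-1))) hkj,
          my_split (fun n => rstar n * (t n - t (n-1))) hkj, heqk (lt_of_lt_of_le h hjN)]
      have : ∑ n ∈ Finset.Icc (k+1) j, r' n * (t n - t (n-1))
          = ∑ n ∈ Finset.Icc (k+1) j, rstar n * (t n - t (n-1)) :=
        Finset.sum_congr rfl fun n hn => by
          rw [htail n (Finset.mem_Icc.mp hn).1 (le_trans (Finset.mem_Icc.mp hn).2 hjN)]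
      rw [this]
    rw [heq]
    exact hfc j hj

set_option maxHeartbeats 1000000 in
/-- Proposition 1, necessity (first segment of any optimal policy).
Let `j₁` be the largest index `j ∈ {1, …, N}` maximizing the cumulative average
rate `(∑_{n=1}^j D_n)/t_j`, with maximal value `ρ₁`. Then any optimal rate vector
for problem (P2b) transmits at rate `ρ₁` throughout the first `j₁` epochs. -/
theorem optimal_first_segment
    (N : ℕ) (hN : 1 ≤ N) (t D rstar : ℕ → ℝ) (B σ2 h : ℝ)
    (hB : 0 < B) (hσ2 : 0 < σ2) (hh : 0 < h)
    (ht0 : t 0 = 0) (ht : ∀ n, n < N → t n < t (n + 1))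
    (hD : ∀ n ∈ Finset.Icc 1 N, 0 ≤ D n)
    (j1 : ℕ) (hj1 : j1 ∈ Finset.Icc 1 N) (ρ1 : ℝ)
    (hρ1 : ρ1 = (∑ n ∈ Finset.Icc 1 j1, D n) / t j1)
    (hmax : ∀ j ∈ Finset.Icc 1 N, (∑ n ∈ Finset.Icc 1 j, D n) / t j ≤ ρ1)
    (hmax_largest : ∀ j ∈ Finset.Icc 1 N,
      (∑ n ∈ Finset.Icc 1 j, D n) / t j = ρ1 → j ≤ j1)
    (hfeas : FeasibleP2b t D N rstar)
    (hopt : ∀ r, FeasibleP2b t D N r →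
      energyP2b B σ2 h t N rstar ≤ energyP2b B σ2 h t N r) :
    ∀ n ∈ Finset.Icc 1 j1, rstar n = ρ1 := by
  obtain ⟨hfnn, hfc⟩ := hfeas
  obtain ⟨hj1_1, hj1_N⟩ := Finset.mem_Icc.mp hj1
  -- monotonicity and positivity facts
  have hmono : ∀ a b : ℕ, a ≤ b → b ≤ N → t a ≤ t b := by
    intro a b hab hbN
    induction b with
    | zero => interval_cases a; rfl
    | succ b ih =>
      rcases Nat.lt_or_ge a (b+1) with hlt | hge
      · exact le_trans (ih (Nat.lt_succ_iff.mp hlt) (Nat.le_of_succ_le hbN))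
          (le_of_lt (ht b (Nat.lt_of_succ_le hbN)))
      · have : a = b + 1 := le_antisymm hab hge
        rw [this]
  have hTpos : ∀ n, 1 ≤ n → n ≤ N → 0 < t n - t (n-1) := by
    intro n h1 h2
    have h3 := ht (n-1) (by omega)
    have hn : n - 1 + 1 = n := by omega
    rw [hn] at h3
    linarith
  have htpos : ∀ j, 1 ≤ j → j ≤ N → 0 < t j := by
    intro j h1 h2
    have h01 : t 0 < t 1 := ht 0 (by omega)
    have := hmono 1 j h1 h2
    rw [ht0] at h01; linarith
  have htj1 := htpos j1 hj1_1 hj1_N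
  -- energy rewriting
  have hE : ∀ r : ℕ → ℝ, energyP2b B σ2 h t N r = σ2 / h * (Gaux B t N r - t N) := by
    intro r
    have h1 : Gaux B t N r - t N
        = ∑ n ∈ Finset.Icc 1 N, (Real.exp (r n / B) - 1) * (t n - t (n-1)) := by
      rw [show t N = ∑ n ∈ Finset.Icc 1 N, (t n - t (n-1)) from (my_telescope t ht0 N).symm]
      unfold Gaux
      rw [← Finset.sum_sub_distrib]
      exact Finset.sum_congr rfl fun n _ => by ring
    unfold energyP2b
    rw [h1, Finset.mul_sum]
    exact Finset.sum_congr rfl fun n _ => by ring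
  have hkey : ∀ r, FeasibleP2b t D N r → Gaux B t N rstar ≤ Gaux B t N r := by
    intro r hr
    have h1 := hopt r hr
    rw [hE rstar, hE r] at h1
    have hpos : 0 < σ2 / h := div_pos hσ2 hh
    have h2 := (mul_le_mul_iff_right₀ hpos).mp h1
    linarith
  -- basic facts about ρ1 and c
  have hρnn : 0 ≤ ρ1 := by
    rw [hρ1]
    exact div_nonneg (Finset.sum_nonneg fun n hn => hD n (Finset.mem_Icc.mpr
      ⟨(Finset.mem_Icc.mp hn).1, le_trans (Finset.mem_Icc.mp hn).2 hj1_N⟩)) htj1.le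
  have hAle : ∀ j, 1 ≤ j → j ≤ N → ∑ n ∈ Finset.Icc 1 j, D n ≤ ρ1 * t j := by
    intro j h1 h2
    have h3 := hmax j (Finset.mem_Icc.mpr ⟨h1, h2⟩)
    have htj := htpos j h1 h2
    rw [div_le_iff₀ htj] at h3
    linarith
  set c : ℝ := (∑ n ∈ Finset.Icc 1 j1, rstar n * (t n - t (n-1))) / t j1 with hcdef
  have hScj1 : ∑ n ∈ Finset.Icc 1 j1, rstar n * (t n - t (n-1)) = c * t j1 := by
    rw [hcdef]; field_simp
  have hcge : ρ1 ≤ c := by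
    have h1 := hfc j1 hj1
    rw [hScj1] at h1
    have h2 : ρ1 * t j1 = ∑ n ∈ Finset.Icc 1 j1, D n := by
      rw [hρ1]; field_simp
    nlinarith
  have hcnn : 0 ≤ c := le_trans hρnn hcge
  -- Step A: rstar is constant (equal to c) on the first j1 epochs
  have hconst : ∀ n ∈ Finset.Icc 1 j1, rstar n = c := by
    by_contra hcon
    push_neg at hcon
    obtain ⟨n0, hn0, hne0⟩ := hcon
    have hnc : ∃ a ∈ Finset.Icc 1 j1, ∃ b ∈ Finset.Icc 1 j1, rstar a ≠ rstar b := by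
      by_contra hall
      push_neg at hall
      have hallc : ∀ n, 1 ≤ n → n ≤ j1 → rstar n = rstar n0 := fun n h1 h2 =>
        hall n (Finset.mem_Icc.mpr ⟨h1, h2⟩) n0 hn0
      have hS : ∑ n ∈ Finset.Icc 1 j1, rstar n * (t n - t (n-1)) = rstar n0 * t j1 :=
        sum_head t ht0 rstar (rstar n0) j1 hallc
      exact hne0 (by rw [hcdef, hS]; field_simp)
    set r' : ℕ → ℝ := fun n => if n ≤ j1 then c else rstar n with hr'
    have hr'a : ∀ n, n ≤ j1 → r' n = c := fun n hn => by
      simp only [hr']; rw [if_pos hn]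
    have hr'b : ∀ n, j1 < n → r' n = rstar n := fun n hn => by
      have ha : ¬ n ≤ j1 := by omega
      simp only [hr']; rw [if_neg ha]
    have hfeas' : FeasibleP2b t D N r' := by
      refine feas_tail t D N rstar hfc j1 r' ?_ ?_ ?_ ?_
      · intro n hn
        by_cases hnj : n ≤ j1
        · rw [hr'a n hnj]; exact hcnn
        · rw [hr'b n (by omega)]; exact hfnn n hn
      · intro j h1 h2 h3
        have hsum : ∑ n ∈ Finset.Icc 1 j, r' n * (t n - t (n-1)) = c * t j :=
          sum_head t ht0 r' c j fun n hn1 hn2 => hr'a n (le_trans hn2 h2)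
        rw [hsum]
        have := hAle j h1 h3
        nlinarith [htpos j h1 h3]
      · intro _
        rw [hScj1]
        exact sum_head t ht0 r' c j1 fun n hn1 hn2 => hr'a n hn2
      · intro n h1 h2
        exact hr'b n (by omega)
    have hjen := my_jensen B hB (Finset.Icc 1 j1) (fun n => t n - t (n-1)) rstar
      (fun n hn => hTpos n (Finset.mem_Icc.mp hn).1 (le_trans (Finset.mem_Icc.mp hn).2 hj1_N))
      (t j1) (my_telescope t ht0 j1).symm htj1 hnc
    have hGlt : Gaux B t N r' < Gaux B t N rstar := by
      refine G_lt_of_head B t N j1 hj1_N rstar r' ?_ ?_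
      · intro n h1 h2
        exact hr'b n (by omega)
      · have hhead : ∑ n ∈ Finset.Icc 1 j1, Real.exp (r' n / B) * (t n - t (n-1))
            = Real.exp (c / B) * t j1 :=
          sum_head t ht0 (fun n => Real.exp (r' n / B)) (Real.exp (c / B)) j1
            fun n hn1 hn2 => by simp only [hr'a n hn2]
        rw [hhead]
        calc Real.exp (c / B) * t j1 = t j1 * Real.exp
              ((∑ n ∈ Finset.Icc 1 j1, rstar n * (t n - t (n-1))) / t j1 / B) := by
              rw [← hcdef]; ring
          _ < _ := hjen
    exact absurd (hkey r' hfeas') (not_le.mpr hGlt)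
  -- Step B: c = ρ1
  have hstep : ∀ k, j1 ≤ k → k + 1 ≤ N → (∀ n, 1 ≤ n → n ≤ k → rstar n = c) →
      ρ1 < c → rstar (k+1) = c := by
    intro k hj1k hk1N hconstk hρc
    by_contra hne
    have hk1 : 1 ≤ k := le_trans hj1_1 hj1k
    have hkN : k ≤ N := by omega
    have hk1mem : k + 1 ∈ Finset.Icc 1 N := Finset.mem_Icc.mpr ⟨by omega, hk1N⟩
    set v : ℝ := rstar (k+1) with hvdef
    have hvnn : 0 ≤ v := hfnn _ hk1mem
    have hTk1pos : 0 < t (k+1) - t k := by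
      have := hTpos (k+1) (by omega) hk1N
      simpa using this
    have htk : 0 < t k := htpos k hk1 hkN
    have htk1 : 0 < t (k+1) := htpos (k+1) (by omega) hk1N
    have hSk : ∑ n ∈ Finset.Icc 1 k, rstar n * (t n - t (n-1)) = c * t k :=
      sum_head t ht0 rstar c k hconstk
    have hSk1 : ∑ n ∈ Finset.Icc 1 (k+1), rstar n * (t n - t (n-1))
        = c * t k + v * (t (k+1) - t k) := by
      rw [Finset.sum_Icc_succ_top (by omega : 1 ≤ k + 1), hSk]
      simp [hvdef]
    rcases lt_or_gt_of_ne hne with hlt2 | hgt2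
    · -- rstar (k+1) < c : shift mass forward
      set Tk1 : ℝ := t (k+1) - t k with hTk1def
      have hMpos : 0 < 1 + t k / Tk1 := by positivity
      set ε : ℝ := min (c - ρ1) ((c - v) / (1 + t k / Tk1)) with hεdef
      have hεpos : 0 < ε := lt_min (by linarith) (div_pos (by linarith) hMpos)
      set δ : ℝ := ε * t k / Tk1 with hδdef
      have hδpos : 0 < δ := div_pos (mul_pos hεpos htk) hTk1pos
      have hε1 : ε ≤ c - ρ1 := min_le_left _ _
      have hε2 : ε * (1 + t k / Tk1) ≤ c - v := by
        have := min_le_right (c - ρ1) ((c - v) / (1 + t k / Tk1))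
        rw [hεdef]
        calc min (c - ρ1) ((c - v) / (1 + t k / Tk1)) * (1 + t k / Tk1)
            ≤ (c - v) / (1 + t k / Tk1) * (1 + t k / Tk1) := by
              exact mul_le_mul_of_nonneg_right this hMpos.le
          _ = c - v := by field_simp
      have hεδ : ε * (1 + t k / Tk1) = ε + δ := by
        rw [hδdef]; field_simp
      have hwu : v + δ ≤ c - ε := by
        rw [hεδ] at hε2; linarith
      have hbal : δ * Tk1 = ε * t k := by
        rw [hδdef]; field_simp
      set r3 : ℕ → ℝ := fun n => if n ≤ k then c - ε else if n = k+1 then v + δ else rstar n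
        with hr3
      have hr3a : ∀ n, n ≤ k → r3 n = c - ε := fun n hn => by
        simp only [hr3]; rw [if_pos hn]
      have hr3k1 : r3 (k+1) = v + δ := by
        have ha : ¬ k + 1 ≤ k := by omega
        simp [hr3, ha]
      have hr3c : ∀ n, k + 1 < n → r3 n = rstar n := fun n hn => by
        have ha : ¬ n ≤ k := by omega
        have hb : ¬ n = k + 1 := by omega
        simp only [hr3]; rw [if_neg ha, if_neg hb]
      have hS3k1 : ∑ n ∈ Finset.Icc 1 (k+1), r3 n * (t n - t (n-1))
          = ∑ n ∈ Finset.Icc 1 (k+1), rstar n * (t n - t (n-1)) := by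
        rw [Finset.sum_Icc_succ_top (by omega : 1 ≤ k + 1), hSk1]
        have hh1 : ∑ n ∈ Finset.Icc 1 k, r3 n * (t n - t (n-1)) = (c - ε) * t k :=
          sum_head t ht0 r3 (c - ε) k fun n h1 h2 => hr3a n h2
        rw [hh1, hr3k1]
        have : (k + 1 : ℕ) - 1 = k := by omega
        rw [this, ← hTk1def]
        nlinarith [hbal]
      have hfeas3 : FeasibleP2b t D N r3 := by
        refine feas_tail t D N rstar hfc (k+1) r3 ?_ ?_ (fun _ => hS3k1) ?_
        · intro n hn
          by_cases h1 : n ≤ k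
          · rw [hr3a n h1]; linarith
          · by_cases h2 : n = k+1
            · rw [h2, hr3k1]; linarith
            · rw [hr3c n (by omega)]; exact hfnn n hn
        · intro j hj1' hjk1 hjN
          rcases le_or_gt j k with hjk | hjk
          · have hsum : ∑ n ∈ Finset.Icc 1 j, r3 n * (t n - t (n-1)) = (c - ε) * t j :=
              sum_head t ht0 r3 (c - ε) j fun n h1 h2 => by
                simp only [hr3, le_trans h2 hjk, if_pos]
            rw [hsum]
            have := hAle j hj1' hjN
            nlinarith [htpos j hj1' hjN]
          · have : j = k + 1 := by omega
            rw [this, hS3k1]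
            exact hfc (k+1) hk1mem
        · intro n h1 h2
          exact hr3c n (by omega)
      -- strict energy decrease
      have hGlt : Gaux B t N r3 < Gaux B t N rstar := by
        refine G_lt_of_head B t N (k+1) hk1N rstar r3 ?_ ?_
        · intro n h1 h2
          exact hr3c n (by omega)
        · have hhead3 : ∑ n ∈ Finset.Icc 1 (k+1), Real.exp (r3 n / B) * (t n - t (n-1))
              = Real.exp ((c - ε) / B) * t k + Real.exp ((v + δ) / B) * Tk1 := by
            rw [Finset.sum_Icc_succ_top (by omega : 1 ≤ k + 1)]
            have hh1 : ∑ n ∈ Finset.Icc 1 k, Real.exp (r3 n / B) * (t n - t (n-1))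
                = Real.exp ((c - ε) / B) * t k :=
              sum_head t ht0 (fun n => Real.exp (r3 n / B)) (Real.exp ((c - ε) / B)) k
                fun n h1 h2 => by simp only [hr3a n h2]
            rw [hh1, hr3k1]
            have : (k + 1 : ℕ) - 1 = k := by omega
            rw [this]
          have hheads : ∑ n ∈ Finset.Icc 1 (k+1), Real.exp (rstar n / B) * (t n - t (n-1))
              = Real.exp (c / B) * t k + Real.exp (v / B) * Tk1 := by
            rw [Finset.sum_Icc_succ_top (by omega : 1 ≤ k + 1)]
            have hh1 : ∑ n ∈ Finset.Icc 1 k, Real.exp (rstar n / B) * (t n - t (n-1))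
                = Real.exp (c / B) * t k :=
              sum_head t ht0 (fun n => Real.exp (rstar n / B)) (Real.exp (c / B)) k
                fun n h1 h2 => by simp only [hconstk n h1 h2]
            rw [hh1, ← hvdef]
            have : (k + 1 : ℕ) - 1 = k := by omega
            rw [this]
          rw [hhead3, hheads]
          -- the exponential estimates
          have hεB : 0 < ε / B := by positivity
          have hδB : 0 ≤ δ / B := by positivity
          have e2 : Real.exp ((v + δ) / B) = Real.exp (v / B) * Real.exp (δ / B) := by
            rw [← Real.exp_add]; congr 1; field_simp
          have f3 : Real.exp ((v + δ) / B) ≤ Real.exp ((c - ε) / B) :=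
            Real.exp_le_exp.mpr ((div_le_div_iff_of_pos_right hB).mpr hwu)
          have g1 : Real.exp ((c - ε) / B) * (ε / B)
              < Real.exp (c / B) - Real.exp ((c - ε) / B) := by
            have hg := exp_gap_lt ((c - ε) / B) (ε / B) hεB
            have hsum : (c - ε) / B + ε / B = c / B := by field_simp; ring
            rwa [hsum] at hg
          have g2 : Real.exp ((v + δ) / B) - Real.exp (v / B)
              ≤ Real.exp ((v + δ) / B) * (δ / B) := by
            have hg := exp_sub_one_le (δ / B) hδB
            nlinarith [Real.exp_pos (v / B)]
          have g3 : (Real.exp ((v + δ) / B) - Real.exp (v / B)) * Tk1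
              ≤ Real.exp ((c - ε) / B) * (δ / B) * Tk1 := by
            have h7 : Real.exp ((v + δ) / B) * (δ / B) ≤ Real.exp ((c - ε) / B) * (δ / B) :=
              mul_le_mul_of_nonneg_right f3 hδB
            nlinarith [hTk1pos]
          have g4 : Real.exp ((c - ε) / B) * (ε / B) * t k
              < (Real.exp (c / B) - Real.exp ((c - ε) / B)) * t k := by
            nlinarith [htk]
          have g5 : Real.exp ((c - ε) / B) * (ε / B) * t k
              = Real.exp ((c - ε) / B) * (δ / B) * Tk1 := by
            have h8 : ε / B * t k = δ / B * Tk1 := by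
              rw [div_mul_eq_mul_div, div_mul_eq_mul_div, hbal]
            rw [mul_assoc, mul_assoc, h8]
          linarith [g3, g4, g5]
      exact absurd (hkey r3 hfeas3) (not_le.mpr hGlt)
    · -- c < rstar (k+1) : average over the first k+1 epochs
      set m : ℝ := (∑ n ∈ Finset.Icc 1 (k+1), rstar n * (t n - t (n-1))) / t (k+1) with hmdef
      have hm : m * t (k+1) = c * t k + v * (t (k+1) - t k) := by
        rw [hmdef, hSk1]; field_simp
      have hmc : c < m := by nlinarith
      set r2 : ℕ → ℝ := fun n => if n ≤ k+1 then m else rstar n with hr2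
      have hr2a : ∀ n, n ≤ k + 1 → r2 n = m := fun n hn => by
        simp only [hr2]; rw [if_pos hn]
      have hr2b : ∀ n, k + 1 < n → r2 n = rstar n := fun n hn => by
        have ha : ¬ n ≤ k + 1 := by omega
        simp only [hr2]; rw [if_neg ha]
      have hS2k1 : ∑ n ∈ Finset.Icc 1 (k+1), r2 n * (t n - t (n-1))
          = ∑ n ∈ Finset.Icc 1 (k+1), rstar n * (t n - t (n-1)) := by
        have hh1 : ∑ n ∈ Finset.Icc 1 (k+1), r2 n * (t n - t (n-1)) = m * t (k+1) :=
          sum_head t ht0 r2 m (k+1) fun n h1 h2 => hr2a n h2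
        rw [hh1, hm, hSk1]
      have hfeas2 : FeasibleP2b t D N r2 := by
        refine feas_tail t D N rstar hfc (k+1) r2 ?_ ?_ (fun _ => hS2k1) ?_
        · intro n hn
          by_cases h1 : n ≤ k+1
          · rw [hr2a n h1]; linarith
          · rw [hr2b n (by omega)]; exact hfnn n hn
        · intro j hj1' hjk1 hjN
          have hsum : ∑ n ∈ Finset.Icc 1 j, r2 n * (t n - t (n-1)) = m * t j :=
            sum_head t ht0 r2 m j fun n h1 h2 => hr2a n (le_trans h2 hjk1)
          rw [hsum]
          have := hAle j hj1' hjN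
          nlinarith [htpos j hj1' hjN]
        · intro n h1 h2
          exact hr2b n (by omega)
      have hnc : ∃ a ∈ Finset.Icc 1 (k+1), ∃ b ∈ Finset.Icc 1 (k+1), rstar a ≠ rstar b := by
        refine ⟨1, Finset.mem_Icc.mpr ⟨le_refl 1, by omega⟩, k+1,
          Finset.mem_Icc.mpr ⟨by omega, le_refl _⟩, ?_⟩
        rw [hconstk 1 (le_refl 1) hk1]
        intro hcv
        exact hne hcv.symm
      have hjen := my_jensen B hB (Finset.Icc 1 (k+1)) (fun n => t n - t (n-1)) rstar
        (fun n hn => hTpos n (Finset.mem_Icc.mp hn).1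
          (le_trans (Finset.mem_Icc.mp hn).2 hk1N))
        (t (k+1)) (my_telescope t ht0 (k+1)).symm htk1 hnc
      have hGlt : Gaux B t N r2 < Gaux B t N rstar := by
        refine G_lt_of_head B t N (k+1) hk1N rstar r2 ?_ ?_
        · intro n h1 h2
          exact hr2b n (by omega)
        · have hhead2 : ∑ n ∈ Finset.Icc 1 (k+1), Real.exp (r2 n / B) * (t n - t (n-1))
              = Real.exp (m / B) * t (k+1) :=
            sum_head t ht0 (fun n => Real.exp (r2 n / B)) (Real.exp (m / B)) (k+1)
              fun n h1 h2 => by simp only [hr2a n h2]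
          rw [hhead2]
          calc Real.exp (m / B) * t (k+1)
              = t (k+1) * Real.exp
                ((∑ n ∈ Finset.Icc 1 (k+1), rstar n * (t n - t (n-1))) / t (k+1) / B) := by
                rw [← hmdef]; ring
            _ < _ := hjen
      exact absurd (hkey r2 hfeas2) (not_le.mpr hGlt)
  -- extend constancy to all of [1, N] when ρ1 < c
  have hextend : ρ1 < c → ∀ n, 1 ≤ n → n ≤ N → rstar n = c := by
    intro hρc
    have hind : ∀ k, j1 ≤ k → k ≤ N → ∀ n, 1 ≤ n → n ≤ k → rstar n = c := by
      intro k
      induction k with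
      | zero => intro hk; omega
      | succ k ih =>
        intro hjk hkN n h1 h2
        rcases Nat.lt_or_ge j1 (k+1) with hlt' | hge
        · have hj1k : j1 ≤ k := by omega
          have hconstk := ih hj1k (by omega)
          rcases Nat.lt_or_ge n (k+1) with hn' | hn'
          · exact hconstk n h1 (by omega)
          · have : n = k + 1 := by omega
            rw [this]
            exact hstep k hj1k hkN hconstk hρc
        · exact hconst n (Finset.mem_Icc.mpr ⟨h1, le_trans h2 hge⟩)
    intro n h1 h2
    exact hind N hj1_N le_rfl n h1 h2
  -- conclude c = ρ1
  have hceq : c = ρ1 := by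
    by_contra hne
    have hρc : ρ1 < c := lt_of_le_of_ne hcge (Ne.symm hne)
    have hall := hextend hρc
    set r0 : ℕ → ℝ := fun n => if n ≤ N then ρ1 else rstar n with hr0
    have hr0a : ∀ n, n ≤ N → r0 n = ρ1 := fun n hn => by
      simp only [hr0]; rw [if_pos hn]
    have hfeas0 : FeasibleP2b t D N r0 := by
      refine feas_tail t D N rstar hfc N r0 ?_ ?_ (fun hNN => absurd hNN (lt_irrefl N)) ?_
      · intro n hn
        rw [hr0a n (Finset.mem_Icc.mp hn).2]; exact hρnn
      · intro j h1 h2 h3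
        have hsum : ∑ n ∈ Finset.Icc 1 j, r0 n * (t n - t (n-1)) = ρ1 * t j :=
          sum_head t ht0 r0 ρ1 j fun n hn1 hn2 => hr0a n (le_trans hn2 h2)
        rw [hsum]
        exact hAle j h1 h3
      · intro n h1 h2
        omega
    have htN : 0 < t N := htpos N hN le_rfl
    have hGlt : Gaux B t N r0 < Gaux B t N rstar := by
      unfold Gaux
      rw [sum_head t ht0 (fun n => Real.exp (r0 n / B)) (Real.exp (ρ1 / B)) N
            (fun n h1 h2 => by simp only [hr0a n h2]),
          sum_head t ht0 (fun n => Real.exp (rstar n / B)) (Real.exp (c / B)) N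
            (fun n h1 h2 => by simp only [hall n h1 h2])]
      have : Real.exp (ρ1 / B) < Real.exp (c / B) :=
        Real.exp_lt_exp.mpr ((div_lt_div_iff_of_pos_right hB).mpr hρc)
      nlinarith
    exact absurd (hkey r0 hfeas0) (not_le.mpr hGlt)
  intro n hn
  rw [hconst n hn, hceq]
end

section
/- Non-increasing rates also hold after objectives merging: If (D*, r*) is an optimal solution of the merged problem (P3) with weight α > 0, then the optimal rates are monotonically non-increasing: r*_{n+1} ≤ r*_n for every n = 1, …, N−1. -/
lemma exp_avg_lt {B Tn Tm rn rm : ℝ} (hB : 0 < B) (hTn : 0 < Tn) (hTm : 0 < Tm)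
    (hlt : rn < rm) :
    Real.exp (((rn * Tn + rm * Tm) / (Tn + Tm)) / B) * (Tn + Tm)
      < Real.exp (rn / B) * Tn + Real.exp (rm / B) * Tm := by
  have hS : 0 < Tn + Tm := by linarith
  have hne : rn / B ≠ rm / B := ne_of_lt (by gcongr)
  have hw1 : 0 < Tn / (Tn + Tm) := div_pos hTn hS
  have hw2 : 0 < Tm / (Tn + Tm) := div_pos hTm hS
  have hwsum : Tn / (Tn + Tm) + Tm / (Tn + Tm) = 1 := by field_simp
  have hconv := strictConvexOn_exp.2 (Set.mem_univ (rn / B)) (Set.mem_univ (rm / B))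
    hne hw1 hw2 hwsum
  simp only [smul_eq_mul] at hconv
  have harg : Tn / (Tn + Tm) * (rn / B) + Tm / (Tn + Tm) * (rm / B)
      = ((rn * Tn + rm * Tm) / (Tn + Tm)) / B := by
    field_simp
  rw [harg] at hconv
  have := mul_lt_mul_of_pos_right hconv hS
  have hrhs : (Tn / (Tn + Tm) * Real.exp (rn / B) + Tm / (Tn + Tm) * Real.exp (rm / B))
      * (Tn + Tm) = Real.exp (rn / B) * Tn + Real.exp (rm / B) * Tm := by
    field_simp
  linarith [hrhs ▸ this]

noncomputable def mergedObjective (N : ℕ) (t : ℕ → ℝ) (B σ2 h α : ℝ)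
    (a b d β c : ℕ → ℝ) (Dv r : ℕ → ℝ) : ℝ :=
  α * ∑ n ∈ Finset.Icc 1 N, (Real.exp (r n / B) - 1) * (σ2 / h) * (t n - t (n - 1))
    + ∑ n ∈ Finset.Icc 1 N, β n * a n * ((Dv n / d n + c n) ^ (-(b n)))

def FeasibleP3 (N : ℕ) (t : ℕ → ℝ) (D : ℝ) (Dv r : ℕ → ℝ) : Prop :=
  (∀ n ∈ Finset.Icc 1 N, 0 ≤ Dv n) ∧
  (∀ n ∈ Finset.Icc 1 N, 0 ≤ r n) ∧
  (∀ j ∈ Finset.Icc 1 N,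
    ∑ n ∈ Finset.Icc 1 j, Dv n ≤ ∑ n ∈ Finset.Icc 1 j, r n * (t n - t (n - 1))) ∧
  (∑ n ∈ Finset.Icc 1 N, Dv n ≤ D)

/-- Non-increasing rates also hold after objectives merging: if `(D*, r*)` is an
optimal solution of the merged problem (P3) with weight `α > 0`, then
`r*_{n+1} ≤ r*_n` for every `n = 1, …, N−1`. -/
theorem merged_optimal_rates_nonincreasing
    (N : ℕ) (t : ℕ → ℝ) (B σ2 h D α : ℝ) (a b d β c : ℕ → ℝ)
    (hB : 0 < B) (hσ2 : 0 < σ2) (hh : 0 < h) (hD : 0 < D) (hα : 0 < α)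
    (ht0 : t 0 = 0) (ht : ∀ n, n < N → t n < t (n + 1))
    (ha : ∀ n ∈ Finset.Icc 1 N, 0 < a n)
    (hb : ∀ n ∈ Finset.Icc 1 N, 0 < b n)
    (hd : ∀ n ∈ Finset.Icc 1 N, 0 < d n)
    (hβ : ∀ n ∈ Finset.Icc 1 N, 0 < β n)
    (hc : ∀ n ∈ Finset.Icc 1 N, 0 < c n)
    (Dstar rstar : ℕ → ℝ)
    (hfeas : FeasibleP3 N t D Dstar rstar)
    (hopt : ∀ Dv r, FeasibleP3 N t D Dv r →
      mergedObjective N t B σ2 h α a b d β c Dstar rstar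
        ≤ mergedObjective N t B σ2 h α a b d β c Dv r) :
    ∀ n, 1 ≤ n → n + 1 ≤ N → rstar (n + 1) ≤ rstar n := by
  intro n hn1 hnN
  by_contra hcon
  push_neg at hcon
  obtain ⟨hDnn, hrnn, hcons, hbudget⟩ := hfeas
  have hnIcc : n ∈ Finset.Icc 1 N := Finset.mem_Icc.mpr ⟨hn1, by omega⟩
  have hmIcc : n + 1 ∈ Finset.Icc 1 N := Finset.mem_Icc.mpr ⟨by omega, hnN⟩
  have hsub : n + 1 - 1 = n := by omega
  have hTnpos : 0 < t n - t (n - 1) := by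
    have h1 : t (n - 1) < t (n - 1 + 1) := ht (n - 1) (by omega)
    have h2 : n - 1 + 1 = n := by omega
    rw [h2] at h1; linarith
  have hTmpos : 0 < t (n + 1) - t n := by
    have := ht n (by omega); linarith
  have hSpos : 0 < (t n - t (n - 1)) + (t (n + 1) - t n) := by linarith
  set rb : ℝ := (rstar n * (t n - t (n - 1)) + rstar (n + 1) * (t (n + 1) - t n))
      / ((t n - t (n - 1)) + (t (n + 1) - t n)) with hrbdef
  have hrn0 : 0 ≤ rstar n := hrnn n hnIcc
  have hrm0 : 0 ≤ rstar (n + 1) := hrnn (n + 1) hmIcc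
  have hrb0 : 0 ≤ rb := by
    apply div_nonneg _ (le_of_lt hSpos)
    nlinarith
  have hrbge : rstar n ≤ rb := by
    rw [hrbdef, le_div_iff₀ hSpos]; nlinarith
  have hkey : rb * ((t n - t (n - 1)) + (t (n + 1) - t n))
      = rstar n * (t n - t (n - 1)) + rstar (n + 1) * (t (n + 1) - t n) := by
    rw [hrbdef]; exact div_mul_cancel₀ _ (ne_of_gt hSpos)
  set r' : ℕ → ℝ := fun k => if k = n ∨ k = n + 1 then rb else rstar k with hr'def
  have hr'eq : ∀ k, k ≠ n → k ≠ n + 1 → r' k = rstar k := by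
    intro k h1 h2; simp [hr'def, h1, h2]
  have hr'n : r' n = rb := by simp [hr'def]
  have hr'm : r' (n + 1) = rb := by simp [hr'def]
  have hsplit : ∀ (s : Finset ℕ), n ∈ s → (n + 1) ∈ s → ∀ f : ℕ → ℝ,
      ∑ k ∈ s, f k = f n + f (n + 1) + ∑ k ∈ (s.erase n).erase (n + 1), f k := by
    intro s hs1 hs2 f
    rw [← Finset.add_sum_erase _ f hs1,
        ← Finset.add_sum_erase _ f (Finset.mem_erase.mpr ⟨by omega, hs2⟩)]
    ring
  -- partial sums only increase
  have hmono : ∀ j, ∑ k ∈ Finset.Icc 1 j, rstar k * (t k - t (k - 1))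
      ≤ ∑ k ∈ Finset.Icc 1 j, r' k * (t k - t (k - 1)) := by
    intro j
    rcases lt_or_ge j n with hj | hj
    · apply le_of_eq
      apply Finset.sum_congr rfl
      intro k hk
      have hk' := Finset.mem_Icc.mp hk
      rw [hr'eq k (by omega) (by omega)]
    · rcases eq_or_lt_of_le hj with hj' | hj'
      · -- j = n
        have hnj : n ∈ Finset.Icc 1 j := Finset.mem_Icc.mpr ⟨hn1, hj⟩
        rw [← Finset.add_sum_erase _ _ hnj, ← Finset.add_sum_erase _ _ hnj]
        have hrest : ∑ k ∈ (Finset.Icc 1 j).erase n, rstar k * (t k - t (k - 1))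
            = ∑ k ∈ (Finset.Icc 1 j).erase n, r' k * (t k - t (k - 1)) := by
          apply Finset.sum_congr rfl
          intro k hk
          have h1 := Finset.mem_erase.mp hk
          have h2 := Finset.mem_Icc.mp h1.2
          rw [hr'eq k h1.1 (by omega)]
        rw [hr'n, ← hrest]
        have : rstar n * (t n - t (n - 1)) ≤ rb * (t n - t (n - 1)) := by nlinarith
        linarith
      · -- j > n, so n, n+1 ∈ Icc 1 j
        have hnj : n ∈ Finset.Icc 1 j := Finset.mem_Icc.mpr ⟨hn1, hj⟩
        have hmj : n + 1 ∈ Finset.Icc 1 j := Finset.mem_Icc.mpr ⟨by omega, by omega⟩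
        rw [hsplit _ hnj hmj, hsplit _ hnj hmj]
        have hrest : ∑ k ∈ ((Finset.Icc 1 j).erase n).erase (n + 1),
              rstar k * (t k - t (k - 1))
            = ∑ k ∈ ((Finset.Icc 1 j).erase n).erase (n + 1), r' k * (t k - t (k - 1)) := by
          apply Finset.sum_congr rfl
          intro k hk
          have h1 := Finset.mem_erase.mp hk
          have h2 := Finset.mem_erase.mp h1.2
          rw [hr'eq k h2.1 h1.1]
        rw [hr'n, hr'm, ← hrest, hsub]
        linarith [hkey]
  have hfeas' : FeasibleP3 N t D Dstar r' := by
    refine ⟨hDnn, ?_, ?_, hbudget⟩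
    · intro k hk
      by_cases hknm : k = n ∨ k = n + 1
      · simp only [hr'def, hknm, if_true]; exact hrb0
      · push_neg at hknm
        rw [hr'eq k hknm.1 hknm.2]; exact hrnn k hk
    · intro j hj
      exact le_trans (hcons j hj) (hmono j)
  -- strict decrease of the energy sum
  have hE : ∑ k ∈ Finset.Icc 1 N, (Real.exp (r' k / B) - 1) * (σ2 / h) * (t k - t (k - 1))
      < ∑ k ∈ Finset.Icc 1 N, (Real.exp (rstar k / B) - 1) * (σ2 / h) * (t k - t (k - 1)) := by
    rw [hsplit _ hnIcc hmIcc, hsplit _ hnIcc hmIcc]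
    have hrest : ∑ k ∈ ((Finset.Icc 1 N).erase n).erase (n + 1),
          (Real.exp (r' k / B) - 1) * (σ2 / h) * (t k - t (k - 1))
        = ∑ k ∈ ((Finset.Icc 1 N).erase n).erase (n + 1),
          (Real.exp (rstar k / B) - 1) * (σ2 / h) * (t k - t (k - 1)) := by
      apply Finset.sum_congr rfl
      intro k hk
      have h1 := Finset.mem_erase.mp hk
      have h2 := Finset.mem_erase.mp h1.2
      rw [hr'eq k h2.1 h1.1]
    rw [hr'n, hr'm, hrest, hsub]
    have hconv : Real.exp (rb / B) * ((t n - t (n - 1)) + (t (n + 1) - t n))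
        < Real.exp (rstar n / B) * (t n - t (n - 1))
          + Real.exp (rstar (n + 1) / B) * (t (n + 1) - t n) := by
      rw [hrbdef]
      exact exp_avg_lt hB hTnpos hTmpos hcon
    have hσh : 0 < σ2 / h := div_pos hσ2 hh
    nlinarith [hconv, hσh]
  have hlt : mergedObjective N t B σ2 h α a b d β c Dstar r'
      < mergedObjective N t B σ2 h α a b d β c Dstar rstar := by
    unfold mergedObjective
    have := mul_lt_mul_of_pos_left hE hα
    linarith
  exact absurd (hopt Dstar r' hfeas') (not_le.mpr hlt)
end

section
/- Lemma 3 (sub-optimality of data buffer overflow): Let D_max > 0, D_0 = 0, and 0 ≤ D_n ≤ D_max for n = 1, …, N. Given a rate vector r with r_n ≥ 0, define the clipped delivered-data curve Ĉ_0 = 0 and Ĉ_j = min(Ĉ_{j−1} + r_j T_j, ∑_{n=0}^{j−1} D_n + D_max) for j = 1, …, N. Suppose the policy effectively delivers the required data, Ĉ_j ≥ ∑_{n=1}^j D_n for all j, and suppose a buffer overflow occurs at some epoch j₀, i.e., Ĉ_{j₀−1} + r_{j₀} T_{j₀} > ∑_{n=0}^{j₀−1} D_n + D_max. Then the rate vector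 r' defined by r'_j = (Ĉ_j − Ĉ_{j−1})/T_j satisfies both the transmission constraints ∑_{n=1}^j r'_n T_n ≥ ∑_{n=1}^j D_n and the buffer constraints ∑_{n=1}^j r'_n T_n ≤ ∑_{n=0}^{j−1} D_n + D_max for every j, and its energy is strictly smaller: E(r') < E(r). Hence any policy yielding a data buffer overflow is strictly sub-optimal. -/
/-- Energy consumption of a rate vector `r` over the `N` epochs determined by the
task instants `t`, with epoch lengths `T n = t n − t (n−1)`. -/
noncomputable def energyLB (B σ2 h : ℝ) (t : ℕ → ℝ) (N : ℕ) (r : ℕ → ℝ) : ℝ :=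
  ∑ n ∈ Finset.Icc 1 N, (Real.exp (r n / B) - 1) * (σ2 / h) * (t n - t (n - 1))

/-- Lemma 3 (sub-optimality of data buffer overflow): if a rate vector `r` causes a
data buffer overflow at some epoch `j₀` (its delivered-data curve `C`, clipped at the
buffer capacity, still meets all the requirements), then the clipped policy
`r'_j = (C_j − C_{j−1})/T_j` is feasible for the limited-buffer problem (it satisfies
both the transmission and the buffer constraints) and consumes strictly less energy. -/
theorem buffer_overflow_suboptimal
    (N : ℕ) (t D r C : ℕ → ℝ) (B σ2 h Dmax : ℝ)
    (hB : 0 < B) (hσ2 : 0 < σ2) (hh : 0 < h) (hDmax : 0 < Dmax)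
    (ht0 : t 0 = 0) (ht : ∀ n, n < N → t n < t (n + 1))
    (hD0 : D 0 = 0)
    (hD : ∀ n ∈ Finset.Icc 1 N, 0 ≤ D n ∧ D n ≤ Dmax)
    (hr : ∀ n ∈ Finset.Icc 1 N, 0 ≤ r n)
    -- clipped delivered-data curve
    (hC0 : C 0 = 0)
    (hC : ∀ j ∈ Finset.Icc 1 N,
      C j = min (C (j - 1) + r j * (t j - t (j - 1)))
              (∑ n ∈ Finset.range j, D n + Dmax))
    -- the policy effectively delivers the required data
    (hdeliver : ∀ j ∈ Finset.Icc 1 N, ∑ n ∈ Finset.Icc 1 j, D n ≤ C j)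
    -- overflow occurs at epoch j₀
    (j0 : ℕ) (hj0 : j0 ∈ Finset.Icc 1 N)
    (hoverflow : ∑ n ∈ Finset.range j0, D n + Dmax
      < C (j0 - 1) + r j0 * (t j0 - t (j0 - 1))) :
    (∀ j ∈ Finset.Icc 1 N,
      ∑ n ∈ Finset.Icc 1 j, D n
        ≤ ∑ n ∈ Finset.Icc 1 j, (C n - C (n - 1)) / (t n - t (n - 1)) * (t n - t (n - 1))) ∧
    (∀ j ∈ Finset.Icc 1 N,
      ∑ n ∈ Finset.Icc 1 j, (C n - C (n - 1)) / (t n - t (n - 1)) * (t n - t (n - 1))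
        ≤ ∑ n ∈ Finset.range j, D n + Dmax) ∧
    energyLB B σ2 h t N (fun n => (C n - C (n - 1)) / (t n - t (n - 1)))
      < energyLB B σ2 h t N r := by
  have hT : ∀ n ∈ Finset.Icc 1 N, 0 < t n - t (n - 1) := by
    intro n hn
    simp only [Finset.mem_Icc] at hn
    have h1 := ht (n - 1) (by omega)
    have hn1 : n - 1 + 1 = n := by omega
    rw [hn1] at h1
    linarith
  have htel : ∀ j, ∑ n ∈ Finset.Icc 1 j, (C n - C (n - 1)) = C j - C 0 := by
    intro j
    induction j with
    | zero => simp
    | succ k ih =>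
      rw [Finset.sum_Icc_succ_top (by omega : 1 ≤ k + 1), ih]
      simp only [Nat.add_sub_cancel]
      ring
  have hsum : ∀ j, j ≤ N →
      ∑ n ∈ Finset.Icc 1 j, (C n - C (n - 1)) / (t n - t (n - 1)) * (t n - t (n - 1)) = C j := by
    intro j hj
    have hcongr : ∀ n ∈ Finset.Icc 1 j,
        (C n - C (n - 1)) / (t n - t (n - 1)) * (t n - t (n - 1)) = C n - C (n - 1) := by
      intro n hn
      simp only [Finset.mem_Icc] at hn
      exact div_mul_cancel₀ _ (ne_of_gt (hT n (by simp only [Finset.mem_Icc]; omega)))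
    rw [Finset.sum_congr rfl hcongr, htel, hC0, sub_zero]
  have hle : ∀ n ∈ Finset.Icc 1 N, C n - C (n - 1) ≤ r n * (t n - t (n - 1)) := by
    intro n hn
    have := hC n hn
    have h2 : C n ≤ C (n - 1) + r n * (t n - t (n - 1)) := this ▸ min_le_left _ _
    linarith
  refine ⟨?_, ?_, ?_⟩
  · intro j hj
    simp only [Finset.mem_Icc] at hj
    rw [hsum j hj.2]
    exact hdeliver j (by simp only [Finset.mem_Icc]; omega)
  · intro j hj
    simp only [Finset.mem_Icc] at hj
    rw [hsum j hj.2]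
    have := hC j (by simp only [Finset.mem_Icc]; omega)
    exact this ▸ min_le_right _ _
  · unfold energyLB
    apply Finset.sum_lt_sum
    · intro n hn
      have hTn := hT n hn
      have hrn : (C n - C (n - 1)) / (t n - t (n - 1)) ≤ r n :=
        (div_le_iff₀ hTn).2 (hle n hn)
      have : Real.exp ((C n - C (n - 1)) / (t n - t (n - 1)) / B) ≤ Real.exp (r n / B) :=
        Real.exp_le_exp.2 (div_le_div_of_nonneg_right hrn hB.le)
      have h1 : Real.exp ((C n - C (n - 1)) / (t n - t (n - 1)) / B) - 1
          ≤ Real.exp (r n / B) - 1 := by linarith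
      apply mul_le_mul_of_nonneg_right _ (le_of_lt hTn)
      exact mul_le_mul_of_nonneg_right h1 (le_of_lt (div_pos hσ2 hh))
    · refine ⟨j0, hj0, ?_⟩
      have hTj := hT j0 hj0
      have hCj := hC j0 hj0
      have hlt : C j0 < C (j0 - 1) + r j0 * (t j0 - t (j0 - 1)) := by
        calc C j0 ≤ ∑ n ∈ Finset.range j0, D n + Dmax := hCj ▸ min_le_right _ _
          _ < _ := hoverflow
      have hrlt : (C j0 - C (j0 - 1)) / (t j0 - t (j0 - 1)) < r j0 :=
        (div_lt_iff₀ hTj).2 (by linarith)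
      have hexp : Real.exp ((C j0 - C (j0 - 1)) / (t j0 - t (j0 - 1)) / B)
          < Real.exp (r j0 / B) :=
        Real.exp_lt_exp.2 (div_lt_div_of_pos_right hrlt hB)
      apply mul_lt_mul_of_pos_right _ hTj
      apply mul_lt_mul_of_pos_right _ (div_pos hσ2 hh)
      linarith
end

section
/- Lemma 4 (rate changing condition in the limited-buffer problem): Let r* be an optimal rate vector for the limited-buffer energy-minimization problem. If the transmission rate changes at instant t_j for some j ∈ {1, …, N−1}, i.e., r*_j ≠ r*_{j+1}, then at t_j the data buffer is either empty or full: either ∑_{n=1}^j r*_n T_n = ∑_{n=1}^j D_n or ∑_{n=1}^j r*_n T_n = ∑_{n=0}^{j−1} D_n + D_max. -/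
/-- Feasibility for the limited-buffer problem: nonnegative rates satisfying both
the transmission constraints `∑_{n=1}^j r_n T_n ≥ ∑_{n=1}^j D_n` and the buffer
constraints `∑_{n=1}^j r_n T_n ≤ ∑_{n=0}^{j−1} D_n + D_max`, for all `j = 1, …, N`. -/
def FeasibleLB (t D : ℕ → ℝ) (N : ℕ) (Dmax : ℝ) (r : ℕ → ℝ) : Prop :=
  (∀ n ∈ Finset.Icc 1 N, 0 ≤ r n) ∧
  (∀ j ∈ Finset.Icc 1 N,
    ∑ n ∈ Finset.Icc 1 j, D n ≤ ∑ n ∈ Finset.Icc 1 j, r n * (t n - t (n - 1))) ∧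
  (∀ j ∈ Finset.Icc 1 N,
    ∑ n ∈ Finset.Icc 1 j, r n * (t n - t (n - 1)) ≤ ∑ n ∈ Finset.range j, D n + Dmax)

lemma exp_pert_lt (B T1 T2 a b ε : ℝ) (hB : 0 < B) (hT1 : 0 < T1) (hT2 : 0 < T2)
    (hε : 0 < ε) (hord : b + ε / T2 < a - ε / T1) :
    Real.exp ((a - ε / T1) / B) * T1 + Real.exp ((b + ε / T2) / B) * T2
      < Real.exp (a / B) * T1 + Real.exp (b / B) * T2 := by
  set d1 := ε / T1 with hd1
  set d2 := ε / T2 with hd2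
  have hd1pos : 0 < d1 := div_pos hε hT1
  have hd2pos : 0 < d2 := div_pos hε hT2
  have hd1T : d1 * T1 = ε := div_mul_cancel₀ ε hT1.ne'
  have hd2T : d2 * T2 = ε := div_mul_cancel₀ ε hT2.ne'
  have hx : Real.exp (a / B) = Real.exp ((a - d1) / B) * Real.exp (d1 / B) := by
    rw [← Real.exp_add]; ring_nf
  have hv : Real.exp (b / B) = Real.exp ((b + d2) / B) * Real.exp (-(d2 / B)) := by
    rw [← Real.exp_add]; ring_nf
  have e1 : d1 / B + 1 < Real.exp (d1 / B) :=
    Real.add_one_lt_exp (div_pos hd1pos hB).ne'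
  have e2 : -(d2 / B) + 1 < Real.exp (-(d2 / B)) :=
    Real.add_one_lt_exp (neg_ne_zero.mpr (div_pos hd2pos hB).ne')
  have hmono : Real.exp ((b + d2) / B) < Real.exp ((a - d1) / B) :=
    Real.exp_lt_exp.mpr (by gcongr)
  set y := Real.exp ((a - d1) / B) with hy
  set u := Real.exp ((b + d2) / B) with hu
  have hypos : 0 < y := Real.exp_pos _
  have hupos : 0 < u := Real.exp_pos _
  have q1 : y * T1 * (d1 / B + 1) < Real.exp (a / B) * T1 := by
    rw [hx]; nlinarith [mul_lt_mul_of_pos_left e1 (mul_pos hypos hT1)]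
  have q2 : u * T2 * (-(d2 / B) + 1) < Real.exp (b / B) * T2 := by
    rw [hv]; nlinarith [mul_lt_mul_of_pos_left e2 (mul_pos hupos hT2)]
  have r1 : y * T1 * (d1 / B + 1) = y * ε / B + y * T1 := by
    have h' : y * T1 * (d1 / B + 1) = y * (d1 * T1) / B + y * T1 := by ring
    rw [h', hd1T]
  have r2 : u * T2 * (-(d2 / B) + 1) = -(u * ε / B) + u * T2 := by
    have h' : u * T2 * (-(d2 / B) + 1) = -(u * (d2 * T2) / B) + u * T2 := by ring
    rw [h', hd2T]
  have r3 : u * ε / B < y * ε / B := by gcongr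
  linarith

lemma perturb_contra
    (N : ℕ) (t D rstar : ℕ → ℝ) (B σ2 h Dmax : ℝ)
    (hB : 0 < B) (hσ2 : 0 < σ2) (hh : 0 < h)
    (hfeas : FeasibleLB t D N Dmax rstar)
    (hopt : ∀ r, FeasibleLB t D N Dmax r →
      energyLB B σ2 h t N rstar ≤ energyLB B σ2 h t N r)
    (j : ℕ) (hj1 : 1 ≤ j) (hjN : j + 1 ≤ N)
    (a' b' δ : ℝ)
    (ha' : 0 ≤ a') (hb' : 0 ≤ b')
    (hc1 : (a' - rstar j) * (t j - t (j - 1)) = δ)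
    (hc2 : (b' - rstar (j + 1)) * (t (j + 1) - t j) = -δ)
    (htrj : ∑ n ∈ Finset.Icc 1 j, D n
      ≤ ∑ n ∈ Finset.Icc 1 j, rstar n * (t n - t (n - 1)) + δ)
    (hbufj : ∑ n ∈ Finset.Icc 1 j, rstar n * (t n - t (n - 1)) + δ
      ≤ ∑ n ∈ Finset.range j, D n + Dmax)
    (hkey : Real.exp (a' / B) * (t j - t (j - 1)) + Real.exp (b' / B) * (t (j + 1) - t j)
      < Real.exp (rstar j / B) * (t j - t (j - 1))
        + Real.exp (rstar (j + 1) / B) * (t (j + 1) - t j)) :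
    False := by
  obtain ⟨hr0, htr, hbuf⟩ := hfeas
  have hjmem : j ∈ Finset.Icc 1 N := Finset.mem_Icc.mpr ⟨hj1, by omega⟩
  have hj1mem : j + 1 ∈ Finset.Icc 1 N := Finset.mem_Icc.mpr ⟨by omega, hjN⟩
  set r' : ℕ → ℝ := fun n => if n = j then a' else if n = j + 1 then b' else rstar n with hr'
  have hsub : j + 1 - 1 = j := by omega
  have hptR : ∀ n, r' n * (t n - t (n - 1))
      = rstar n * (t n - t (n - 1)) + (if n = j then δ else 0)
        + (if n = j + 1 then -δ else 0) := by
    intro n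
    by_cases h1 : n = j
    · rw [h1, if_pos rfl, if_neg (show ¬ j = j + 1 by omega)]
      have hv : r' j = a' := by simp [hr']
      rw [hv]
      linarith [hc1]
    · by_cases h2 : n = j + 1
      · rw [h2, if_neg (show ¬ j + 1 = j by omega), if_pos rfl]
        have hv : r' (j + 1) = b' := by simp [hr', h1]
        rw [hv, show j + 1 - 1 = j from rfl]
        linarith [hc2]
      · simp [hr', h1, h2]
  have hsumR : ∀ k, ∑ n ∈ Finset.Icc 1 k, r' n * (t n - t (n - 1))
      = ∑ n ∈ Finset.Icc 1 k, rstar n * (t n - t (n - 1))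
        + (if j ∈ Finset.Icc 1 k then δ else 0)
        + (if j + 1 ∈ Finset.Icc 1 k then -δ else 0) := by
    intro k
    simp only [hptR, Finset.sum_add_distrib, Finset.sum_ite_eq']
  have hfeas' : FeasibleLB t D N Dmax r' := by
    refine ⟨?_, ?_, ?_⟩
    · intro n hn
      by_cases h1 : n = j
      · simp [hr', h1, ha']
      · by_cases h2 : n = j + 1
        · simp [hr', h1, h2, hb']
        · simpa [hr', h1, h2] using hr0 n hn
    · intro k hk
      rw [hsumR]
      have hk' := Finset.mem_Icc.mp hk
      by_cases hA : j + 1 ≤ k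
      · rw [if_pos (Finset.mem_Icc.mpr ⟨hj1, by omega⟩),
          if_pos (Finset.mem_Icc.mpr ⟨by omega, hA⟩)]
        linarith [htr k hk]
      · by_cases hB' : j ≤ k
        · have hkj : k = j := by omega
          subst hkj
          rw [if_pos (Finset.mem_Icc.mpr ⟨hj1, le_refl _⟩),
            if_neg (by simp only [Finset.mem_Icc, not_and, not_le]; omega)]
          linarith [htrj]
        · rw [if_neg (by simp only [Finset.mem_Icc, not_and, not_le]; omega),
            if_neg (by simp only [Finset.mem_Icc, not_and, not_le]; omega)]
          linarith [htr k hk]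
    · intro k hk
      rw [hsumR]
      have hk' := Finset.mem_Icc.mp hk
      by_cases hA : j + 1 ≤ k
      · rw [if_pos (Finset.mem_Icc.mpr ⟨hj1, by omega⟩),
          if_pos (Finset.mem_Icc.mpr ⟨by omega, hA⟩)]
        linarith [hbuf k hk]
      · by_cases hB' : j ≤ k
        · have hkj : k = j := by omega
          subst hkj
          rw [if_pos (Finset.mem_Icc.mpr ⟨hj1, le_refl _⟩),
            if_neg (by simp only [Finset.mem_Icc, not_and, not_le]; omega)]
          linarith [hbufj]
        · rw [if_neg (by simp only [Finset.mem_Icc, not_and, not_le]; omega),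
            if_neg (by simp only [Finset.mem_Icc, not_and, not_le]; omega)]
          linarith [hbuf k hk]
  have hptE : ∀ n, (Real.exp (r' n / B) - 1) * (σ2 / h) * (t n - t (n - 1))
      = (Real.exp (rstar n / B) - 1) * (σ2 / h) * (t n - t (n - 1))
        + (if n = j then
            (Real.exp (a' / B) - Real.exp (rstar j / B)) * (σ2 / h) * (t j - t (j - 1)) else 0)
        + (if n = j + 1 then
            (Real.exp (b' / B) - Real.exp (rstar (j + 1) / B)) * (σ2 / h) * (t (j + 1) - t j)
          else 0) := by
    intro n
    by_cases h1 : n = j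
    · rw [h1, if_pos rfl, if_neg (show ¬ j = j + 1 by omega)]
      have hv : r' j = a' := by simp [hr']
      rw [hv]
      ring
    · by_cases h2 : n = j + 1
      · rw [h2, if_neg (show ¬ j + 1 = j by omega), if_pos rfl]
        have hv : r' (j + 1) = b' := by simp [hr', h1]
        rw [hv, show j + 1 - 1 = j from rfl]
        ring
      · simp [hr', h1, h2]
  have hE : energyLB B σ2 h t N r'
      = energyLB B σ2 h t N rstar
        + (Real.exp (a' / B) - Real.exp (rstar j / B)) * (σ2 / h) * (t j - t (j - 1))
        + (Real.exp (b' / B) - Real.exp (rstar (j + 1) / B)) * (σ2 / h) * (t (j + 1) - t j) := by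
    unfold energyLB
    simp only [hptE, Finset.sum_add_distrib, Finset.sum_ite_eq', hjmem, hj1mem, if_pos]
  have hσh : 0 < σ2 / h := div_pos hσ2 hh
  have hneg : (Real.exp (a' / B) - Real.exp (rstar j / B)) * (σ2 / h) * (t j - t (j - 1))
      + (Real.exp (b' / B) - Real.exp (rstar (j + 1) / B)) * (σ2 / h) * (t (j + 1) - t j)
      < 0 := by nlinarith [hkey, hσh]
  have := hopt r' hfeas'
  linarith [hE, this, hneg]

/-- Lemma 4 (rate changing condition in the limited-buffer problem): under an optimal
rate vector, if the transmission rate changes at the instant `t_j`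
(`r*_j ≠ r*_{j+1}`), then at `t_j` the data buffer is either empty or full. -/
theorem rate_change_condition_limited_buffer
    (N : ℕ) (t D rstar : ℕ → ℝ) (B σ2 h Dmax : ℝ)
    (hB : 0 < B) (hσ2 : 0 < σ2) (hh : 0 < h) (hDmax : 0 < Dmax)
    (ht0 : t 0 = 0) (ht : ∀ n, n < N → t n < t (n + 1))
    (hD0 : D 0 = 0)
    (hD : ∀ n ∈ Finset.Icc 1 N, 0 ≤ D n ∧ D n ≤ Dmax)
    (hfeas : FeasibleLB t D N Dmax rstar)
    (hopt : ∀ r, FeasibleLB t D N Dmax r →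
      energyLB B σ2 h t N rstar ≤ energyLB B σ2 h t N r)
    (j : ℕ) (hj1 : 1 ≤ j) (hjN : j + 1 ≤ N)
    (hchange : rstar j ≠ rstar (j + 1)) :
    (∑ n ∈ Finset.Icc 1 j, rstar n * (t n - t (n - 1)) = ∑ n ∈ Finset.Icc 1 j, D n) ∨
    (∑ n ∈ Finset.Icc 1 j, rstar n * (t n - t (n - 1))
      = ∑ n ∈ Finset.range j, D n + Dmax) := by
  by_contra hcon
  push_neg at hcon
  obtain ⟨hne, hnf⟩ := hcon
  have hjmem : j ∈ Finset.Icc 1 N := Finset.mem_Icc.mpr ⟨hj1, by omega⟩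
  have hj1mem : j + 1 ∈ Finset.Icc 1 N := Finset.mem_Icc.mpr ⟨by omega, hjN⟩
  set S := ∑ n ∈ Finset.Icc 1 j, rstar n * (t n - t (n - 1)) with hS
  have hstrict1 : ∑ n ∈ Finset.Icc 1 j, D n < S :=
    lt_of_le_of_ne (hfeas.2.1 j hjmem) (fun e => hne e.symm)
  have hstrict2 : S < ∑ n ∈ Finset.range j, D n + Dmax :=
    lt_of_le_of_ne (hfeas.2.2 j hjmem) hnf
  have hTj : t (j - 1) < t j := by
    have := ht (j - 1) (by omega)
    rwa [show j - 1 + 1 = j by omega] at this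
  set T1 := t j - t (j - 1) with hT1def
  set T2 := t (j + 1) - t j with hT2def
  have hT1 : 0 < T1 := sub_pos.mpr hTj
  have hT2 : 0 < T2 := sub_pos.mpr (ht j (by omega))
  set a := rstar j with ha
  set b := rstar (j + 1) with hb
  have ha0 : 0 ≤ a := hfeas.1 j hjmem
  have hb0 : 0 ≤ b := hfeas.1 (j + 1) hj1mem
  have hc : (0 : ℝ) < 1 / T1 + 1 / T2 := by positivity
  rcases lt_or_gt_of_ne hchange with hlt | hgt
  · -- a < b : push ε more data in epoch j, less in epoch j+1 (buffer slack)
    set ε := min (∑ n ∈ Finset.range j, D n + Dmax - S) ((b - a) / (1 / T1 + 1 / T2) / 2)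
      with hεdef
    have hε : 0 < ε :=
      lt_min (by linarith) (div_pos (div_pos (by linarith) hc) two_pos)
    have hord : a + ε / T1 < b - ε / T2 := by
      have h5 : ε ≤ (b - a) / (1 / T1 + 1 / T2) / 2 := min_le_right _ _
      rw [div_div] at h5
      have h6 : ε * ((1 / T1 + 1 / T2) * 2) ≤ b - a :=
        (le_div_iff₀ (by positivity)).mp h5
      have h7 : ε / T1 + ε / T2 = ε * (1 / T1 + 1 / T2) := by ring
      nlinarith [mul_pos hε hc]
    refine perturb_contra N t D rstar B σ2 h Dmax hB hσ2 hh hfeas hopt j hj1 hjN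
      (a + ε / T1) (b - ε / T2) ε ?_ ?_ ?_ ?_ ?_ ?_ ?_
    · have : 0 ≤ ε / T1 := le_of_lt (div_pos hε hT1)
      linarith
    · have : 0 < ε / T1 := div_pos hε hT1
      linarith
    · rw [← hT1def]; field_simp; rw [ha]; ring
    · rw [← hT2def]; field_simp; rw [hb]; ring
    · linarith [hfeas.2.1 j hjmem]
    · have := min_le_left (∑ n ∈ Finset.range j, D n + Dmax - S)
        ((b - a) / (1 / T1 + 1 / T2) / 2)
      linarith
    · rw [← hT1def, ← hT2def, ← ha, ← hb]
      have := exp_pert_lt B T2 T1 b a ε hB hT2 hT1 hε (by linarith)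
      linarith
  · -- b < a : pull ε data out of epoch j into epoch j+1 (transmission slack)
    set ε := min (S - ∑ n ∈ Finset.Icc 1 j, D n) ((a - b) / (1 / T1 + 1 / T2) / 2)
      with hεdef
    have hε : 0 < ε :=
      lt_min (by linarith) (div_pos (div_pos (by linarith) hc) two_pos)
    have hord : b + ε / T2 < a - ε / T1 := by
      have h5 : ε ≤ (a - b) / (1 / T1 + 1 / T2) / 2 := min_le_right _ _
      rw [div_div] at h5
      have h6 : ε * ((1 / T1 + 1 / T2) * 2) ≤ a - b :=
        (le_div_iff₀ (by positivity)).mp h5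
      have h7 : ε / T1 + ε / T2 = ε * (1 / T1 + 1 / T2) := by ring
      nlinarith [mul_pos hε hc]
    refine perturb_contra N t D rstar B σ2 h Dmax hB hσ2 hh hfeas hopt j hj1 hjN
      (a - ε / T1) (b + ε / T2) (-ε) ?_ ?_ ?_ ?_ ?_ ?_ ?_
    · have : 0 ≤ ε / T2 := le_of_lt (div_pos hε hT2)
      linarith
    · have : 0 < ε / T2 := div_pos hε hT2
      linarith
    · rw [← hT1def]; field_simp; rw [ha]; ring
    · rw [← hT2def]; field_simp; rw [hb]; ring
    · have := min_le_left (S - ∑ n ∈ Finset.Icc 1 j, D n)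
        ((a - b) / (1 / T1 + 1 / T2) / 2)
      linarith
    · linarith [hfeas.2.2 j hjmem]
    · rw [← hT1def, ← hT2def, ← ha, ← hb]
      exact exp_pert_lt B T1 T2 a b ε hB hT1 hT2 hε hord
end

section
/- Lemma 5 (rate changing direction in the limited-buffer problem): Let r* be an optimal rate vector for the limited-buffer energy-minimization problem, and let j ∈ {1, …, N−1}. If the rate decreases at t_j, i.e., r*_{j+1} < r*_j, then the data buffer is empty at t_j: ∑_{n=1}^j r*_n T_n = ∑_{n=1}^j D_n. If the rate increases at t_j, i.e., r*_{j+1} > r*_j, then the data buffer is full at t_j: ∑_{n=1}^j r*_n T_n = ∑_{n=0}^{j−1} D_n + D_max. -/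
open Real Finset

/-- Core strict convexity inequality: moving `ε` data from a high-rate epoch
(length `Tp`, rate `a`) to a low-rate epoch (length `Tq`, rate `b`) strictly
decreases the exponential cost, provided `ε` is small enough. -/
lemma core_ineq {B Tp Tq a b ε : ℝ} (hB : 0 < B) (hTp : 0 < Tp) (hTq : 0 < Tq)
    (hε : 0 < ε) (hsmall : ε / Tp + ε / Tq < a - b) :
    Tq * (Real.exp ((b + ε / Tq) / B) - Real.exp (b / B)) <
      Tp * (Real.exp (a / B) - Real.exp ((a - ε / Tp) / B)) := by
  set u := ε / (B * Tp) with hu_def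
  set v := ε / (B * Tq) with hv_def
  have hu : 0 < u := div_pos hε (by positivity)
  have hv : 0 < v := div_pos hε (by positivity)
  have h1 : (b + ε / Tq) / B = b / B + v := by
    rw [hv_def]; field_simp
  have h2 : (a - ε / Tp) / B = a / B - u := by
    rw [hu_def]; field_simp
  have hexp1 : Real.exp (b / B + v) = Real.exp (b / B) * Real.exp v := Real.exp_add _ _
  have hexp2 : Real.exp (a / B - u) = Real.exp (a / B) * Real.exp (-u) := by
    rw [Real.exp_sub, Real.exp_neg]; field_simp
  -- exp v - 1 ≤ v * exp v
  have hmv : Real.exp (-v) * Real.exp v = 1 := by rw [← Real.exp_add]; simp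
  have k1 : Real.exp v - 1 ≤ v * Real.exp v := by
    nlinarith [Real.add_one_le_exp (-v), Real.exp_pos v]
  -- u * exp (-u) ≤ 1 - exp (-u)
  have hmu : Real.exp u * Real.exp (-u) = 1 := by rw [← Real.exp_add]; simp
  have k2 : u * Real.exp (-u) ≤ 1 - Real.exp (-u) := by
    nlinarith [Real.add_one_le_exp u, Real.exp_pos (-u)]
  have hLHS : Tq * (Real.exp ((b + ε / Tq) / B) - Real.exp (b / B)) ≤
      (ε / B) * (Real.exp (b / B) * Real.exp v) := by
    rw [h1, hexp1]
    have : Tq * v = ε / B := by rw [hv_def]; field_simp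
    calc Tq * (Real.exp (b / B) * Real.exp v - Real.exp (b / B))
        = Tq * (Real.exp (b / B) * (Real.exp v - 1)) := by ring
      _ ≤ Tq * (Real.exp (b / B) * (v * Real.exp v)) := by
          apply mul_le_mul_of_nonneg_left _ hTq.le
          exact mul_le_mul_of_nonneg_left k1 (Real.exp_pos _).le
      _ = (Tq * v) * (Real.exp (b / B) * Real.exp v) := by ring
      _ = (ε / B) * (Real.exp (b / B) * Real.exp v) := by rw [this]
  have hRHS : (ε / B) * (Real.exp (a / B) * Real.exp (-u)) ≤
      Tp * (Real.exp (a / B) - Real.exp ((a - ε / Tp) / B)) := by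
    rw [h2, hexp2]
    have : Tp * u = ε / B := by rw [hu_def]; field_simp
    calc (ε / B) * (Real.exp (a / B) * Real.exp (-u))
        = (Tp * u) * (Real.exp (a / B) * Real.exp (-u)) := by rw [this]
      _ = Tp * (Real.exp (a / B) * (u * Real.exp (-u))) := by ring
      _ ≤ Tp * (Real.exp (a / B) * (1 - Real.exp (-u))) := by
          apply mul_le_mul_of_nonneg_left _ hTp.le
          exact mul_le_mul_of_nonneg_left k2 (Real.exp_pos _).le
      _ = Tp * (Real.exp (a / B) - Real.exp (a / B) * Real.exp (-u)) := by ring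
  have hmid : (ε / B) * (Real.exp (b / B) * Real.exp v) <
      (ε / B) * (Real.exp (a / B) * Real.exp (-u)) := by
    apply mul_lt_mul_of_pos_left _ (div_pos hε hB)
    rw [← Real.exp_add, ← Real.exp_add]
    apply Real.exp_lt_exp.2
    have huv : u + v = (ε / Tp + ε / Tq) / B := by
      rw [hu_def, hv_def]; field_simp
    have : u + v < (a - b) / B := by
      rw [huv, div_lt_div_iff₀ hB hB]
      exact mul_lt_mul_of_pos_right hsmall hB
    have hsd : (a - b) / B = a / B - b / B := sub_div a b B
    linarith
  linarith


lemma sum_perturb (t : ℕ → ℝ) (r r' : ℕ → ℝ) (j k : ℕ)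
    (hoff : ∀ n, n ≠ j → n ≠ j + 1 → r' n = r n) :
    ∑ n ∈ Finset.Icc 1 k, r' n * (t n - t (n - 1)) =
      ∑ n ∈ Finset.Icc 1 k, r n * (t n - t (n - 1))
      + (if j ∈ Finset.Icc 1 k then (r' j - r j) * (t j - t (j - 1)) else 0)
      + (if j + 1 ∈ Finset.Icc 1 k then (r' (j + 1) - r (j + 1)) * (t (j + 1) - t j) else 0) := by
  have key : ∀ n ∈ Finset.Icc 1 k, r' n * (t n - t (n - 1)) =
      r n * (t n - t (n - 1))
      + ((if n = j then (r' j - r j) * (t j - t (j - 1)) else 0)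
        + (if n = j + 1 then (r' (j + 1) - r (j + 1)) * (t (j + 1) - t j) else 0)) := by
    intro n _
    rcases eq_or_ne n j with hnj | hnj
    · rw [if_pos hnj, if_neg (by omega : ¬ n = j + 1), hnj]
      ring
    · rcases eq_or_ne n (j + 1) with hnj1 | hnj1
      · rw [if_neg hnj, if_pos hnj1, hnj1]
        simp only [Nat.add_sub_cancel]
        ring
      · rw [hoff n hnj hnj1, if_neg hnj, if_neg hnj1]
        ring
  rw [Finset.sum_congr rfl key, Finset.sum_add_distrib, Finset.sum_add_distrib,
    Finset.sum_ite_eq' (Finset.Icc 1 k) j, Finset.sum_ite_eq' (Finset.Icc 1 k) (j + 1)]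
  ring

lemma energy_perturb (B σ2 h : ℝ) (t : ℕ → ℝ) (N : ℕ) (r r' : ℕ → ℝ) (j : ℕ)
    (hoff : ∀ n, n ≠ j → n ≠ j + 1 → r' n = r n) :
    energyLB B σ2 h t N r' =
      energyLB B σ2 h t N r
      + (if j ∈ Finset.Icc 1 N then
          (Real.exp (r' j / B) - Real.exp (r j / B)) * (σ2 / h) * (t j - t (j - 1)) else 0)
      + (if j + 1 ∈ Finset.Icc 1 N then
          (Real.exp (r' (j + 1) / B) - Real.exp (r (j + 1) / B)) * (σ2 / h) * (t (j + 1) - t j)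
          else 0) := by
  unfold energyLB
  have key : ∀ n ∈ Finset.Icc 1 N, (Real.exp (r' n / B) - 1) * (σ2 / h) * (t n - t (n - 1)) =
      (Real.exp (r n / B) - 1) * (σ2 / h) * (t n - t (n - 1))
      + ((if n = j then (Real.exp (r' j / B) - Real.exp (r j / B)) * (σ2 / h) * (t j - t (j - 1)) else 0)
        + (if n = j + 1 then
            (Real.exp (r' (j + 1) / B) - Real.exp (r (j + 1) / B)) * (σ2 / h) * (t (j + 1) - t j)
            else 0)) := by
    intro n _
    rcases eq_or_ne n j with hnj | hnj
    · rw [if_pos hnj, if_neg (by omega : ¬ n = j + 1), hnj]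
      ring
    · rcases eq_or_ne n (j + 1) with hnj1 | hnj1
      · rw [if_neg hnj, if_pos hnj1, hnj1]
        simp only [Nat.add_sub_cancel]
        ring
      · rw [hoff n hnj hnj1, if_neg hnj, if_neg hnj1]
        ring
  rw [Finset.sum_congr rfl key, Finset.sum_add_distrib, Finset.sum_add_distrib,
    Finset.sum_ite_eq' (Finset.Icc 1 N) j, Finset.sum_ite_eq' (Finset.Icc 1 N) (j + 1)]
  ring


lemma eps_exists {sl c : ℝ} (hsl : 0 < sl) (hc : 0 < c) :
    ∃ ε : ℝ, 0 < ε ∧ ε ≤ sl ∧ ε < c :=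
  ⟨min sl c / 2, by positivity,
    le_trans (half_le_self (le_min hsl.le hc.le)) (min_le_left _ _),
    lt_of_lt_of_le (half_lt_self (lt_min hsl hc)) (min_le_right _ _)⟩

/-- Lemma 5 (rate changing direction in the limited-buffer problem): under an optimal
rate vector, the rate can decrease at `t_j` only if the buffer is empty at `t_j`, and
it can increase at `t_j` only if the buffer is full at `t_j`. -/
theorem rate_change_direction_limited_buffer
    (N : ℕ) (t D rstar : ℕ → ℝ) (B σ2 h Dmax : ℝ)
    (hB : 0 < B) (hσ2 : 0 < σ2) (hh : 0 < h) (hDmax : 0 < Dmax)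
    (ht0 : t 0 = 0) (ht : ∀ n, n < N → t n < t (n + 1))
    (hD0 : D 0 = 0)
    (hD : ∀ n ∈ Finset.Icc 1 N, 0 ≤ D n ∧ D n ≤ Dmax)
    (hfeas : FeasibleLB t D N Dmax rstar)
    (hopt : ∀ r, FeasibleLB t D N Dmax r →
      energyLB B σ2 h t N rstar ≤ energyLB B σ2 h t N r)
    (j : ℕ) (hj1 : 1 ≤ j) (hjN : j + 1 ≤ N) :
    (rstar (j + 1) < rstar j →
      ∑ n ∈ Finset.Icc 1 j, rstar n * (t n - t (n - 1)) = ∑ n ∈ Finset.Icc 1 j, D n) ∧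
    (rstar j < rstar (j + 1) →
      ∑ n ∈ Finset.Icc 1 j, rstar n * (t n - t (n - 1))
        = ∑ n ∈ Finset.range j, D n + Dmax) := by
  obtain ⟨hnn, htr, hbuf⟩ := hfeas
  have hjm : j ∈ Finset.Icc 1 N := Finset.mem_Icc.mpr ⟨hj1, by omega⟩
  have hj1m : j + 1 ∈ Finset.Icc 1 N := Finset.mem_Icc.mpr ⟨by omega, hjN⟩
  have hTj : 0 < t j - t (j - 1) := by
    have h1 : j - 1 + 1 = j := Nat.succ_pred_eq_of_pos hj1
    have := ht (j - 1) (by omega)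
    rw [h1] at this
    linarith
  have hTq : 0 < t (j + 1) - t j := by
    have := ht j (by omega)
    linarith
  have hTjne : t j - t (j - 1) ≠ 0 := ne_of_gt hTj
  have hTqne : t (j + 1) - t j ≠ 0 := ne_of_gt hTq
  have hσh : 0 < σ2 / h := div_pos hσ2 hh
  constructor
  · -- rate decreases ⇒ buffer empty
    intro hlt
    by_contra hne
    have hslack : ∑ n ∈ Finset.Icc 1 j, D n
        < ∑ n ∈ Finset.Icc 1 j, rstar n * (t n - t (n - 1)) :=
      lt_of_le_of_ne (htr j hjm) (fun e => hne e.symm)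
    have hspos : 0 < 1 / (t j - t (j - 1)) + 1 / (t (j + 1) - t j) := by positivity
    obtain ⟨ε, hε, hεsl, hεc⟩ := eps_exists
      (show 0 < ∑ n ∈ Finset.Icc 1 j, rstar n * (t n - t (n - 1))
        - ∑ n ∈ Finset.Icc 1 j, D n by linarith)
      (show 0 < (rstar j - rstar (j + 1))
        / (1 / (t j - t (j - 1)) + 1 / (t (j + 1) - t j)) from div_pos (by linarith) hspos)
    have hsmall : ε / (t j - t (j - 1)) + ε / (t (j + 1) - t j) < rstar j - rstar (j + 1) := by
      have h1 : ε * (1 / (t j - t (j - 1)) + 1 / (t (j + 1) - t j))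
          < ((rstar j - rstar (j + 1)) / (1 / (t j - t (j - 1)) + 1 / (t (j + 1) - t j)))
            * (1 / (t j - t (j - 1)) + 1 / (t (j + 1) - t j)) :=
        mul_lt_mul_of_pos_right hεc hspos
      have h2 : ((rstar j - rstar (j + 1)) / (1 / (t j - t (j - 1)) + 1 / (t (j + 1) - t j)))
          * (1 / (t j - t (j - 1)) + 1 / (t (j + 1) - t j)) = rstar j - rstar (j + 1) :=
        div_mul_cancel₀ _ (ne_of_gt hspos)
      have h3 : ε / (t j - t (j - 1)) + ε / (t (j + 1) - t j)
          = ε * (1 / (t j - t (j - 1)) + 1 / (t (j + 1) - t j)) := by ring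
      linarith
    set r' := fun n => if n = j then rstar j - ε / (t j - t (j - 1))
      else if n = j + 1 then rstar (j + 1) + ε / (t (j + 1) - t j) else rstar n with hr'_def
    have hoff : ∀ n, n ≠ j → n ≠ j + 1 → r' n = rstar n := by
      intro n h1 h2; simp [hr'_def, h1, h2]
    have hr'j : r' j = rstar j - ε / (t j - t (j - 1)) := by simp [hr'_def]
    have hr'j1 : r' (j + 1) = rstar (j + 1) + ε / (t (j + 1) - t j) := by
      have h2 : ¬ (j + 1 = j) := by omega
      simp [hr'_def, h2]
    have hval1 : (r' j - rstar j) * (t j - t (j - 1)) = -ε := by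
      have he : (rstar j - ε / (t j - t (j - 1)) - rstar j) * (t j - t (j - 1))
          = -(ε / (t j - t (j - 1)) * (t j - t (j - 1))) := by ring
      rw [hr'j, he, div_mul_cancel₀ _ hTjne]
    have hval2 : (r' (j + 1) - rstar (j + 1)) * (t (j + 1) - t j) = ε := by
      have he : (rstar (j + 1) + ε / (t (j + 1) - t j) - rstar (j + 1)) * (t (j + 1) - t j)
          = ε / (t (j + 1) - t j) * (t (j + 1) - t j) := by ring
      rw [hr'j1, he, div_mul_cancel₀ _ hTqne]
    have hsum : ∀ k, ∑ n ∈ Finset.Icc 1 k, r' n * (t n - t (n - 1)) =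
        ∑ n ∈ Finset.Icc 1 k, rstar n * (t n - t (n - 1))
        + (if j ∈ Finset.Icc 1 k then -ε else 0)
        + (if j + 1 ∈ Finset.Icc 1 k then ε else 0) := by
      intro k
      rw [sum_perturb t rstar r' j k hoff, hval1, hval2]
    have hfeas' : FeasibleLB t D N Dmax r' := by
      refine ⟨?_, ?_, ?_⟩
      · intro n hn
        rcases eq_or_ne n j with hnj | hnj
        · rw [hnj, hr'j]
          have hb : 0 ≤ rstar (j + 1) := hnn (j + 1) hj1m
          have : ε / (t j - t (j - 1)) ≤ ε / (t j - t (j - 1)) + ε / (t (j + 1) - t j) := by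
            have : 0 ≤ ε / (t (j + 1) - t j) := by positivity
            linarith
          linarith
        · rcases eq_or_ne n (j + 1) with hnj1 | hnj1
          · rw [hnj1, hr'j1]
            have hb : 0 ≤ rstar (j + 1) := hnn (j + 1) hj1m
            have : 0 ≤ ε / (t (j + 1) - t j) := by positivity
            linarith
          · rw [hoff n hnj hnj1]; exact hnn n hn
      · intro k hk
        rw [hsum k]
        have h1k : 1 ≤ k := (Finset.mem_Icc.mp hk).1
        by_cases h1 : j + 1 ≤ k
        · rw [if_pos (Finset.mem_Icc.mpr ⟨hj1, by omega⟩),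
            if_pos (Finset.mem_Icc.mpr ⟨by omega, h1⟩)]
          have := htr k hk; linarith
        · by_cases h2 : j ≤ k
          · have hkj : k = j := by omega
            rw [hkj, if_pos (Finset.mem_Icc.mpr ⟨hj1, le_refl j⟩),
              if_neg (fun hm => by have := (Finset.mem_Icc.mp hm).2; omega)]
            linarith
          · rw [if_neg (fun hm => h2 (Finset.mem_Icc.mp hm).2),
              if_neg (fun hm => h1 (Finset.mem_Icc.mp hm).2)]
            have := htr k hk; linarith
      · intro k hk
        rw [hsum k]
        have h1k : 1 ≤ k := (Finset.mem_Icc.mp hk).1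
        by_cases h1 : j + 1 ≤ k
        · rw [if_pos (Finset.mem_Icc.mpr ⟨hj1, by omega⟩),
            if_pos (Finset.mem_Icc.mpr ⟨by omega, h1⟩)]
          have := hbuf k hk; linarith
        · by_cases h2 : j ≤ k
          · have hkj : k = j := by omega
            rw [hkj, if_pos (Finset.mem_Icc.mpr ⟨hj1, le_refl j⟩),
              if_neg (fun hm => by have := (Finset.mem_Icc.mp hm).2; omega)]
            have := hbuf j hjm; linarith
          · rw [if_neg (fun hm => h2 (Finset.mem_Icc.mp hm).2),
              if_neg (fun hm => h1 (Finset.mem_Icc.mp hm).2)]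
            have := hbuf k hk; linarith
    have hcore := core_ineq (Tp := t j - t (j - 1)) (Tq := t (j + 1) - t j)
      (a := rstar j) (b := rstar (j + 1)) hB hTj hTq hε hsmall
    have hE : energyLB B σ2 h t N r' < energyLB B σ2 h t N rstar := by
      rw [energy_perturb B σ2 h t N rstar r' j hoff, if_pos hjm, if_pos hj1m,
        hr'j, hr'j1]
      nlinarith [hcore, hσh]
    have := hopt r' hfeas'
    linarith
  · -- rate increases ⇒ buffer full
    intro hlt
    by_contra hne
    have hslack : ∑ n ∈ Finset.Icc 1 j, rstar n * (t n - t (n - 1))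
        < ∑ n ∈ Finset.range j, D n + Dmax :=
      lt_of_le_of_ne (hbuf j hjm) hne
    have hspos : 0 < 1 / (t j - t (j - 1)) + 1 / (t (j + 1) - t j) := by positivity
    obtain ⟨ε, hε, hεsl, hεc⟩ := eps_exists
      (show 0 < (∑ n ∈ Finset.range j, D n + Dmax)
        - ∑ n ∈ Finset.Icc 1 j, rstar n * (t n - t (n - 1)) by linarith)
      (show 0 < (rstar (j + 1) - rstar j)
        / (1 / (t j - t (j - 1)) + 1 / (t (j + 1) - t j)) from div_pos (by linarith) hspos)
    have hsmall : ε / (t (j + 1) - t j) + ε / (t j - t (j - 1)) < rstar (j + 1) - rstar j := by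
      have h1 : ε * (1 / (t j - t (j - 1)) + 1 / (t (j + 1) - t j))
          < ((rstar (j + 1) - rstar j) / (1 / (t j - t (j - 1)) + 1 / (t (j + 1) - t j)))
            * (1 / (t j - t (j - 1)) + 1 / (t (j + 1) - t j)) :=
        mul_lt_mul_of_pos_right hεc hspos
      have h2 : ((rstar (j + 1) - rstar j) / (1 / (t j - t (j - 1)) + 1 / (t (j + 1) - t j)))
          * (1 / (t j - t (j - 1)) + 1 / (t (j + 1) - t j)) = rstar (j + 1) - rstar j :=
        div_mul_cancel₀ _ (ne_of_gt hspos)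
      have h3 : ε / (t (j + 1) - t j) + ε / (t j - t (j - 1))
          = ε * (1 / (t j - t (j - 1)) + 1 / (t (j + 1) - t j)) := by ring
      linarith
    set r' := fun n => if n = j then rstar j + ε / (t j - t (j - 1))
      else if n = j + 1 then rstar (j + 1) - ε / (t (j + 1) - t j) else rstar n with hr'_def
    have hoff : ∀ n, n ≠ j → n ≠ j + 1 → r' n = rstar n := by
      intro n h1 h2; simp [hr'_def, h1, h2]
    have hr'j : r' j = rstar j + ε / (t j - t (j - 1)) := by simp [hr'_def]
    have hr'j1 : r' (j + 1) = rstar (j + 1) - ε / (t (j + 1) - t j) := by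
      have h2 : ¬ (j + 1 = j) := by omega
      simp [hr'_def, h2]
    have hval1 : (r' j - rstar j) * (t j - t (j - 1)) = ε := by
      have he : (rstar j + ε / (t j - t (j - 1)) - rstar j) * (t j - t (j - 1))
          = ε / (t j - t (j - 1)) * (t j - t (j - 1)) := by ring
      rw [hr'j, he, div_mul_cancel₀ _ hTjne]
    have hval2 : (r' (j + 1) - rstar (j + 1)) * (t (j + 1) - t j) = -ε := by
      have he : (rstar (j + 1) - ε / (t (j + 1) - t j) - rstar (j + 1)) * (t (j + 1) - t j)
          = -(ε / (t (j + 1) - t j) * (t (j + 1) - t j)) := by ring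
      rw [hr'j1, he, div_mul_cancel₀ _ hTqne]
    have hsum : ∀ k, ∑ n ∈ Finset.Icc 1 k, r' n * (t n - t (n - 1)) =
        ∑ n ∈ Finset.Icc 1 k, rstar n * (t n - t (n - 1))
        + (if j ∈ Finset.Icc 1 k then ε else 0)
        + (if j + 1 ∈ Finset.Icc 1 k then -ε else 0) := by
      intro k
      rw [sum_perturb t rstar r' j k hoff, hval1, hval2]
    have hfeas' : FeasibleLB t D N Dmax r' := by
      refine ⟨?_, ?_, ?_⟩
      · intro n hn
        rcases eq_or_ne n j with hnj | hnj
        · rw [hnj, hr'j]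
          have hb : 0 ≤ rstar j := hnn j hjm
          have : 0 ≤ ε / (t j - t (j - 1)) := by positivity
          linarith
        · rcases eq_or_ne n (j + 1) with hnj1 | hnj1
          · rw [hnj1, hr'j1]
            have hb : 0 ≤ rstar j := hnn j hjm
            have : ε / (t (j + 1) - t j) ≤ ε / (t (j + 1) - t j) + ε / (t j - t (j - 1)) := by
              have : 0 ≤ ε / (t j - t (j - 1)) := by positivity
              linarith
            linarith
          · rw [hoff n hnj hnj1]; exact hnn n hn
      · intro k hk
        rw [hsum k]
        have h1k : 1 ≤ k := (Finset.mem_Icc.mp hk).1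
        by_cases h1 : j + 1 ≤ k
        · rw [if_pos (Finset.mem_Icc.mpr ⟨hj1, by omega⟩),
            if_pos (Finset.mem_Icc.mpr ⟨by omega, h1⟩)]
          have := htr k hk; linarith
        · by_cases h2 : j ≤ k
          · have hkj : k = j := by omega
            rw [hkj, if_pos (Finset.mem_Icc.mpr ⟨hj1, le_refl j⟩),
              if_neg (fun hm => by have := (Finset.mem_Icc.mp hm).2; omega)]
            have := htr j hjm; linarith
          · rw [if_neg (fun hm => h2 (Finset.mem_Icc.mp hm).2),
              if_neg (fun hm => h1 (Finset.mem_Icc.mp hm).2)]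
            have := htr k hk; linarith
      · intro k hk
        rw [hsum k]
        have h1k : 1 ≤ k := (Finset.mem_Icc.mp hk).1
        by_cases h1 : j + 1 ≤ k
        · rw [if_pos (Finset.mem_Icc.mpr ⟨hj1, by omega⟩),
            if_pos (Finset.mem_Icc.mpr ⟨by omega, h1⟩)]
          have := hbuf k hk; linarith
        · by_cases h2 : j ≤ k
          · have hkj : k = j := by omega
            rw [hkj, if_pos (Finset.mem_Icc.mpr ⟨hj1, le_refl j⟩),
              if_neg (fun hm => by have := (Finset.mem_Icc.mp hm).2; omega)]
            linarith
          · rw [if_neg (fun hm => h2 (Finset.mem_Icc.mp hm).2),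
              if_neg (fun hm => h1 (Finset.mem_Icc.mp hm).2)]
            have := hbuf k hk; linarith
    have hcore := core_ineq (Tp := t (j + 1) - t j) (Tq := t j - t (j - 1))
      (a := rstar (j + 1)) (b := rstar j) hB hTq hTj hε hsmall
    have hE : energyLB B σ2 h t N r' < energyLB B σ2 h t N rstar := by
      rw [energy_perturb B σ2 h t N rstar r' j hoff, if_pos hjm, if_pos hj1m,
        hr'j, hr'j1]
      nlinarith [hcore, hσh]
    have := hopt r' hfeas'
    linarith
end

section
/- Constant-rate optimality in the degenerate case (BT-problem): Let D = ∑_{n=1}^N D_n and suppose D_n ≤ (D/t_N) T_n for every n = 1, …, N. Then the constant rate vector with r_n = D/t_N for all n satisfies the transmission constraints, and it is optimal for problem (P2b): every rate vector r satisfying the transmission constraints has energy E(r) ≥ (e^{D/(B t_N)} − 1)(σ²/h) t_N. -/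
lemma tele_sum (t : ℕ → ℝ) (j : ℕ) :
    ∑ n ∈ Finset.Icc 1 j, (t n - t (n - 1)) = t j - t 0 := by
  induction j with
  | zero => simp
  | succ k ih =>
    rw [← Finset.insert_Icc_right_eq_Icc_add_one (by omega),
      Finset.sum_insert (by simp), ih]
    simp only [Nat.add_sub_cancel]
    ring

/-- Constant-rate optimality in the degenerate case (BT-problem): if
`D_n ≤ (D/t_N) T_n` for every `n` (where `D = ∑_{n=1}^N D_n`), then the constant
rate vector `r_n = D/t_N` satisfies the transmission constraints, and every rate
vector satisfying them consumes at least the energy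
`(e^{D/(B t_N)} − 1)(σ²/h) t_N` of this constant policy. -/
theorem constant_rate_optimal_BT
    (N : ℕ) (hN : 1 ≤ N) (t D : ℕ → ℝ) (B σ2 h : ℝ)
    (hB : 0 < B) (hσ2 : 0 < σ2) (hh : 0 < h)
    (ht0 : t 0 = 0) (ht : ∀ n, n < N → t n < t (n + 1))
    (hD : ∀ n ∈ Finset.Icc 1 N, 0 ≤ D n)
    (hdeg : ∀ n ∈ Finset.Icc 1 N,
      D n ≤ (∑ m ∈ Finset.Icc 1 N, D m) / t N * (t n - t (n - 1))) :
    FeasibleP2b t D N (fun _ => (∑ m ∈ Finset.Icc 1 N, D m) / t N) ∧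
    ∀ r, FeasibleP2b t D N r →
      (Real.exp ((∑ m ∈ Finset.Icc 1 N, D m) / (B * t N)) - 1) * (σ2 / h) * t N
        ≤ energyP2b B σ2 h t N r := by
  have hmono : ∀ i j : ℕ, i ≤ j → j ≤ N → t i ≤ t j := by
    intro i j hij hjN
    induction j with
    | zero => simp [Nat.le_zero.mp hij]
    | succ k ih =>
      rcases Nat.lt_or_ge i (k+1) with hlt | hge
      · exact le_trans (ih (by omega) (by omega)) (le_of_lt (ht k (by omega)))
      · have : i = k + 1 := le_antisymm hij hge
        simp [this]
  have hTpos : ∀ n ∈ Finset.Icc 1 N, 0 < t n - t (n - 1) := by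
    intro n hn
    simp only [Finset.mem_Icc] at hn
    have h1 := ht (n - 1) (by omega)
    have hn1 : n - 1 + 1 = n := by omega
    rw [hn1] at h1
    linarith
  have htN : 0 < t N := by
    have h1 := hTpos N (by simp [hN])
    have h2 := hmono 0 (N - 1) (by omega) (by omega)
    rw [ht0] at h2
    have hn1 : N - 1 = N - 1 := rfl
    linarith
  set Dt := ∑ m ∈ Finset.Icc 1 N, D m with hDt
  have hDpos : 0 ≤ Dt := Finset.sum_nonneg hD
  have hfeas : FeasibleP2b t D N (fun _ => Dt / t N) := by
    constructor
    · intro n _; positivity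
    · intro j hj
      simp only [Finset.mem_Icc] at hj
      calc ∑ n ∈ Finset.Icc 1 j, D n
          ≤ ∑ n ∈ Finset.Icc 1 j, Dt / t N * (t n - t (n - 1)) := by
            apply Finset.sum_le_sum
            intro n hn
            simp only [Finset.mem_Icc] at hn
            exact hdeg n (by simp only [Finset.mem_Icc]; omega)
        _ = ∑ n ∈ Finset.Icc 1 j, (fun _ => Dt / t N) n * (t n - t (n - 1)) := rfl
  refine ⟨hfeas, ?_⟩
  intro r hr
  obtain ⟨hr0, hrc⟩ := hr
  have hT : ∑ n ∈ Finset.Icc 1 N, (t n - t (n - 1)) = t N := by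
    rw [tele_sum, ht0]; ring
  set w : ℕ → ℝ := fun n => (t n - t (n - 1)) / t N with hw
  have hw0 : ∀ n ∈ Finset.Icc 1 N, 0 ≤ w n := fun n hn =>
    div_nonneg (le_of_lt (hTpos n hn)) htN.le
  have hw1 : ∑ n ∈ Finset.Icc 1 N, w n = 1 := by
    rw [hw, ← Finset.sum_div, hT, div_self htN.ne']
  have jensen := convexOn_exp.map_sum_le (t := Finset.Icc 1 N)
    (w := w) (p := fun n => r n / B) hw0 hw1 (fun i _ => Set.mem_univ _)
  have hkey : Dt / (B * t N) ≤ ∑ n ∈ Finset.Icc 1 N, w n • (r n / B) := by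
    have hc := hrc N (by simp [hN])
    have heq : ∑ n ∈ Finset.Icc 1 N, w n • (r n / B)
        = (∑ n ∈ Finset.Icc 1 N, r n * (t n - t (n - 1))) / (B * t N) := by
      rw [Finset.sum_div]
      apply Finset.sum_congr rfl
      intro n hn
      simp only [smul_eq_mul, hw]
      field_simp
    rw [heq]
    gcongr
  have hexp : Real.exp (Dt / (B * t N)) ≤ ∑ n ∈ Finset.Icc 1 N, w n * Real.exp (r n / B) := by
    calc Real.exp (Dt / (B * t N))
        ≤ Real.exp (∑ n ∈ Finset.Icc 1 N, w n • (r n / B)) := Real.exp_le_exp.mpr hkey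
      _ ≤ ∑ n ∈ Finset.Icc 1 N, w n • Real.exp (r n / B) := jensen
      _ = ∑ n ∈ Finset.Icc 1 N, w n * Real.exp (r n / B) := by simp [smul_eq_mul]
  have hE : (Real.exp (Dt / (B * t N)) - 1) * t N
      ≤ ∑ n ∈ Finset.Icc 1 N, (Real.exp (r n / B) - 1) * (t n - t (n - 1)) := by
    have hsum : ∑ n ∈ Finset.Icc 1 N, (Real.exp (r n / B) - 1) * (t n - t (n - 1))
        = t N * (∑ n ∈ Finset.Icc 1 N, w n * Real.exp (r n / B)) - t N := by
      rw [Finset.mul_sum]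
      rw [show (∑ n ∈ Finset.Icc 1 N, (Real.exp (r n / B) - 1) * (t n - t (n - 1)))
          = (∑ n ∈ Finset.Icc 1 N, Real.exp (r n / B) * (t n - t (n - 1)))
            - ∑ n ∈ Finset.Icc 1 N, (t n - t (n - 1)) by
        rw [← Finset.sum_sub_distrib]; apply Finset.sum_congr rfl; intro n _; ring]
      rw [hT]
      congr 1
      apply Finset.sum_congr rfl
      intro n _
      simp only [hw]
      field_simp
    rw [hsum]
    nlinarith [hexp, htN]
  have hE2 : energyP2b B σ2 h t N r
      = (σ2 / h) * ∑ n ∈ Finset.Icc 1 N, (Real.exp (r n / B) - 1) * (t n - t (n - 1)) := by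
    rw [energyP2b, Finset.mul_sum]
    apply Finset.sum_congr rfl
    intro n _
    ring
  rw [hE2]
  calc (Real.exp (Dt / (B * t N)) - 1) * (σ2 / h) * t N
      = (σ2 / h) * ((Real.exp (Dt / (B * t N)) - 1) * t N) := by ring
    _ ≤ (σ2 / h) * ∑ n ∈ Finset.Icc 1 N, (Real.exp (r n / B) - 1) * (t n - t (n - 1)) := by
        apply mul_le_mul_of_nonneg_left hE (by positivity)
end

section
/- Constant-rate optimality in the degenerate limited-buffer case: Let D = ∑_{n=1}^N D_n and suppose that for every j = 1, …, N, ∑_{n=1}^j D_n ≤ (D/t_N) t_j ≤ ∑_{n=0}^{j−1} D_n + D_max. Then the constant rate vector with r_n = D/t_N for all n is feasible for the limited-buffer problem (it satisfies both the transmission and the buffer constraints), and it minimizes the energy E among all feasible rate vectors: every feasible r has E(r) ≥ (e^{D/(B t_N)} − 1)(σ²/h) t_N. -/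
/-- Constant-rate optimality in the degenerate limited-buffer case: if for every `j`,
`∑_{n=1}^j D_n ≤ (D/t_N) t_j ≤ ∑_{n=0}^{j−1} D_n + D_max` (where `D = ∑_{n=1}^N D_n`),
then the constant rate vector `r_n = D/t_N` is feasible for the limited-buffer
problem, and every feasible rate vector consumes at least the energy
`(e^{D/(B t_N)} − 1)(σ²/h) t_N` of this constant policy. -/
theorem constant_rate_optimal_limited_buffer
    (N : ℕ) (hN : 1 ≤ N) (t D : ℕ → ℝ) (B σ2 h Dmax : ℝ)
    (hB : 0 < B) (hσ2 : 0 < σ2) (hh : 0 < h) (hDmax : 0 < Dmax)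
    (ht0 : t 0 = 0) (ht : ∀ n, n < N → t n < t (n + 1))
    (hD0 : D 0 = 0)
    (hD : ∀ n ∈ Finset.Icc 1 N, 0 ≤ D n ∧ D n ≤ Dmax)
    (hdeg_lo : ∀ j ∈ Finset.Icc 1 N,
      ∑ n ∈ Finset.Icc 1 j, D n ≤ (∑ m ∈ Finset.Icc 1 N, D m) / t N * t j)
    (hdeg_hi : ∀ j ∈ Finset.Icc 1 N,
      (∑ m ∈ Finset.Icc 1 N, D m) / t N * t j ≤ ∑ n ∈ Finset.range j, D n + Dmax) :
    FeasibleLB t D N Dmax (fun _ => (∑ m ∈ Finset.Icc 1 N, D m) / t N) ∧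
    ∀ r, FeasibleLB t D N Dmax r →
      (Real.exp ((∑ m ∈ Finset.Icc 1 N, D m) / (B * t N)) - 1) * (σ2 / h) * t N
        ≤ energyLB B σ2 h t N r := by
  set Ds := ∑ m ∈ Finset.Icc 1 N, D m with hDs
  -- basic facts about t
  have hmono : ∀ k, k ≤ N → t 0 ≤ t k := by
    intro k hk
    induction k with
    | zero => exact le_rfl
    | succ m ih =>
      exact le_trans (ih (by omega)) (le_of_lt (ht m (by omega)))
  have htN : 0 < t N := by
    obtain ⟨M, rfl⟩ : ∃ M, N = M + 1 := ⟨N - 1, by omega⟩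
    calc 0 = t 0 := ht0.symm
    _ ≤ t M := hmono M (by omega)
    _ < t (M + 1) := ht M (by omega)
  have hT : ∀ n ∈ Finset.Icc 1 N, 0 ≤ t n - t (n - 1) := by
    intro n hn
    simp only [Finset.mem_Icc] at hn
    have : t (n - 1) < t (n - 1 + 1) := ht (n - 1) (by omega)
    rw [show n - 1 + 1 = n by omega] at this
    linarith
  have hDs_nonneg : 0 ≤ Ds :=
    Finset.sum_nonneg fun n hn => (hD n hn).1
  have hc_nonneg : 0 ≤ Ds / t N := div_nonneg hDs_nonneg htN.le
  have hconst : ∀ j, ∑ n ∈ Finset.Icc 1 j, (Ds / t N) * (t n - t (n - 1))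
      = Ds / t N * t j := by
    intro j
    rw [← Finset.mul_sum, tele_sum, ht0, sub_zero]
  constructor
  · refine ⟨fun n _ => hc_nonneg, fun j hj => ?_, fun j hj => ?_⟩
    · rw [hconst j]; exact hdeg_lo j hj
    · rw [hconst j]; exact hdeg_hi j hj
  · rintro r ⟨hr0, hr1, _⟩
    have hcons : Ds ≤ ∑ n ∈ Finset.Icc 1 N, r n * (t n - t (n - 1)) :=
      hr1 N (by simp [hN])
    -- Jensen
    set w : ℕ → ℝ := fun n => (t n - t (n - 1)) / t N with hw
    have hw0 : ∀ n ∈ Finset.Icc 1 N, 0 ≤ w n :=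
      fun n hn => div_nonneg (hT n hn) htN.le
    have hw1 : ∑ n ∈ Finset.Icc 1 N, w n = 1 := by
      simp only [hw]
      rw [← Finset.sum_div, tele_sum, ht0, sub_zero, div_self htN.ne']
    have hjensen := (convexOn_exp).map_sum_le (t := Finset.Icc 1 N)
      (w := w) (p := fun n => r n / B) hw0 hw1 (fun n _ => Set.mem_univ _)
    simp only [smul_eq_mul] at hjensen
    have key : t N * Real.exp (Ds / (B * t N))
        ≤ ∑ n ∈ Finset.Icc 1 N, (t n - t (n - 1)) * Real.exp (r n / B) := by
      have h1 : Ds / (B * t N) ≤ ∑ n ∈ Finset.Icc 1 N, w n * (r n / B) := by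
        have : ∑ n ∈ Finset.Icc 1 N, w n * (r n / B)
            = (∑ n ∈ Finset.Icc 1 N, r n * (t n - t (n - 1))) / (B * t N) := by
          rw [Finset.sum_div]
          refine Finset.sum_congr rfl fun n _ => ?_
          simp only [hw]
          field_simp [hw]
        rw [this]
        exact div_le_div_of_nonneg_right hcons (by positivity) |>.trans_eq rfl
      have h2 : Real.exp (Ds / (B * t N))
          ≤ ∑ n ∈ Finset.Icc 1 N, w n * Real.exp (r n / B) :=
        le_trans (Real.exp_le_exp.2 h1) hjensen
      calc t N * Real.exp (Ds / (B * t N))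
          ≤ t N * ∑ n ∈ Finset.Icc 1 N, w n * Real.exp (r n / B) := by
            exact mul_le_mul_of_nonneg_left h2 htN.le
        _ = ∑ n ∈ Finset.Icc 1 N, (t n - t (n - 1)) * Real.exp (r n / B) := by
            rw [Finset.mul_sum]
            refine Finset.sum_congr rfl fun n _ => ?_
            simp only [hw]
            field_simp [hw]
    -- assemble energy bound
    have hEnergy : energyLB B σ2 h t N r
        = (σ2 / h) * ((∑ n ∈ Finset.Icc 1 N, (t n - t (n - 1)) * Real.exp (r n / B)) - t N) := by
      unfold energyLB
      have : ∀ n ∈ Finset.Icc 1 N, (Real.exp (r n / B) - 1) * (σ2 / h) * (t n - t (n - 1))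
          = (σ2 / h) * ((t n - t (n - 1)) * Real.exp (r n / B) - (t n - t (n - 1))) := by
        intro n _; ring
      rw [Finset.sum_congr rfl this, ← Finset.mul_sum, Finset.sum_sub_distrib,
        tele_sum, ht0, sub_zero]
    rw [hEnergy]
    have hσh : 0 < σ2 / h := by positivity
    calc (Real.exp (Ds / (B * t N)) - 1) * (σ2 / h) * t N
        = (σ2 / h) * (t N * Real.exp (Ds / (B * t N)) - t N) := by ring
      _ ≤ (σ2 / h) * ((∑ n ∈ Finset.Icc 1 N, (t n - t (n - 1)) * Real.exp (r n / B)) - t N) := by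
          apply mul_le_mul_of_nonneg_left _ hσh.le
          linarith [key]
end

section
/- Theorem 1 (optimality of the first segment chosen by the string-pulling algorithm in the limited-buffer case): For j = 1, …, N define r_e[j] = (∑_{n=1}^j D_n)/t_j, r_f[j] = (∑_{n=0}^{j−1} D_n + D_max)/t_j, and the feasible interval 𝐫[j] = [r_e[j], r_f[j]]. Let u_b = max{u ≤ N : ⋂_{j=1}^u 𝐫[j] ≠ ∅}, and assume u_b < N. (Case 1, buffer-empty switch) If 𝐫[u_b+1] lies strictly below ⋂_{j=1}^{u_b} 𝐫[j], i.e., r_f[u_b+1] < max_{1 ≤ j ≤ u_b} r_e[j], let u_1 = max{u ≤ u_b : r_e[u] ∈ ⋂_{j=1}^{u_b} 𝐫[j]}; then every optimal rate vector r* for the limited-buffer energy-minimization problem satisfies r*_n = r_e[u_1] for all n = 1, …, u_1. (Case 2, buffer-full switch) If 𝐫[u_b+1] lies strictly above ⋂_{j=1}^{u_b} 𝐫[j], i.e., r_e[u_b+1] > min_{1 ≤ j ≤ u_b} r_f[j], let u_1 = max{u ≤ u_b : r_f[u] ∈ ⋂_{j=1}^{u_b} 𝐫[j]}; then every optimal rate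 vector r* satisfies r*_n = r_f[u_1] for all n = 1, …, u_1. -/
/-- The constant rate `r_e[j]` that empties the data buffer exactly at `t_j`. -/
noncomputable def rE (t D : ℕ → ℝ) (j : ℕ) : ℝ :=
  (∑ n ∈ Finset.Icc 1 j, D n) / t j

/-- The constant rate `r_f[j]` that fills the data buffer exactly at `t_j`. -/
noncomputable def rF (t D : ℕ → ℝ) (Dmax : ℝ) (j : ℕ) : ℝ :=
  (∑ n ∈ Finset.range j, D n + Dmax) / t j


private lemma exp_tangent_between (B c f a : ℝ) (hB : 0 < B)
    (hbet : (c ≤ f ∧ f ≤ a) ∨ (a ≤ f ∧ f ≤ c)) :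
    Real.exp (c / B) / B * (a - f) ≤ Real.exp (a / B) - Real.exp (f / B) := by
  have h2 : Real.exp (a / B) = Real.exp (f / B) * Real.exp ((a - f) / B) := by
    rw [← Real.exp_add]; congr 1; field_simp; ring
  have h1 := Real.add_one_le_exp ((a - f) / B)
  have hf := Real.exp_pos (f / B)
  have htan : Real.exp (f / B) / B * (a - f) ≤ Real.exp (a / B) - Real.exp (f / B) := by
    rw [h2]
    have : Real.exp (f / B) * ((a - f) / B + 1) ≤ Real.exp (f / B) * Real.exp ((a - f) / B) :=
      mul_le_mul_of_nonneg_left h1 hf.le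
    calc Real.exp (f / B) / B * (a - f)
        = Real.exp (f / B) * ((a - f) / B + 1) - Real.exp (f/B) := by field_simp; ring
      _ ≤ _ := by linarith
  rcases hbet with ⟨hcf, hfa⟩ | ⟨haf, hfc⟩
  · have hm : Real.exp (c / B) ≤ Real.exp (f / B) :=
      Real.exp_le_exp.2 (div_le_div_of_nonneg_right hcf hB.le)
    have : Real.exp (c / B) / B * (a - f) ≤ Real.exp (f / B) / B * (a - f) := by
      apply mul_le_mul_of_nonneg_right _ (by linarith)
      exact div_le_div_of_nonneg_right hm hB.le
    linarith
  · have hm : Real.exp (f / B) ≤ Real.exp (c / B) :=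
      Real.exp_le_exp.2 (div_le_div_of_nonneg_right hfc hB.le)
    have hd : Real.exp (f / B) / B ≤ Real.exp (c / B) / B :=
      div_le_div_of_nonneg_right hm hB.le
    nlinarith

private lemma exp_mid_le (u v : ℝ) :
    Real.exp ((u + v) / 2) ≤ (Real.exp u + Real.exp v) / 2 := by
  have h1 : Real.exp ((u + v) / 2) = Real.exp (u/2) * Real.exp (v/2) := by
    rw [← Real.exp_add]; congr 1; ring
  have h2 : Real.exp u = Real.exp (u/2) * Real.exp (u/2) := by
    rw [← Real.exp_add]; congr 1; ring
  have h3 : Real.exp v = Real.exp (v/2) * Real.exp (v/2) := by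
    rw [← Real.exp_add]; congr 1; ring
  nlinarith [sq_nonneg (Real.exp (u/2) - Real.exp (v/2))]

private lemma exp_mid_lt (u v : ℝ) (huv : u ≠ v) :
    Real.exp ((u + v) / 2) < (Real.exp u + Real.exp v) / 2 := by
  have h1 : Real.exp ((u + v) / 2) = Real.exp (u/2) * Real.exp (v/2) := by
    rw [← Real.exp_add]; congr 1; ring
  have h2 : Real.exp u = Real.exp (u/2) * Real.exp (u/2) := by
    rw [← Real.exp_add]; congr 1; ring
  have h3 : Real.exp v = Real.exp (v/2) * Real.exp (v/2) := by
    rw [← Real.exp_add]; congr 1; ring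
  have hne : Real.exp (u/2) - Real.exp (v/2) ≠ 0 := by
    intro hcontra
    apply huv
    have h4 : Real.exp (u/2) = Real.exp (v/2) := by linarith
    have := Real.exp_injective h4
    linarith
  have hpos : 0 < (Real.exp (u/2) - Real.exp (v/2))^2 := by positivity
  nlinarith

private lemma sum_Icc_telescope (Φ : ℕ → ℝ) (j : ℕ) :
    ∑ n ∈ Finset.Icc 1 j, (Φ n - Φ (n - 1)) = Φ j - Φ 0 := by
  induction j with
  | zero => simp
  | succ m ih =>
    rw [Finset.sum_Icc_succ_top (Nat.le_add_left 1 m), ih]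
    simp

private lemma energy_le_of_between (B σ2 h : ℝ) (t : ℕ → ℝ) (N : ℕ)
    (hB : 0 < B) (hσ2 : 0 < σ2) (hh : 0 < h)
    (hT : ∀ n ∈ Finset.Icc 1 N, 0 < t n - t (n - 1)) (a f : ℕ → ℝ) (c : ℝ)
    (hsum : ∑ n ∈ Finset.Icc 1 N, f n * (t n - t (n - 1))
          = ∑ n ∈ Finset.Icc 1 N, a n * (t n - t (n - 1)))
    (hbet : ∀ n ∈ Finset.Icc 1 N, (c ≤ f n ∧ f n ≤ a n) ∨ (a n ≤ f n ∧ f n ≤ c)) :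
    energyLB B σ2 h t N f ≤ energyLB B σ2 h t N a := by
  have key : ∀ n ∈ Finset.Icc 1 N,
      Real.exp (c / B) / B * (σ2 / h) * (a n * (t n - t (n-1)) - f n * (t n - t (n-1)))
      ≤ (Real.exp (a n / B) - 1) * (σ2 / h) * (t n - t (n - 1))
        - (Real.exp (f n / B) - 1) * (σ2 / h) * (t n - t (n - 1)) := by
    intro n hn
    have h1 := exp_tangent_between B c (f n) (a n) hB (hbet n hn)
    have h2 : 0 ≤ (σ2 / h) * (t n - t (n - 1)) :=
      mul_nonneg (by positivity) (hT n hn).le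
    have h3 := mul_le_mul_of_nonneg_right h1 h2
    calc Real.exp (c / B) / B * (σ2 / h) * (a n * (t n - t (n-1)) - f n * (t n - t (n-1)))
        = Real.exp (c / B) / B * (a n - f n) * ((σ2 / h) * (t n - t (n - 1))) := by ring
      _ ≤ (Real.exp (a n / B) - Real.exp (f n / B)) * ((σ2 / h) * (t n - t (n - 1))) := h3
      _ = (Real.exp (a n / B) - 1) * (σ2 / h) * (t n - t (n - 1))
        - (Real.exp (f n / B) - 1) * (σ2 / h) * (t n - t (n - 1)) := by ring
  have hsle := Finset.sum_le_sum key
  have hL : ∑ n ∈ Finset.Icc 1 N,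
      Real.exp (c / B) / B * (σ2 / h) * (a n * (t n - t (n-1)) - f n * (t n - t (n-1))) = 0 := by
    rw [← Finset.mul_sum, Finset.sum_sub_distrib, hsum, sub_self, mul_zero]
  have hR : ∑ n ∈ Finset.Icc 1 N,
      ((Real.exp (a n / B) - 1) * (σ2 / h) * (t n - t (n - 1))
        - (Real.exp (f n / B) - 1) * (σ2 / h) * (t n - t (n - 1)))
      = energyLB B σ2 h t N a - energyLB B σ2 h t N f := by
    rw [Finset.sum_sub_distrib]; rfl
  rw [hL, hR] at hsle
  linarith

private lemma optimal_unique (N : ℕ) (t D : ℕ → ℝ) (B σ2 h Dmax : ℝ)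
    (hB : 0 < B) (hσ2 : 0 < σ2) (hh : 0 < h)
    (hT : ∀ n ∈ Finset.Icc 1 N, 0 < t n - t (n - 1)) (a φ : ℕ → ℝ)
    (hfa : FeasibleLB t D N Dmax a) (hfφ : FeasibleLB t D N Dmax φ)
    (hopt : ∀ r, FeasibleLB t D N Dmax r → energyLB B σ2 h t N a ≤ energyLB B σ2 h t N r)
    (hEφ : energyLB B σ2 h t N φ ≤ energyLB B σ2 h t N a) :
    ∀ n ∈ Finset.Icc 1 N, a n = φ n := by
  by_contra hne
  push_neg at hne
  obtain ⟨n0, hn0, hne0⟩ := hne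
  set m : ℕ → ℝ := fun n => (a n + φ n) / 2 with hm
  have hmsum : ∀ j, ∑ n ∈ Finset.Icc 1 j, m n * (t n - t (n - 1))
      = ((∑ n ∈ Finset.Icc 1 j, a n * (t n - t (n - 1)))
        + ∑ n ∈ Finset.Icc 1 j, φ n * (t n - t (n - 1))) / 2 := by
    intro j
    rw [← Finset.sum_add_distrib, Finset.sum_div]
    refine Finset.sum_congr rfl fun n _ => by simp only [hm]; ring
  have hfm : FeasibleLB t D N Dmax m := by
    refine ⟨fun n hn => ?_, fun j hj => ?_, fun j hj => ?_⟩
    · have := hfa.1 n hn; have := hfφ.1 n hn; simp only [hm]; linarith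
    · have h1 := hfa.2.1 j hj; have h2 := hfφ.2.1 j hj; rw [hmsum]; linarith
    · have h1 := hfa.2.2 j hj; have h2 := hfφ.2.2 j hj; rw [hmsum]; linarith
  have hEm : energyLB B σ2 h t N m < energyLB B σ2 h t N a := by
    have hhalf : energyLB B σ2 h t N m
        < (energyLB B σ2 h t N a + energyLB B σ2 h t N φ) / 2 := by
      unfold energyLB
      rw [← Finset.sum_add_distrib, Finset.sum_div]
      refine Finset.sum_lt_sum (fun n hn => ?_) ⟨n0, hn0, ?_⟩
      · have hle : Real.exp (m n / B) ≤ (Real.exp (a n / B) + Real.exp (φ n / B)) / 2 := by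
          have : m n / B = (a n / B + φ n / B) / 2 := by simp only [hm]; ring
          rw [this]; exact exp_mid_le _ _
        have hpos : 0 < (σ2 / h) * (t n - t (n - 1)) :=
          mul_pos (by positivity) (hT n hn)
        nlinarith
      · have hlt : Real.exp (m n0 / B) < (Real.exp (a n0 / B) + Real.exp (φ n0 / B)) / 2 := by
          have heq : m n0 / B = (a n0 / B + φ n0 / B) / 2 := by simp only [hm]; ring
          rw [heq]
          exact exp_mid_lt _ _ (fun hc => hne0 (by field_simp at hc; linarith))
        have hpos : 0 < (σ2 / h) * (t n0 - t (n0 - 1)) :=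
          mul_pos (by positivity) (hT n0 hn0)
        nlinarith
    linarith
  exact absurd (hopt m hfm) (not_le.2 hEm)

private lemma bend_down (N : ℕ) (t D : ℕ → ℝ) (B σ2 h Dmax : ℝ)
    (hB : 0 < B) (hσ2 : 0 < σ2) (hh : 0 < h)
    (ht0 : t 0 = 0)
    (hT : ∀ n ∈ Finset.Icc 1 N, 0 < t n - t (n - 1))
    (c : ℝ) (hc : 0 ≤ c) (K : ℕ) (hK : K ≤ N)
    (hcL : ∀ j ∈ Finset.Icc 1 K, ∑ n ∈ Finset.Icc 1 j, D n ≤ c * t j)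
    (a : ℕ → ℝ) (hfa : FeasibleLB t D N Dmax a)
    (hopt : ∀ r, FeasibleLB t D N Dmax r → energyLB B σ2 h t N a ≤ energyLB B σ2 h t N r)
    (hAK : ∑ n ∈ Finset.Icc 1 K, a n * (t n - t (n - 1)) ≤ c * t K) :
    ∀ j ∈ Finset.Icc 1 K, ∑ n ∈ Finset.Icc 1 j, a n * (t n - t (n - 1)) ≤ c * t j := by
  classical
  set A : ℕ → ℝ := fun j => ∑ n ∈ Finset.Icc 1 j, a n * (t n - t (n - 1)) with hA
  have hA0 : A 0 = 0 := by simp [hA]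
  have hAstep : ∀ m : ℕ, A (m + 1) = A m + a (m + 1) * (t (m + 1) - t m) := by
    intro m
    simp only [hA]
    rw [Finset.sum_Icc_succ_top (Nat.le_add_left 1 m)]
    simp
  have hAlow : ∀ j ∈ Finset.Icc 1 N, (∑ n ∈ Finset.Icc 1 j, D n) ≤ A j := hfa.2.1
  have hAup : ∀ j ∈ Finset.Icc 1 N, A j ≤ ∑ n ∈ Finset.range j, D n + Dmax := hfa.2.2
  have hTmem : ∀ m : ℕ, 1 ≤ m + 1 → m + 1 ≤ N → 0 < t (m + 1) - t m := by
    intro m _ h2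
    have := hT (m + 1) (Finset.mem_Icc.mpr ⟨Nat.le_add_left 1 m, h2⟩)
    simpa using this
  have hAmono : ∀ m : ℕ, m + 1 ≤ N → A m ≤ A (m + 1) := by
    intro m h2
    have h3 := hfa.1 (m + 1) (Finset.mem_Icc.mpr ⟨Nat.le_add_left 1 m, h2⟩)
    have h4 := hTmem m (Nat.le_add_left 1 m) h2
    rw [hAstep m]
    nlinarith
  have hct : ∀ m : ℕ, m + 1 ≤ N → c * t m ≤ c * t (m + 1) := by
    intro m h2
    have h4 := hTmem m (Nat.le_add_left 1 m) h2
    nlinarith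
  set Φ : ℕ → ℝ := fun j => if j ≤ K then min (A j) (c * t j) else A j with hΦ
  have hΦ0 : Φ 0 = 0 := by
    simp only [hΦ, if_pos (Nat.zero_le K), hA0, ht0, mul_zero, min_self]
  have hΦK : Φ K = A K := by
    simp only [hΦ, if_pos (le_refl K)]
    exact min_eq_left hAK
  have hΦle : ∀ j, Φ j ≤ A j := by
    intro j
    by_cases hjK : j ≤ K
    · simp only [hΦ, if_pos hjK]; exact min_le_left _ _
    · simp only [hΦ, if_neg hjK]; exact le_refl _
  have hΦN : Φ N = A N := by
    by_cases hNK : N ≤ K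
    · have hKN : K = N := le_antisymm hK hNK
      subst hKN
      exact hΦK
    · simp only [hΦ, if_neg hNK]
  have hΦlow : ∀ j ∈ Finset.Icc 1 N, (∑ n ∈ Finset.Icc 1 j, D n) ≤ Φ j := by
    intro j hj
    by_cases hjK : j ≤ K
    · simp only [hΦ, if_pos hjK]
      exact le_min (hAlow j hj)
        (hcL j (Finset.mem_Icc.mpr ⟨(Finset.mem_Icc.mp hj).1, hjK⟩))
    · simp only [hΦ, if_neg hjK]; exact hAlow j hj
  have hΦmono : ∀ m : ℕ, m + 1 ≤ N → Φ m ≤ Φ (m + 1) := by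
    intro m h2
    by_cases hnK : m + 1 ≤ K
    · have hmK : m ≤ K := by omega
      simp only [hΦ, if_pos hnK, if_pos hmK]
      refine le_min ?_ ?_
      · exact (min_le_left _ _).trans (hAmono m h2)
      · exact (min_le_right _ _).trans (hct m h2)
    · simp only [hΦ, if_neg hnK]
      exact (hΦle m).trans (hAmono m h2)
  set f : ℕ → ℝ := fun n => (Φ n - Φ (n - 1)) / (t n - t (n - 1)) with hf
  have hfT : ∀ n ∈ Finset.Icc 1 N, f n * (t n - t (n - 1)) = Φ n - Φ (n - 1) := by
    intro n hn
    simp only [hf]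
    exact div_mul_cancel₀ _ (ne_of_gt (hT n hn))
  have hFsum : ∀ j, j ≤ N → ∑ n ∈ Finset.Icc 1 j, f n * (t n - t (n - 1)) = Φ j := by
    intro j hj
    rw [Finset.sum_congr rfl (fun n hn => hfT n (Finset.mem_Icc.mpr
      ⟨(Finset.mem_Icc.mp hn).1, le_trans (Finset.mem_Icc.mp hn).2 hj⟩))]
    rw [sum_Icc_telescope, hΦ0, sub_zero]
  have hffeas : FeasibleLB t D N Dmax f := by
    refine ⟨?_, ?_, ?_⟩
    · intro n hn
      rw [Finset.mem_Icc] at hn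
      obtain ⟨m, rfl⟩ : ∃ m, n = m + 1 := ⟨n - 1, (Nat.succ_pred_eq_of_pos hn.1).symm⟩
      have h1 := hΦmono m hn.2
      have h2 := hTmem m hn.1 hn.2
      simp only [hf, Nat.add_sub_cancel]
      exact div_nonneg (by linarith) h2.le
    · intro j hj
      rw [hFsum j (Finset.mem_Icc.mp hj).2]
      exact hΦlow j hj
    · intro j hj
      rw [hFsum j (Finset.mem_Icc.mp hj).2]
      exact (hΦle j).trans (hAup j hj)
  have hbet : ∀ n ∈ Finset.Icc 1 N, (c ≤ f n ∧ f n ≤ a n) ∨ (a n ≤ f n ∧ f n ≤ c) := by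
    intro n hn
    rw [Finset.mem_Icc] at hn
    obtain ⟨m, rfl⟩ : ∃ m, n = m + 1 := ⟨n - 1, (Nat.succ_pred_eq_of_pos hn.1).symm⟩
    have hTn : 0 < t (m + 1) - t m := hTmem m hn.1 hn.2
    have hfval : f (m + 1) = (Φ (m + 1) - Φ m) / (t (m + 1) - t m) := by
      simp only [hf, Nat.add_sub_cancel]
    have hstep := hAstep m
    by_cases hnK : m + 1 ≤ K
    · have hmK : m ≤ K := by omega
      have hΦn : Φ (m + 1) = min (A (m + 1)) (c * t (m + 1)) := by
        simp only [hΦ, if_pos hnK]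
      have hΦm : Φ m = min (A m) (c * t m) := by simp only [hΦ, if_pos hmK]
      rcases le_total (A m) (c * t m) with h1 | h1 <;>
        rcases le_total (A (m + 1)) (c * t (m + 1)) with h2 | h2
      · have hfa' : f (m + 1) = a (m + 1) := by
          rw [hfval, hΦn, hΦm, min_eq_left h2, min_eq_left h1, hstep]
          field_simp; ring
        rw [hfa']
        rcases le_total c (a (m + 1)) with h | h
        · exact Or.inl ⟨h, le_refl _⟩
        · exact Or.inr ⟨le_refl _, h⟩
      · left
        rw [hfval, hΦn, hΦm, min_eq_left h1, min_eq_right h2]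
        constructor
        · rw [le_div_iff₀ hTn]; nlinarith
        · rw [div_le_iff₀ hTn]; nlinarith
      · right
        rw [hfval, hΦn, hΦm, min_eq_right h1, min_eq_left h2]
        constructor
        · rw [le_div_iff₀ hTn]; nlinarith
        · rw [div_le_iff₀ hTn]; nlinarith
      · have hfc : f (m + 1) = c := by
          rw [hfval, hΦn, hΦm, min_eq_right h2, min_eq_right h1,
            show c * t (m + 1) - c * t m = c * (t (m + 1) - t m) by ring,
            mul_div_assoc, div_self (ne_of_gt hTn), mul_one]
        rw [hfc]
        rcases le_total c (a (m + 1)) with h | h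
        · exact Or.inl ⟨le_refl _, h⟩
        · exact Or.inr ⟨h, le_refl _⟩
    · have hΦn : Φ (m + 1) = A (m + 1) := by simp only [hΦ, if_neg hnK]
      have hΦm : Φ m = A m := by
        by_cases hmK : m ≤ K
        · have hmKeq : m = K := by omega
          rw [hmKeq]; exact hΦK
        · simp only [hΦ, if_neg hmK]
      have hfa' : f (m + 1) = a (m + 1) := by
        rw [hfval, hΦn, hΦm, hstep]
        field_simp; ring
      rw [hfa']
      rcases le_total c (a (m + 1)) with h | h
      · exact Or.inl ⟨h, le_refl _⟩
      · exact Or.inr ⟨le_refl _, h⟩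
  have hsum : ∑ n ∈ Finset.Icc 1 N, f n * (t n - t (n - 1))
      = ∑ n ∈ Finset.Icc 1 N, a n * (t n - t (n - 1)) := by
    rw [hFsum N le_rfl, hΦN, hA]
  have hEf := energy_le_of_between B σ2 h t N hB hσ2 hh hT a f c hsum hbet
  have heq := optimal_unique N t D B σ2 h Dmax hB hσ2 hh hT a f hfa hffeas hopt hEf
  intro j hj
  rw [Finset.mem_Icc] at hj
  have hje : ∑ n ∈ Finset.Icc 1 j, a n * (t n - t (n - 1))
      = ∑ n ∈ Finset.Icc 1 j, f n * (t n - t (n - 1)) :=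
    Finset.sum_congr rfl fun n hn => by
      rw [heq n (Finset.mem_Icc.mpr ⟨(Finset.mem_Icc.mp hn).1,
        le_trans (Finset.mem_Icc.mp hn).2 (le_trans hj.2 hK)⟩)]
  calc ∑ n ∈ Finset.Icc 1 j, a n * (t n - t (n - 1))
      = Φ j := by rw [hje, hFsum j (le_trans hj.2 hK)]
    _ ≤ c * t j := by
        simp only [hΦ, if_pos hj.2]
        exact min_le_right _ _

private lemma bend_up (N : ℕ) (t D : ℕ → ℝ) (B σ2 h Dmax : ℝ)
    (hB : 0 < B) (hσ2 : 0 < σ2) (hh : 0 < h)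
    (ht0 : t 0 = 0)
    (hT : ∀ n ∈ Finset.Icc 1 N, 0 < t n - t (n - 1))
    (c : ℝ) (hc : 0 ≤ c) (K : ℕ) (hK : K ≤ N)
    (hcU : ∀ j ∈ Finset.Icc 1 K, c * t j ≤ ∑ n ∈ Finset.range j, D n + Dmax)
    (a : ℕ → ℝ) (hfa : FeasibleLB t D N Dmax a)
    (hopt : ∀ r, FeasibleLB t D N Dmax r → energyLB B σ2 h t N a ≤ energyLB B σ2 h t N r)
    (hAK : c * t K ≤ ∑ n ∈ Finset.Icc 1 K, a n * (t n - t (n - 1))) :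
    ∀ j ∈ Finset.Icc 1 K, c * t j ≤ ∑ n ∈ Finset.Icc 1 j, a n * (t n - t (n - 1)) := by
  classical
  set A : ℕ → ℝ := fun j => ∑ n ∈ Finset.Icc 1 j, a n * (t n - t (n - 1)) with hA
  have hA0 : A 0 = 0 := by simp [hA]
  have hAstep : ∀ m : ℕ, A (m + 1) = A m + a (m + 1) * (t (m + 1) - t m) := by
    intro m
    simp only [hA]
    rw [Finset.sum_Icc_succ_top (Nat.le_add_left 1 m)]
    simp
  have hAlow : ∀ j ∈ Finset.Icc 1 N, (∑ n ∈ Finset.Icc 1 j, D n) ≤ A j := hfa.2.1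
  have hAup : ∀ j ∈ Finset.Icc 1 N, A j ≤ ∑ n ∈ Finset.range j, D n + Dmax := hfa.2.2
  have hTmem : ∀ m : ℕ, 1 ≤ m + 1 → m + 1 ≤ N → 0 < t (m + 1) - t m := by
    intro m _ h2
    have := hT (m + 1) (Finset.mem_Icc.mpr ⟨Nat.le_add_left 1 m, h2⟩)
    simpa using this
  have hAmono : ∀ m : ℕ, m + 1 ≤ N → A m ≤ A (m + 1) := by
    intro m h2
    have h3 := hfa.1 (m + 1) (Finset.mem_Icc.mpr ⟨Nat.le_add_left 1 m, h2⟩)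
    have h4 := hTmem m (Nat.le_add_left 1 m) h2
    rw [hAstep m]
    nlinarith
  have hct : ∀ m : ℕ, m + 1 ≤ N → c * t m ≤ c * t (m + 1) := by
    intro m h2
    have h4 := hTmem m (Nat.le_add_left 1 m) h2
    nlinarith
  set Φ : ℕ → ℝ := fun j => if j ≤ K then max (A j) (c * t j) else A j with hΦ
  have hΦ0 : Φ 0 = 0 := by
    simp only [hΦ, if_pos (Nat.zero_le K), hA0, ht0, mul_zero, max_self]
  have hΦK : Φ K = A K := by
    simp only [hΦ, if_pos (le_refl K)]
    exact max_eq_left hAK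
  have hΦge : ∀ j, A j ≤ Φ j := by
    intro j
    by_cases hjK : j ≤ K
    · simp only [hΦ, if_pos hjK]; exact le_max_left _ _
    · simp only [hΦ, if_neg hjK]; exact le_refl _
  have hΦeqA : ∀ m, ¬(m + 1 ≤ K) → Φ m = A m := by
    intro m hnK
    by_cases hmK : m ≤ K
    · have hmKeq : m = K := by omega
      rw [hmKeq]; exact hΦK
    · simp only [hΦ, if_neg hmK]
  have hΦN : Φ N = A N := by
    by_cases hNK : N ≤ K
    · have hKN : K = N := le_antisymm hK hNK
      subst hKN
      exact hΦK
    · simp only [hΦ, if_neg hNK]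
  have hΦup : ∀ j ∈ Finset.Icc 1 N, Φ j ≤ ∑ n ∈ Finset.range j, D n + Dmax := by
    intro j hj
    by_cases hjK : j ≤ K
    · simp only [hΦ, if_pos hjK]
      exact max_le (hAup j hj)
        (hcU j (Finset.mem_Icc.mpr ⟨(Finset.mem_Icc.mp hj).1, hjK⟩))
    · simp only [hΦ, if_neg hjK]; exact hAup j hj
  have hΦmono : ∀ m : ℕ, m + 1 ≤ N → Φ m ≤ Φ (m + 1) := by
    intro m h2
    by_cases hnK : m + 1 ≤ K
    · have hmK : m ≤ K := by omega
      simp only [hΦ, if_pos hnK, if_pos hmK]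
      refine max_le ?_ ?_
      · exact (hAmono m h2).trans (le_max_left _ _)
      · exact (hct m h2).trans (le_max_right _ _)
    · have h3 := hΦeqA m hnK
      calc Φ m = A m := h3
        _ ≤ A (m + 1) := hAmono m h2
        _ = Φ (m + 1) := by simp only [hΦ, if_neg hnK]
  set f : ℕ → ℝ := fun n => (Φ n - Φ (n - 1)) / (t n - t (n - 1)) with hf
  have hfT : ∀ n ∈ Finset.Icc 1 N, f n * (t n - t (n - 1)) = Φ n - Φ (n - 1) := by
    intro n hn
    simp only [hf]
    exact div_mul_cancel₀ _ (ne_of_gt (hT n hn))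
  have hFsum : ∀ j, j ≤ N → ∑ n ∈ Finset.Icc 1 j, f n * (t n - t (n - 1)) = Φ j := by
    intro j hj
    rw [Finset.sum_congr rfl (fun n hn => hfT n (Finset.mem_Icc.mpr
      ⟨(Finset.mem_Icc.mp hn).1, le_trans (Finset.mem_Icc.mp hn).2 hj⟩))]
    rw [sum_Icc_telescope, hΦ0, sub_zero]
  have hffeas : FeasibleLB t D N Dmax f := by
    refine ⟨?_, ?_, ?_⟩
    · intro n hn
      rw [Finset.mem_Icc] at hn
      obtain ⟨m, rfl⟩ : ∃ m, n = m + 1 := ⟨n - 1, (Nat.succ_pred_eq_of_pos hn.1).symm⟩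
      have h1 := hΦmono m hn.2
      have h2 := hTmem m hn.1 hn.2
      simp only [hf, Nat.add_sub_cancel]
      exact div_nonneg (by linarith) h2.le
    · intro j hj
      rw [hFsum j (Finset.mem_Icc.mp hj).2]
      exact (hAlow j hj).trans (hΦge j)
    · intro j hj
      rw [hFsum j (Finset.mem_Icc.mp hj).2]
      exact hΦup j hj
  have hbet : ∀ n ∈ Finset.Icc 1 N, (c ≤ f n ∧ f n ≤ a n) ∨ (a n ≤ f n ∧ f n ≤ c) := by
    intro n hn
    rw [Finset.mem_Icc] at hn
    obtain ⟨m, rfl⟩ : ∃ m, n = m + 1 := ⟨n - 1, (Nat.succ_pred_eq_of_pos hn.1).symm⟩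
    have hTn : 0 < t (m + 1) - t m := hTmem m hn.1 hn.2
    have hfval : f (m + 1) = (Φ (m + 1) - Φ m) / (t (m + 1) - t m) := by
      simp only [hf, Nat.add_sub_cancel]
    have hstep := hAstep m
    by_cases hnK : m + 1 ≤ K
    · have hmK : m ≤ K := by omega
      have hΦn : Φ (m + 1) = max (A (m + 1)) (c * t (m + 1)) := by
        simp only [hΦ, if_pos hnK]
      have hΦm : Φ m = max (A m) (c * t m) := by simp only [hΦ, if_pos hmK]
      rcases le_total (A m) (c * t m) with h1 | h1 <;>
        rcases le_total (A (m + 1)) (c * t (m + 1)) with h2 | h2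
      · have hfc : f (m + 1) = c := by
          rw [hfval, hΦn, hΦm, max_eq_right h2, max_eq_right h1,
            show c * t (m + 1) - c * t m = c * (t (m + 1) - t m) by ring,
            mul_div_assoc, div_self (ne_of_gt hTn), mul_one]
        rw [hfc]
        rcases le_total c (a (m + 1)) with h | h
        · exact Or.inl ⟨le_refl _, h⟩
        · exact Or.inr ⟨h, le_refl _⟩
      · left
        rw [hfval, hΦn, hΦm, max_eq_left h2, max_eq_right h1]
        constructor
        · rw [le_div_iff₀ hTn]; nlinarith
        · rw [div_le_iff₀ hTn]; nlinarith
      · right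
        rw [hfval, hΦn, hΦm, max_eq_right h2, max_eq_left h1]
        constructor
        · rw [le_div_iff₀ hTn]; nlinarith
        · rw [div_le_iff₀ hTn]; nlinarith
      · have hfa' : f (m + 1) = a (m + 1) := by
          rw [hfval, hΦn, hΦm, max_eq_left h2, max_eq_left h1, hstep]
          field_simp; ring
        rw [hfa']
        rcases le_total c (a (m + 1)) with h | h
        · exact Or.inl ⟨h, le_refl _⟩
        · exact Or.inr ⟨le_refl _, h⟩
    · have hΦn : Φ (m + 1) = A (m + 1) := by simp only [hΦ, if_neg hnK]
      have hΦm : Φ m = A m := hΦeqA m hnK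
      have hfa' : f (m + 1) = a (m + 1) := by
        rw [hfval, hΦn, hΦm, hstep]
        field_simp; ring
      rw [hfa']
      rcases le_total c (a (m + 1)) with h | h
      · exact Or.inl ⟨h, le_refl _⟩
      · exact Or.inr ⟨le_refl _, h⟩
  have hsum : ∑ n ∈ Finset.Icc 1 N, f n * (t n - t (n - 1))
      = ∑ n ∈ Finset.Icc 1 N, a n * (t n - t (n - 1)) := by
    rw [hFsum N le_rfl, hΦN, hA]
  have hEf := energy_le_of_between B σ2 h t N hB hσ2 hh hT a f c hsum hbet
  have heq := optimal_unique N t D B σ2 h Dmax hB hσ2 hh hT a f hfa hffeas hopt hEf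
  intro j hj
  rw [Finset.mem_Icc] at hj
  have hje : ∑ n ∈ Finset.Icc 1 j, a n * (t n - t (n - 1))
      = ∑ n ∈ Finset.Icc 1 j, f n * (t n - t (n - 1)) :=
    Finset.sum_congr rfl fun n hn => by
      rw [heq n (Finset.mem_Icc.mpr ⟨(Finset.mem_Icc.mp hn).1,
        le_trans (Finset.mem_Icc.mp hn).2 (le_trans hj.2 hK)⟩)]
  calc c * t j ≤ Φ j := by
        simp only [hΦ, if_pos hj.2]
        exact le_max_right _ _
    _ = ∑ n ∈ Finset.Icc 1 j, a n * (t n - t (n - 1)) := by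
        rw [hje, hFsum j (le_trans hj.2 hK)]


/-- Theorem 1 (optimality of the first segment chosen by the string-pulling algorithm
in the limited-buffer case). Let `u_b` be the largest `u` such that the intersection
`⋂_{j=1}^u [r_e[j], r_f[j]]` of feasible constant-rate ranges is nonempty, and assume
`u_b < N`. If the next range `𝐫[u_b+1]` falls strictly below the intersection
(some `r_e[j] > r_f[u_b+1]`), then with `u_1` the largest `u ≤ u_b` such that
`r_e[u]` lies in the intersection, every optimal rate vector uses the constant rate
`r_e[u_1]` throughout epochs `1, …, u_1`; symmetrically, if `𝐫[u_b+1]` falls strictly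
above the intersection, every optimal rate vector uses `r_f[u_1]` with `u_1` the
largest index such that `r_f[u_1]` lies in the intersection. -/
theorem string_pulling_first_segment_limited_buffer
    (N : ℕ) (t D : ℕ → ℝ) (B σ2 h Dmax : ℝ)
    (hB : 0 < B) (hσ2 : 0 < σ2) (hh : 0 < h) (hDmax : 0 < Dmax)
    (ht0 : t 0 = 0) (ht : ∀ n, n < N → t n < t (n + 1))
    (hD0 : D 0 = 0)
    (hD : ∀ n ∈ Finset.Icc 1 N, 0 ≤ D n ∧ D n ≤ Dmax)
    (hfeasne : ∃ r, FeasibleLB t D N Dmax r)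
    (ub : ℕ) (hub1 : 1 ≤ ub) (hubN : ub < N)
    -- `⋂_{j=1}^{u_b} 𝐫[j]` is nonempty …
    (hub_ne : ∃ r : ℝ, ∀ j ∈ Finset.Icc 1 ub, rE t D j ≤ r ∧ r ≤ rF t D Dmax j)
    -- … and `u_b` is maximal with this property.
    (hub_max : ¬ ∃ r : ℝ, ∀ j ∈ Finset.Icc 1 (ub + 1), rE t D j ≤ r ∧ r ≤ rF t D Dmax j) :
    -- Case 1 (buffer-empty switch): `𝐫[u_b+1]` lies strictly below the intersection.
    ((∃ j ∈ Finset.Icc 1 ub, rF t D Dmax (ub + 1) < rE t D j) →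
      ∀ u1 ∈ Finset.Icc 1 ub,
        (∀ j ∈ Finset.Icc 1 ub, rE t D j ≤ rE t D u1 ∧ rE t D u1 ≤ rF t D Dmax j) →
        (∀ u ∈ Finset.Icc 1 ub,
          (∀ j ∈ Finset.Icc 1 ub, rE t D j ≤ rE t D u ∧ rE t D u ≤ rF t D Dmax j) →
          u ≤ u1) →
        ∀ rstar, FeasibleLB t D N Dmax rstar →
          (∀ r, FeasibleLB t D N Dmax r →
            energyLB B σ2 h t N rstar ≤ energyLB B σ2 h t N r) →
          ∀ n ∈ Finset.Icc 1 u1, rstar n = rE t D u1) ∧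
    -- Case 2 (buffer-full switch): `𝐫[u_b+1]` lies strictly above the intersection.
    ((∃ j ∈ Finset.Icc 1 ub, rF t D Dmax j < rE t D (ub + 1)) →
      ∀ u1 ∈ Finset.Icc 1 ub,
        (∀ j ∈ Finset.Icc 1 ub, rE t D j ≤ rF t D Dmax u1 ∧ rF t D Dmax u1 ≤ rF t D Dmax j) →
        (∀ u ∈ Finset.Icc 1 ub,
          (∀ j ∈ Finset.Icc 1 ub, rE t D j ≤ rF t D Dmax u ∧ rF t D Dmax u ≤ rF t D Dmax j) →
          u ≤ u1) →
        ∀ rstar, FeasibleLB t D N Dmax rstar →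
          (∀ r, FeasibleLB t D N Dmax r →
            energyLB B σ2 h t N rstar ≤ energyLB B σ2 h t N r) →
          ∀ n ∈ Finset.Icc 1 u1, rstar n = rF t D Dmax u1) := by
  classical
  -- basic positivity facts
  have hT : ∀ n ∈ Finset.Icc 1 N, 0 < t n - t (n - 1) := by
    intro n hn
    rw [Finset.mem_Icc] at hn
    obtain ⟨m, rfl⟩ : ∃ m, n = m + 1 := ⟨n - 1, (Nat.succ_pred_eq_of_pos hn.1).symm⟩
    have h3 := ht m (by omega)
    simp only [Nat.add_sub_cancel]
    linarith
  have htpos : ∀ j, 1 ≤ j → j ≤ N → 0 < t j := by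
    intro j
    induction j with
    | zero => intro h; omega
    | succ m ih =>
      intro _ h2
      rcases Nat.eq_zero_or_pos m with rfl | hm
      · have h3 := ht 0 (by omega)
        rw [ht0] at h3
        exact h3
      · have h3 := ht m (by omega)
        have h4 := ih hm (by omega)
        linarith
  have hDnn : ∀ n, n ≤ N → 0 ≤ D n := by
    intro n hn
    rcases Nat.eq_zero_or_pos n with rfl | h
    · rw [hD0]
    · exact (hD n (Finset.mem_Icc.mpr ⟨h, hn⟩)).1
  obtain ⟨r0, hr0⟩ := hfeasne
  have hLU : ∀ j ∈ Finset.Icc 1 N,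
      (∑ n ∈ Finset.Icc 1 j, D n) ≤ ∑ n ∈ Finset.range j, D n + Dmax :=
    fun j hj => le_trans (hr0.2.1 j hj) (hr0.2.2 j hj)
  constructor
  -- ===================== Case 1 : buffer-empty switch =====================
  · rintro ⟨j0, hj0mem, hj0⟩ u1 hu1mem hu1 _hu1max rstar hfeas hopt n hnmem
    rw [Finset.mem_Icc] at hu1mem hnmem
    have hu1N : u1 ≤ N := by omega
    have htu1 : 0 < t u1 := htpos u1 hu1mem.1 hu1N
    set c : ℝ := rE t D u1 with hcdef
    have hcLu1 : (∑ n ∈ Finset.Icc 1 u1, D n) = c * t u1 := by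
      rw [hcdef]
      unfold rE
      rw [div_mul_cancel₀ _ (ne_of_gt htu1)]
    have hc0 : 0 ≤ c := by
      rw [hcdef]
      unfold rE
      exact div_nonneg (Finset.sum_nonneg fun i hi =>
        hDnn i (le_trans (Finset.mem_Icc.mp hi).2 hu1N)) htu1.le
    have hrE_le : ∀ j, 1 ≤ j → j ≤ ub → (∑ n ∈ Finset.Icc 1 j, D n) ≤ c * t j := by
      intro j h1 h2
      have h3 := (hu1 j (Finset.mem_Icc.mpr ⟨h1, h2⟩)).1
      unfold rE at h3
      exact (div_le_iff₀ (htpos j h1 (by omega))).mp h3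
    have hrF_ge : ∀ j, 1 ≤ j → j ≤ u1 →
        c * t j ≤ ∑ n ∈ Finset.range j, D n + Dmax := by
      intro j h1 h2
      have h3 := (hu1 j (Finset.mem_Icc.mpr ⟨h1, by omega⟩)).2
      unfold rF at h3
      exact (le_div_iff₀ (htpos j h1 (by omega))).mp h3
    have hUb1 : (∑ n ∈ Finset.range (ub + 1), D n + Dmax) < c * t (ub + 1) := by
      have h1 : rF t D Dmax (ub + 1) < c := by
        rw [hcdef]
        exact lt_of_lt_of_le hj0 (hu1 j0 hj0mem).1
      unfold rF at h1
      exact (div_lt_iff₀ (htpos (ub + 1) (by omega) (by omega))).mp h1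
    have hLub1 := hLU (ub + 1) (Finset.mem_Icc.mpr ⟨by omega, by omega⟩)
    have hcLK : ∀ j ∈ Finset.Icc 1 (ub + 1), (∑ n ∈ Finset.Icc 1 j, D n) ≤ c * t j := by
      intro j hj
      rw [Finset.mem_Icc] at hj
      by_cases hjub : j ≤ ub
      · exact hrE_le j hj.1 hjub
      · have hje : j = ub + 1 := by omega
        subst hje
        linarith
    have hAKd : (∑ n ∈ Finset.Icc 1 (ub + 1), rstar n * (t n - t (n - 1)))
        ≤ c * t (ub + 1) :=
      le_trans (hfeas.2.2 (ub + 1) (Finset.mem_Icc.mpr ⟨by omega, by omega⟩)) hUb1.le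
    have hdown := bend_down N t D B σ2 h Dmax hB hσ2 hh ht0 hT c hc0 (ub + 1)
      (by omega) hcLK rstar hfeas hopt hAKd
    have hAu1 : (∑ n ∈ Finset.Icc 1 u1, rstar n * (t n - t (n - 1))) = c * t u1 := by
      refine le_antisymm (hdown u1 (Finset.mem_Icc.mpr ⟨hu1mem.1, by omega⟩)) ?_
      rw [← hcLu1]
      exact hfeas.2.1 u1 (Finset.mem_Icc.mpr ⟨hu1mem.1, hu1N⟩)
    have hup := bend_up N t D B σ2 h Dmax hB hσ2 hh ht0 hT c hc0 u1 hu1N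
      (fun j hj => hrF_ge j (Finset.mem_Icc.mp hj).1 (Finset.mem_Icc.mp hj).2)
      rstar hfeas hopt (le_of_eq hAu1.symm)
    have hAeq : ∀ j, 1 ≤ j → j ≤ u1 →
        (∑ n ∈ Finset.Icc 1 j, rstar n * (t n - t (n - 1))) = c * t j := by
      intro j h1 h2
      exact le_antisymm (hdown j (Finset.mem_Icc.mpr ⟨h1, by omega⟩))
        (hup j (Finset.mem_Icc.mpr ⟨h1, h2⟩))
    obtain ⟨m, rfl⟩ : ∃ m, n = m + 1 := ⟨n - 1, (Nat.succ_pred_eq_of_pos hnmem.1).symm⟩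
    have h1 := hAeq (m + 1) (by omega) hnmem.2
    have h2 : (∑ n ∈ Finset.Icc 1 m, rstar n * (t n - t (n - 1))) = c * t m := by
      rcases Nat.eq_zero_or_pos m with rfl | hm
      · simp [ht0]
      · exact hAeq m hm (by omega)
    have hstep : (∑ n ∈ Finset.Icc 1 (m + 1), rstar n * (t n - t (n - 1)))
        = (∑ n ∈ Finset.Icc 1 m, rstar n * (t n - t (n - 1)))
          + rstar (m + 1) * (t (m + 1) - t m) := by
      rw [Finset.sum_Icc_succ_top (Nat.le_add_left 1 m)]
      simp
    have hTn : 0 < t (m + 1) - t m := by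
      have := hT (m + 1) (Finset.mem_Icc.mpr ⟨by omega, by omega⟩)
      simpa using this
    have hkey : rstar (m + 1) * (t (m + 1) - t m) = c * (t (m + 1) - t m) := by
      rw [hstep, h2] at h1
      nlinarith [h1]
    exact mul_right_cancel₀ (ne_of_gt hTn) hkey
  -- ===================== Case 2 : buffer-full switch =====================
  · rintro ⟨j0, hj0mem, hj0⟩ u1 hu1mem hu1 _hu1max rstar hfeas hopt n hnmem
    rw [Finset.mem_Icc] at hu1mem hnmem
    have hu1N : u1 ≤ N := by omega
    have htu1 : 0 < t u1 := htpos u1 hu1mem.1 hu1N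
    set c : ℝ := rF t D Dmax u1 with hcdef
    have hcUu1 : (∑ n ∈ Finset.range u1, D n + Dmax) = c * t u1 := by
      rw [hcdef]
      unfold rF
      rw [div_mul_cancel₀ _ (ne_of_gt htu1)]
    have hc0 : 0 ≤ c := by
      rw [hcdef]
      unfold rF
      refine div_nonneg (add_nonneg (Finset.sum_nonneg fun i hi => ?_) hDmax.le) htu1.le
      exact hDnn i (by have := Finset.mem_range.mp hi; omega)
    have hrE_le : ∀ j, 1 ≤ j → j ≤ u1 → (∑ n ∈ Finset.Icc 1 j, D n) ≤ c * t j := by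
      intro j h1 h2
      have h3 := (hu1 j (Finset.mem_Icc.mpr ⟨h1, by omega⟩)).1
      unfold rE at h3
      exact (div_le_iff₀ (htpos j h1 (by omega))).mp h3
    have hrF_ge : ∀ j, 1 ≤ j → j ≤ ub →
        c * t j ≤ ∑ n ∈ Finset.range j, D n + Dmax := by
      intro j h1 h2
      have h3 := (hu1 j (Finset.mem_Icc.mpr ⟨h1, h2⟩)).2
      unfold rF at h3
      exact (le_div_iff₀ (htpos j h1 (by omega))).mp h3
    have hLb1 : c * t (ub + 1) < ∑ n ∈ Finset.Icc 1 (ub + 1), D n := by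
      have h1 : c < rE t D (ub + 1) := by
        rw [hcdef]
        exact lt_of_le_of_lt (hu1 j0 hj0mem).2 hj0
      unfold rE at h1
      exact (lt_div_iff₀ (htpos (ub + 1) (by omega) (by omega))).mp h1
    have hLub1 := hLU (ub + 1) (Finset.mem_Icc.mpr ⟨by omega, by omega⟩)
    have hcUK : ∀ j ∈ Finset.Icc 1 (ub + 1),
        c * t j ≤ ∑ n ∈ Finset.range j, D n + Dmax := by
      intro j hj
      rw [Finset.mem_Icc] at hj
      by_cases hjub : j ≤ ub
      · exact hrF_ge j hj.1 hjub
      · have hje : j = ub + 1 := by omega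
        subst hje
        linarith
    have hAKu : c * t (ub + 1)
        ≤ ∑ n ∈ Finset.Icc 1 (ub + 1), rstar n * (t n - t (n - 1)) :=
      le_trans hLb1.le (hfeas.2.1 (ub + 1) (Finset.mem_Icc.mpr ⟨by omega, by omega⟩))
    have hup := bend_up N t D B σ2 h Dmax hB hσ2 hh ht0 hT c hc0 (ub + 1)
      (by omega) hcUK rstar hfeas hopt hAKu
    have hAu1 : (∑ n ∈ Finset.Icc 1 u1, rstar n * (t n - t (n - 1))) = c * t u1 := by
      refine le_antisymm ?_ (hup u1 (Finset.mem_Icc.mpr ⟨hu1mem.1, by omega⟩))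
      rw [← hcUu1]
      exact hfeas.2.2 u1 (Finset.mem_Icc.mpr ⟨hu1mem.1, hu1N⟩)
    have hdown := bend_down N t D B σ2 h Dmax hB hσ2 hh ht0 hT c hc0 u1 hu1N
      (fun j hj => hrE_le j (Finset.mem_Icc.mp hj).1 (Finset.mem_Icc.mp hj).2)
      rstar hfeas hopt (le_of_eq hAu1)
    have hAeq : ∀ j, 1 ≤ j → j ≤ u1 →
        (∑ n ∈ Finset.Icc 1 j, rstar n * (t n - t (n - 1))) = c * t j := by
      intro j h1 h2
      exact le_antisymm (hdown j (Finset.mem_Icc.mpr ⟨h1, h2⟩))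
        (hup j (Finset.mem_Icc.mpr ⟨h1, by omega⟩))
    obtain ⟨m, rfl⟩ : ∃ m, n = m + 1 := ⟨n - 1, (Nat.succ_pred_eq_of_pos hnmem.1).symm⟩
    have h1 := hAeq (m + 1) (by omega) hnmem.2
    have h2 : (∑ n ∈ Finset.Icc 1 m, rstar n * (t n - t (n - 1))) = c * t m := by
      rcases Nat.eq_zero_or_pos m with rfl | hm
      · simp [ht0]
      · exact hAeq m hm (by omega)
    have hstep : (∑ n ∈ Finset.Icc 1 (m + 1), rstar n * (t n - t (n - 1)))
        = (∑ n ∈ Finset.Icc 1 m, rstar n * (t n - t (n - 1)))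
          + rstar (m + 1) * (t (m + 1) - t m) := by
      rw [Finset.sum_Icc_succ_top (Nat.le_add_left 1 m)]
      simp
    have hTn : 0 < t (m + 1) - t m := by
      have := hT (m + 1) (Finset.mem_Icc.mpr ⟨by omega, by omega⟩)
      simpa using this
    have hkey : rstar (m + 1) * (t (m + 1) - t m) = c * (t (m + 1) - t m) := by
      rw [hstep, h2] at h1
      nlinarith [h1]
    exact mul_right_cancel₀ (ne_of_gt hTn) hkey
end
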